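/- arXiv:1806.01732 — 10 statements merged into one kernel-verified Lean document; each statement's English description precedes it below -/
import Mathlib

section
/- Let A₁, ..., A_n be well-ordered subsets of [0,∞) (with the usual order on ℝ) and let S ⊆ A₁ × ⋯ × A_n. Let M be a linearly ordered abelian group (written multiplicatively) and let m₀,...,m_{n-1} ∈ M with each mᵢ < 1. Then for every g ∈ M, the set {α ∈ S : m₀^{α₀} ⋯ m_{n-1}^{α_{n-1}} = g} is finite, where M is assumed to admit real exponents making it an ordered ℝ-vector space. -/
/-- The class `OrderedSMul` as it stood in the older Mathlib (removed since). -/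
class OrderedSMul (R M : Type*) [Semiring R] [PartialOrder R] [AddCommMonoid M] [PartialOrder M]
    [SMulWithZero R M] : Prop where
  smul_lt_smul_of_pos : ∀ {a b : M} {c : R}, a < b → 0 < c → c • a < c • b
  lt_of_smul_lt_smul_of_pos : ∀ {a b : M} {c : R}, c • a < c • b → 0 < c → a < b

open Set

/-- Dickson-type lemma: a subset of a finite product of PWO sets of reals is PWO. -/
lemma pi_isPWO_aux (n : ℕ) (A : Fin n → Set ℝ) (hwo : ∀ i, (A i).IsPWO)
    (T : Set (Fin n → ℝ)) (hT : ∀ α ∈ T, ∀ i, α i ∈ A i) : T.IsPWO := by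
  suffices h : ∀ (s : Finset (Fin n)) (f : ℕ → Fin n → ℝ), (∀ k, f k ∈ T) →
      ∃ g : ℕ ↪o ℕ, ∀ ⦃a b : ℕ⦄, a ≤ b → ∀ x ∈ s, (f ∘ g) a x ≤ (f ∘ g) b x by
    refine Set.isPWO_iff_exists_monotone_subseq.2 fun f hf => ?_
    obtain ⟨g, hg⟩ := h Finset.univ f hf
    exact ⟨g, fun a b hab => fun x => hg hab x (Finset.mem_univ x)⟩
  intro s
  induction s using Finset.cons_induction with
  | empty =>
    intro f _
    exact ⟨RelEmbedding.refl (· ≤ ·), by simp⟩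
  | cons x s hx ih =>
    intro f hf
    obtain ⟨g, hg⟩ := (hwo x).exists_monotone_subseq (f := fun k => f k x)
      (fun k => hT _ (hf k) x)
    obtain ⟨g', hg'⟩ := ih (f ∘ g) (fun k => hf _)
    refine ⟨g'.trans g, fun a b hab => ?_⟩
    intro y hy
    rcases Finset.mem_cons.1 hy with rfl | hy
    · exact hg (OrderHomClass.mono g' hab)
    · exact hg' hab y hy

/-- We write the linearly ordered multiplicative group `M`, which carries a compatible
`ℝ`-vector space structure via real exponents, additively: the monomial `m^α`
corresponds to `α • m`, the monomial product `m₀^{α₀} ⋯ m_{n-1}^{α_{n-1}}` to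
`∑ i, α i • m i`, and `m` small (`m < 1`) corresponds to `m < 0`.

Given well-ordered sets `A i ⊆ [0,∞)`, a subset `S` of `A₀ × ⋯ × A_{n-1}`, small
`m₀, …, m_{n-1} ∈ M` and `g ∈ M`, the set of `α ∈ S` with `m^α = g` is finite. -/
theorem stmt1 {M : Type*} [AddCommGroup M] [LinearOrder M] [IsOrderedAddMonoid M] [Module ℝ M] [OrderedSMul ℝ M]
    (n : ℕ) (A : Fin n → Set ℝ) (hA : ∀ i, A i ⊆ Set.Ici (0 : ℝ))
    (hwo : ∀ i, (A i).IsWF)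
    (S : Set (Fin n → ℝ)) (hS : ∀ α ∈ S, ∀ i, α i ∈ A i)
    (m : Fin n → M) (hsmall : ∀ i, m i < 0) (g : M) :
    {α ∈ S | ∑ i, α i • m i = g}.Finite := by
  haveI : PosSMulStrictMono ℝ M := ⟨fun c hc a b hab => OrderedSMul.smul_lt_smul_of_pos hab hc⟩
  set T := {α ∈ S | ∑ i, α i • m i = g}
  have hpwo : T.IsPWO := pi_isPWO_aux n A (fun i => (hwo i).isPWO) T
    (fun α hα i => hS α hα.1 i)
  have hanti : IsAntichain (· ≤ ·) T := by
    intro α hα β hβ hne hle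
    apply hne
    have hsum : ∑ i, (β i - α i) • m i = 0 := by
      simp only [sub_smul, Finset.sum_sub_distrib, hα.2, hβ.2, sub_self]
    have hnonpos : ∀ i ∈ Finset.univ, (β i - α i) • m i ≤ 0 := fun i _ =>
      smul_nonpos_of_nonneg_of_nonpos (sub_nonneg.2 (hle i)) (hsmall i).le
    have hz := (Finset.sum_eq_zero_iff_of_nonpos hnonpos).1 hsum
    funext i
    by_contra hne'
    have hlt : α i < β i := lt_of_le_of_ne (hle i) hne'
    exact (smul_neg_of_pos_of_neg (sub_pos.2 hlt) (hsmall i)).ne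
      (hz i (Finset.mem_univ i))
  exact hanti.finite_of_partiallyWellOrderedOn hpwo
end

section
/- With M a multiplicatively written linearly ordered ℝ-vector space and m₀,...,m_{n-1} ∈ M small (i.e. mᵢ < 1), let S be a subset of a product of well-ordered subsets of [0,∞)^n. Then the set {m^α : α ∈ S} ⊆ M is reverse well-ordered, i.e. every nonempty subset has a maximum. -/
/-- As in the paper, the multiplicatively written linearly ordered `ℝ`-vector space `M`
is formalized additively: `m^α` corresponds to `∑ i, α i • m i`, and `m` small (`m < 1`)
corresponds to `m < 0`.

If `S` is contained in a product of well-ordered subsets of `[0,∞)^n` and the `m i` are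
small, then the set `{m^α : α ∈ S}` is reverse well-ordered: every nonempty subset has
a greatest element. -/
theorem stmt2 {M : Type*} [AddCommGroup M] [LinearOrder M] [IsOrderedAddMonoid M] [Module ℝ M] [PosSMulStrictMono ℝ M] [PosSMulReflectLT ℝ M]
    (n : ℕ) (A : Fin n → Set ℝ) (hA : ∀ i, A i ⊆ Set.Ici (0 : ℝ))
    (hwo : ∀ i, (A i).IsWF)
    (S : Set (Fin n → ℝ)) (hS : ∀ α ∈ S, ∀ i, α i ∈ A i)
    (m : Fin n → M) (hsmall : ∀ i, m i < 0) :
    ∀ T ⊆ (fun α : Fin n → ℝ => ∑ i, α i • m i) '' S, T.Nonempty →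
      ∃ x ∈ T, ∀ y ∈ T, y ≤ x := by
  -- scalar multiplication by a fixed negative vector is antitone in the scalar
  have hanti : ∀ (i : Fin n) {x y : ℝ}, x ≤ y → y • m i ≤ x • m i := by
    intro i x y hxy
    have h0 : (y - x) • m i ≤ 0 :=
      smul_nonpos_of_nonneg_of_nonpos (by linarith) (hsmall i).le
    rw [sub_smul] at h0
    exact sub_nonpos.mp h0
  -- each building block, viewed in the dual order, is well-founded
  have hB : ∀ i : Fin n, Set.IsWF (α := Mᵒᵈ) ((fun x : ℝ => x • m i) '' A i) := by
    intro i
    rw [Set.isWF_iff_no_descending_seq]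
    intro f hf hmem
    choose x hxA hxf using hmem
    have hxanti : StrictAnti x := by
      intro k l hkl
      by_contra h
      push_neg at h
      have hxf' : ∀ j : ℕ, x j • m i = f (OrderDual.toDual j) := hxf
      have h2 : x l • m i ≤ x k • m i := hanti i h
      rw [hxf' k, hxf' l] at h2
      have h3 := hf hkl
      exact absurd h2 (not_le.mpr (OrderDual.ofDual_lt_ofDual.mpr h3))
    exact (Set.isWF_iff_no_descending_seq.1 (hwo i)) x hxanti hxA
  -- partial sums over any finset give well-founded (in the dual) image sets
  have main : ∀ s : Finset (Fin n),
      Set.IsWF (α := Mᵒᵈ) ((fun α : Fin n → ℝ => ∑ i ∈ s, α i • m i) '' S) := by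
    intro s
    induction s using Finset.induction with
    | empty =>
      apply Set.IsWF.mono (Set.isWF_singleton (a := (0 : Mᵒᵈ)))
      rintro _ ⟨α, hα, rfl⟩
      exact Finset.sum_empty
    | @insert a s ha ih =>
      apply Set.IsWF.mono (Set.IsWF.add (hB a) ih)
      rintro _ ⟨α, hα, rfl⟩
      show (∑ i ∈ insert a s, α i • m i) ∈ _
      rw [Finset.sum_insert ha]
      exact Set.add_mem_add ⟨α a, hS α hα a, rfl⟩ ⟨α, hα, rfl⟩
  intro T hT hne
  have hTwf : Set.IsWF (α := Mᵒᵈ) T := Set.IsWF.mono (main Finset.univ) hT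
  exact ⟨hTwf.min hne, hTwf.min_mem hne, fun y hy => hTwf.min_le hne hy⟩
end

section
/- Let M be a multiplicatively written linearly ordered ℝ-vector space and let F be an M-generalized power series over a field K with generating monomials m₀ < ⋯ < m_k (all small). Suppose {m₀,...,m_k} has exactly l+1 comparability classes. Then the support of F, as a reverse well-ordered subset of M, has reverse-order type at most ω^{l+1}. -/
open Ordinal

universe u

noncomputable def nadd (a b : Ordinal.{u}) : Ordinal.{u} :=
  sInf {c | (∀ a' < a, nadd a' b < c) ∧ (∀ b' < b, nadd a b' < c)}
termination_by (a, b)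
decreasing_by
  · exact Prod.Lex.left _ _ ‹_›
  · exact Prod.Lex.right _ ‹_›

infixl:65 " ♯ " => nadd

private lemma nadd_set_nonempty (a b : Ordinal.{u}) :
    {c | (∀ a' < a, a' ♯ b < c) ∧ (∀ b' < b, a ♯ b' < c)}.Nonempty := by
  obtain ⟨B, hB⟩ := (bddAbove_of_small (s := (fun a' => a' ♯ b) '' Set.Iio a ∪
    (fun b' => a ♯ b') '' Set.Iio b))
  refine ⟨Order.succ B, fun a' ha' => Order.lt_succ_iff.mpr (hB ?_),
    fun b' hb' => Order.lt_succ_iff.mpr (hB ?_)⟩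
  · exact Or.inl ⟨a', ha', rfl⟩
  · exact Or.inr ⟨b', hb', rfl⟩

private lemma nadd_spec (a b : Ordinal.{u}) :
    (∀ a' < a, a' ♯ b < a ♯ b) ∧ (∀ b' < b, a ♯ b' < a ♯ b) := by
  have h := csInf_mem (nadd_set_nonempty a b)
  rw [← nadd] at h
  exact h

theorem nadd_le_iff {a b c : Ordinal.{u}} :
    a ♯ b ≤ c ↔ (∀ a' < a, a' ♯ b < c) ∧ (∀ b' < b, a ♯ b' < c) := by
  constructor
  · intro h
    exact ⟨fun a' ha' => ((nadd_spec a b).1 a' ha').trans_le h,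
      fun b' hb' => ((nadd_spec a b).2 b' hb').trans_le h⟩
  · intro h
    rw [nadd]
    exact csInf_le' h

theorem nadd_lt_nadd_left {b c : Ordinal.{u}} (h : b < c) (a : Ordinal.{u}) : a ♯ b < a ♯ c :=
  (nadd_spec a c).2 b h

theorem nadd_lt_nadd_right {a b : Ordinal.{u}} (h : a < b) (c : Ordinal.{u}) : a ♯ c < b ♯ c :=
  (nadd_spec b c).1 a h

theorem nadd_le_nadd_left {b c : Ordinal.{u}} (h : b ≤ c) (a : Ordinal.{u}) : a ♯ b ≤ a ♯ c := by
  rcases h.eq_or_lt with rfl | h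
  · exact le_rfl
  · exact (nadd_lt_nadd_left h a).le

theorem nadd_le_nadd_right {a b : Ordinal.{u}} (h : a ≤ b) (c : Ordinal.{u}) : a ♯ c ≤ b ♯ c := by
  rcases h.eq_or_lt with rfl | h
  · exact le_rfl
  · exact (nadd_lt_nadd_right h c).le

theorem nadd_le_nadd {a b c d : Ordinal.{u}} (h₁ : a ≤ b) (h₂ : c ≤ d) : a ♯ c ≤ b ♯ d :=
  (nadd_le_nadd_right h₁ c).trans (nadd_le_nadd_left h₂ b)

theorem nadd_lt_nadd_of_lt_of_le {a b c d : Ordinal.{u}} (h₁ : a < b) (h₂ : c ≤ d) :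
    a ♯ c < b ♯ d :=
  (nadd_lt_nadd_right h₁ c).trans_le (nadd_le_nadd_left h₂ b)

theorem nadd_lt_nadd_of_le_of_lt {a b c d : Ordinal.{u}} (h₁ : a ≤ b) (h₂ : c < d) :
    a ♯ c < b ♯ d :=
  (nadd_le_nadd_right h₁ c).trans_lt (nadd_lt_nadd_left h₂ b)

theorem lt_nadd_iff {a b d : Ordinal.{u}} :
    d < a ♯ b ↔ (∃ a' < a, d ≤ a' ♯ b) ∨ (∃ b' < b, d ≤ a ♯ b') := by
  constructor
  · intro h
    by_contra hcon
    push_neg at hcon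
    exact absurd (nadd_le_iff.mpr hcon) (not_le.mpr h)
  · rintro (⟨a', ha', hd⟩ | ⟨b', hb', hd⟩)
    · exact hd.trans_lt (nadd_lt_nadd_right ha' b)
    · exact hd.trans_lt (nadd_lt_nadd_left hb' a)

theorem nadd_comm (a b : Ordinal.{u}) : a ♯ b = b ♯ a := by
  induction a using Ordinal.induction generalizing b with
  | h a IHa =>
    induction b using Ordinal.induction with
    | h b IHb =>
      apply le_antisymm
      · rw [nadd_le_iff]
        refine ⟨fun a' ha' => ?_, fun b' hb' => ?_⟩
        · rw [IHa a' ha']; exact nadd_lt_nadd_left ha' b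
        · rw [IHb b' hb']; exact nadd_lt_nadd_right hb' a
      · rw [nadd_le_iff]
        refine ⟨fun b' hb' => ?_, fun a' ha' => ?_⟩
        · rw [← IHb b' hb']; exact nadd_lt_nadd_left hb' a
        · rw [← IHa a' ha']; exact nadd_lt_nadd_right ha' b

@[simp]
theorem nadd_zero (a : Ordinal.{u}) : a ♯ 0 = a := by
  induction a using Ordinal.induction with
  | h a IH =>
    apply le_antisymm
    · rw [nadd_le_iff]
      refine ⟨fun a' ha' => ?_, fun b' hb' => absurd hb' (not_lt_of_ge (zero_le : (0:Ordinal) ≤ b'))⟩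
      rw [IH a' ha']; exact ha'
    · by_contra hcon
      push_neg at hcon
      have h1 := IH _ hcon
      have h2 := nadd_lt_nadd_right hcon 0
      rw [h1] at h2
      exact lt_irrefl _ h2

theorem le_nadd_self (a b : Ordinal.{u}) : a ≤ a ♯ b := by
  calc a = a ♯ 0 := (nadd_zero a).symm
    _ ≤ a ♯ b := nadd_le_nadd_left (zero_le : (0:Ordinal) ≤ b) a

theorem add_le_nadd (a b : Ordinal.{u}) : a + b ≤ a ♯ b := by
  induction b using Ordinal.induction with
  | h b IH =>
    refine le_of_forall_lt (fun c hc => ?_)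
    rcases lt_or_ge c a with hca | hac
    · exact hca.trans_le (le_nadd_self a b)
    · have hc' : c = a + (c - a) := (Ordinal.add_sub_cancel_of_le hac).symm
      rw [hc'] at hc ⊢
      have hlt : c - a < b := (add_lt_add_iff_left a).mp hc
      exact (IH _ hlt).trans_lt (nadd_lt_nadd_left hlt a)

theorem nadd_assoc (a b c : Ordinal.{u}) : a ♯ b ♯ c = a ♯ (b ♯ c) := by
  induction a using Ordinal.induction generalizing b c with
  | h a IHa =>
    induction b using Ordinal.induction generalizing c with
    | h b IHb =>
      induction c using Ordinal.induction with
      | h c IHc =>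
        apply le_antisymm
        · rw [nadd_le_iff]
          refine ⟨fun x hx => ?_, fun c' hc' => ?_⟩
          · rcases lt_nadd_iff.mp hx with ⟨a', ha', hx'⟩ | ⟨b', hb', hx'⟩
            · refine (nadd_le_nadd_right hx' c).trans_lt ?_
              rw [IHa a' ha']
              exact nadd_lt_nadd_right ha' _
            · refine (nadd_le_nadd_right hx' c).trans_lt ?_
              rw [IHb b' hb']
              exact nadd_lt_nadd_left (nadd_lt_nadd_right hb' c) a
          · rw [IHc c' hc']
            exact nadd_lt_nadd_left (nadd_lt_nadd_left hc' b) a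
        · rw [nadd_le_iff]
          refine ⟨fun a' ha' => ?_, fun y hy => ?_⟩
          · rw [← IHa a' ha']
            exact nadd_lt_nadd_right (nadd_lt_nadd_right ha' b) c
          · rcases lt_nadd_iff.mp hy with ⟨b', hb', hy'⟩ | ⟨c', hc', hy'⟩
            · refine (nadd_le_nadd_left hy' a).trans_lt ?_
              rw [← IHb b' hb']
              exact nadd_lt_nadd_right (nadd_lt_nadd_left hb' a) c
            · refine (nadd_le_nadd_left hy' a).trans_lt ?_
              rw [← IHc c' hc']
              exact nadd_lt_nadd_left hc' _




private lemma pow_omega0_pos (d : ℕ) : (0:Ordinal) < ω ^ d := by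
  rw [← opow_natCast]
  exact opow_pos _ omega0_pos

private lemma nat_of_lt_natCast {o : Ordinal.{u}} {n : ℕ} (h : o < (n:Ordinal)) :
    ∃ t : ℕ, o = (t:Ordinal) ∧ t < n := by
  obtain ⟨t, rfl⟩ := lt_omega0.mp (h.trans (nat_lt_omega0 n))
  exact ⟨t, rfl, Nat.cast_lt.mp h⟩

private lemma decomp_lt_mul {d : ℕ} {x : Ordinal.{u}} {s : ℕ} (h : x < ω ^ d * s) :
    ∃ (t : ℕ) (u : Ordinal), t < s ∧ u < ω ^ d ∧ x = ω ^ d * t + u := by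
  have hne : (ω ^ d : Ordinal) ≠ 0 := (pow_omega0_pos d).ne'
  have hdiv : x / ω ^ d < (s : Ordinal) := (Ordinal.div_lt hne).mpr h
  obtain ⟨t, ht, hts⟩ := nat_of_lt_natCast hdiv
  refine ⟨t, x % ω ^ d, hts, Ordinal.mod_lt x hne, ?_⟩
  rw [← ht, Ordinal.div_add_mod]

private lemma nadd_absorp_aux {d : ℕ}
    (hP : ∀ x y : Ordinal.{u}, x < ω ^ d → y < ω ^ d → x ♯ y < ω ^ d) :
    ∀ s : ℕ, ∀ r : Ordinal.{u}, r < ω ^ d → (ω ^ d * s) ♯ r = ω ^ d * s + r := by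
  intro s
  induction s using Nat.strong_induction_on with
  | _ s IH =>
    intro r
    induction r using Ordinal.induction with
    | h r IHr =>
      intro hr
      refine le_antisymm ?_ (add_le_nadd _ _)
      rw [nadd_le_iff]
      constructor
      · intro x hx
        obtain ⟨t, u, hts, hu, rfl⟩ := decomp_lt_mul hx
        calc (ω ^ d * t + u) ♯ r ≤ (ω ^ d * t ♯ u) ♯ r :=
              nadd_le_nadd_right (add_le_nadd _ _) r
          _ = ω ^ d * t ♯ (u ♯ r) := nadd_assoc _ _ _
          _ = ω ^ d * t + (u ♯ r) := IH t hts _ (hP u r hu hr)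
          _ < ω ^ d * t + ω ^ d := add_lt_add_right (hP u r hu hr) _
          _ = ω ^ d * (t + 1 : ℕ) := by
              rw [Nat.cast_add, Nat.cast_one, mul_add, mul_one]
          _ ≤ ω ^ d * s := by
              apply mul_le_mul_right
              exact Nat.cast_le.mpr hts
          _ ≤ ω ^ d * s + r := le_add_right le_rfl
      · intro r' hr'
        rw [IHr r' hr' (hr'.trans hr)]
        exact add_lt_add_right hr' _

private lemma nadd_mul_nat_le {d : ℕ}
    (hP : ∀ x y : Ordinal.{u}, x < ω ^ d → y < ω ^ d → x ♯ y < ω ^ d) :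
    ∀ N p q : ℕ, p + q ≤ N → ((ω ^ d * p : Ordinal.{u})) ♯ (ω ^ d * q) ≤ ω ^ d * ((p + q : ℕ) : Ordinal) := by
  intro N
  induction N with
  | zero =>
    intro p q hpq
    have hp : p = 0 := by omega
    have hq : q = 0 := by omega
    subst hp; subst hq
    simp
  | succ N IHN =>
    intro p q hpq
    have key : ∀ (a b : ℕ) (x : Ordinal.{u}), a + b ≤ N + 1 → x < ω ^ d * a →
        x ♯ (ω ^ d * b) < ω ^ d * (a + b : ℕ) := by
      intro a b x hab hx
      obtain ⟨t, u, hts, hu, rfl⟩ := decomp_lt_mul hx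
      have htb : t + b ≤ N := by omega
      calc (ω ^ d * t + u) ♯ (ω ^ d * b) ≤ (ω ^ d * t ♯ u) ♯ (ω ^ d * b) :=
            nadd_le_nadd_right (add_le_nadd _ _) _
        _ = (ω ^ d * t ♯ ω ^ d * b) ♯ u := by
            rw [nadd_assoc, nadd_assoc, nadd_comm u]
        _ ≤ (ω ^ d * ((t + b : ℕ) : Ordinal)) ♯ u := nadd_le_nadd_right (IHN t b htb) u
        _ = ω ^ d * ((t + b : ℕ) : Ordinal) + u := nadd_absorp_aux hP _ _ hu
        _ < ω ^ d * ((t + b : ℕ) : Ordinal) + ω ^ d := add_lt_add_right hu _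
        _ = ω ^ d * ((t + b + 1 : ℕ) : Ordinal) := by
            push_cast [mul_add, mul_one]
            rfl
        _ ≤ ω ^ d * ((a + b :ℕ) : Ordinal) := mul_le_mul_right (Nat.cast_le.mpr (by omega)) _
    rw [nadd_le_iff]
    constructor
    · intro x hx
      exact key p q x hpq hx
    · intro y hy
      rw [nadd_comm]
      have := key q p y (by omega) hy
      rwa [Nat.add_comm q p] at this

private lemma nadd_principal : ∀ (d : ℕ) (x y : Ordinal.{u}),
    x < ω ^ d → y < ω ^ d → x ♯ y < ω ^ d := by
  intro d
  induction d with
  | zero =>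
    intro x y hx hy
    rw [pow_zero, Ordinal.lt_one_iff_zero] at hx hy
    subst hx; subst hy
    simpa [nadd_zero] using Ordinal.zero_lt_one
  | succ d IH =>
    intro x y hx hy
    rw [pow_succ] at hx hy ⊢
    obtain ⟨p', hp', hxp⟩ := (lt_mul_iff_of_isSuccLimit isSuccLimit_omega0).mp hx
    obtain ⟨q', hq', hyq⟩ := (lt_mul_iff_of_isSuccLimit isSuccLimit_omega0).mp hy
    obtain ⟨p, rfl⟩ := lt_omega0.mp hp'
    obtain ⟨q, rfl⟩ := lt_omega0.mp hq'
    calc x ♯ y ≤ (ω ^ d * p) ♯ (ω ^ d * q) := nadd_le_nadd hxp.le hyq.le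
      _ ≤ ω ^ d * (p + q : ℕ) := nadd_mul_nat_le IH (p+q) p q le_rfl
      _ < ω ^ d * ω := mul_lt_mul_of_pos_left (nat_lt_omega0 _) (pow_omega0_pos d)






section OTY

variable {γ : Type u} [LinearOrder γ]

private def srel (X : Set γ) : X → X → Prop := fun a b => (b : γ) < (a : γ)

private lemma woOn (X : Set γ) (h : X.WellFoundedOn (· > ·)) : IsWellOrder X (srel X) where
  trichotomous a b h1 h2 := by
    rcases lt_trichotomy (b : γ) (a : γ) with h3 | h3 | h3
    · exact absurd h3 h1
    · exact Subtype.ext h3.symm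
    · exact absurd h3 h2
  wf := h

open scoped Classical in
private noncomputable def oty (X : Set γ) : Ordinal.{u} :=
  if h : X.WellFoundedOn (· > ·) then @Ordinal.type X (srel X) (woOn X h) else 0

open scoped Classical in
private lemma oty_eq (X : Set γ) (h : X.WellFoundedOn (· > ·)) :
    oty X = @Ordinal.type X (srel X) (woOn X h) := dif_pos h

/-- strictly monotone ordinal-valued maps bound the order type -/
private lemma type_le_bound {β : Type u} (r : β → β → Prop) [wo : IsWellOrder β r]
    (f : β → Ordinal.{u}) (hf : ∀ a b, r a b → f a < f b) {o : Ordinal.{u}}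
    (hb : ∀ a, f a < o) : Ordinal.type r ≤ o := by
  have key : ∀ a : β, (Ordinal.typein r).toRelEmbedding a ≤ f a := by
    intro a
    induction a using wo.wf.induction with
    | _ a IH =>
      by_contra hcon
      push_neg at hcon
      obtain ⟨b, hb2⟩ := Ordinal.typein_surj r (hcon.trans (Ordinal.typein_lt_type r a))
      have hba : r b a := (Ordinal.typein_lt_typein r).mp (by rw [hb2]; exact hcon)
      have h1 := IH b hba
      have h2 := hf b a hba
      rw [hb2] at h1
      exact absurd (h1.trans_lt h2) (lt_irrefl _)
  by_contra hlt
  push_neg at hlt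
  obtain ⟨a, ha⟩ := Ordinal.typein_surj r hlt
  exact absurd ((ha ▸ key a).trans_lt (hb a)) (lt_irrefl _)

private lemma oty_mono {X Y : Set γ} (hXY : X ⊆ Y) (hY : Y.WellFoundedOn (· > ·)) :
    oty X ≤ oty Y := by
  have hX : X.WellFoundedOn (· > ·) := hY.subset hXY
  rw [oty_eq X hX, oty_eq Y hY]
  refine @RelEmbedding.ordinal_type_le _ _ _ _ (woOn X hX) (woOn Y hY) ?_
  exact ⟨⟨Set.inclusion hXY, Set.inclusion_injective hXY⟩, Iff.rfl⟩

private lemma oty_upper_lt {X : Set γ} (hX : X.WellFoundedOn (· > ·)) {z : γ} (hz : z ∈ X) :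
    oty {w ∈ X | z < w} < oty X := by
  have hU : ({w ∈ X | z < w} : Set γ).WellFoundedOn (· > ·) :=
    hX.subset (fun w hw => hw.1)
  rw [oty_eq _ hU, oty_eq X hX]
  refine @PrincipalSeg.ordinal_type_lt _ _ _ _ (woOn _ hU) (woOn X hX) ?_
  refine ⟨⟨⟨fun w => ⟨(w : γ), w.2.1⟩, ?_⟩, Iff.rfl⟩, ⟨z, hz⟩, ?_⟩
  · intro a b hab
    simpa [Subtype.ext_iff] using hab
  · intro b
    constructor
    · rintro ⟨a, rfl⟩
      exact a.2.2
    · intro hb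
      exact ⟨⟨(b : γ), ⟨b.2, hb⟩⟩, rfl⟩

private lemma upper_le {X : Set γ} (hX : X.WellFoundedOn (· > ·)) {a b : γ} (hba : b < a) :
    oty {w ∈ X | a < w} ≤ oty {w ∈ X | b < w} :=
  oty_mono (fun w hw => ⟨hw.1, hba.trans hw.2⟩) (hX.subset fun w hw => hw.1)

private lemma upper_lt_of_mem {X : Set γ} (hX : X.WellFoundedOn (· > ·)) {a b : γ}
    (ha : a ∈ X) (hba : b < a) : oty {w ∈ X | a < w} < oty {w ∈ X | b < w} := by
  have hset : {w ∈ X | a < w} = {w ∈ {w ∈ X | b < w} | a < w} := by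
    ext w
    constructor
    · rintro ⟨hw1, hw2⟩; exact ⟨⟨hw1, hba.trans hw2⟩, hw2⟩
    · rintro ⟨⟨hw1, _⟩, hw3⟩; exact ⟨hw1, hw3⟩
  rw [hset]
  exact oty_upper_lt (hX.subset fun w hw => hw.1) ⟨ha, hba⟩

/-- the workhorse: bound `oty` by bounding upper segments -/
private lemma oty_le_of_upper {X : Set γ} (hX : X.WellFoundedOn (· > ·)) {o : Ordinal.{u}}
    (h : ∀ z ∈ X, oty {w ∈ X | z < w} < o) : oty X ≤ o := by
  rw [oty_eq X hX]
  refine @type_le_bound _ (srel X) (woOn X hX) (fun z => oty {w ∈ X | (z : γ) < w}) ?_ o ?_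
  · rintro a b (hab : (b : γ) < (a : γ))
    show oty {w ∈ X | (a : γ) < w} < oty {w ∈ X | (b : γ) < w}
    exact upper_lt_of_mem hX a.2 hab
  · intro a
    exact h (a : γ) a.2

private lemma oty_union_le {X Y : Set γ} (hX : X.WellFoundedOn (· > ·))
    (hY : Y.WellFoundedOn (· > ·)) : oty (X ∪ Y) ≤ oty X ♯ oty Y := by
  rw [oty_eq _ (hX.union hY)]
  refine @type_le_bound _ (srel (X ∪ Y)) (woOn _ (hX.union hY))
    (fun z => oty {w ∈ X | (z : γ) < w} ♯ oty {w ∈ Y | (z : γ) < w}) ?_ _ ?_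
  · rintro a b (hab : (b : γ) < (a : γ))
    show oty {w ∈ X | (a : γ) < w} ♯ oty {w ∈ Y | (a : γ) < w} <
      oty {w ∈ X | (b : γ) < w} ♯ oty {w ∈ Y | (b : γ) < w}
    rcases a.2 with ha | ha
    · exact nadd_lt_nadd_of_lt_of_le (upper_lt_of_mem hX ha hab) (upper_le hY hab)
    · exact nadd_lt_nadd_of_le_of_lt (upper_le hX hab) (upper_lt_of_mem hY ha hab)
  · intro a
    show oty {w ∈ X | (a : γ) < w} ♯ oty {w ∈ Y | (a : γ) < w} < oty X ♯ oty Y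
    rcases a.2 with ha | ha
    · exact nadd_lt_nadd_of_lt_of_le (oty_upper_lt hX ha)
        (oty_mono (fun w hw => hw.1) hY)
    · exact nadd_lt_nadd_of_le_of_lt (oty_mono (fun w hw => hw.1) hX)
        (oty_upper_lt hY ha)

private lemma oty_empty_lt {o : Ordinal.{u}} (ho : 0 < o) : oty (∅ : Set γ) < o := by
  have hwf : (∅ : Set γ).WellFoundedOn (· > ·) := Set.Finite.wellFoundedOn (Set.finite_empty)
  have : oty (∅ : Set γ) ≤ 0 := by
    rw [oty_eq _ hwf]
    refine @type_le_bound _ (srel (∅ : Set γ)) (woOn _ hwf) (fun _ => 0) ?_ 0 ?_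
    · rintro ⟨a, ha⟩; exact absurd ha (Set.notMem_empty a)
    · rintro ⟨a, ha⟩; exact absurd ha (Set.notMem_empty a)
  exact this.trans_lt ho

private lemma oty_biUnion_lt {ι : Type*} (U : Finset ι) (A : ι → Set γ) {o : Ordinal.{u}}
    (hwf : ∀ i ∈ U, (A i).WellFoundedOn (· > ·)) (hb : ∀ i ∈ U, oty (A i) < o)
    (hprin : ∀ x y : Ordinal.{u}, x < o → y < o → x ♯ y < o) (ho : 0 < o) :
    (⋃ i ∈ U, A i).WellFoundedOn (· > ·) ∧ oty (⋃ i ∈ U, A i) < o := by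
  classical
  induction U using Finset.induction with
  | empty =>
    simp only [Finset.notMem_empty, Set.iUnion_of_empty, Set.iUnion_empty]
    exact ⟨Set.Finite.wellFoundedOn Set.finite_empty, oty_empty_lt ho⟩
  | insert j U hnot IH =>
    have hU : (⋃ i ∈ U, A i).WellFoundedOn (· > ·) ∧ oty (⋃ i ∈ U, A i) < o :=
      IH (fun i hi => hwf i (Finset.mem_insert_of_mem hi))
        (fun i hi => hb i (Finset.mem_insert_of_mem hi))
    have hj := hwf j (Finset.mem_insert_self j U)
    have hset : (⋃ i ∈ insert j U, A i) = A j ∪ ⋃ i ∈ U, A i := by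
      simp [Finset.set_biUnion_insert]
    rw [hset]
    refine ⟨hj.union hU.1, ?_⟩
    calc oty (A j ∪ ⋃ i ∈ U, A i) ≤ oty (A j) ♯ oty (⋃ i ∈ U, A i) := oty_union_le hj hU.1
      _ < o := hprin _ _ (hb j (Finset.mem_insert_self j U)) hU.2


section HELPERS

variable {γ : Type u} [LinearOrder γ]

private lemma wf_of_upper {X : Set γ}
    (h : ∀ t ∈ X, ({w ∈ X | t < w} : Set γ).WellFoundedOn (· > ·)) :
    X.WellFoundedOn (· > ·) := by
  rw [Set.wellFoundedOn_iff]
  rw [WellFounded.wellFounded_iff_has_min]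
  intro s hs
  obtain ⟨a, ha⟩ := hs
  by_cases haX : a ∈ X
  · by_cases hne : (s ∩ {w ∈ X | a < w}).Nonempty
    · have hwf := h a haX
      rw [Set.wellFoundedOn_iff, WellFounded.wellFounded_iff_has_min] at hwf
      obtain ⟨m, hm, hmin⟩ := hwf _ hne
      refine ⟨m, hm.1, ?_⟩
      rintro x hx ⟨hgt, hxX, -⟩
      have hax : a < x := lt_trans hm.2.2 hgt
      exact hmin x ⟨hx, hxX, hax⟩ ⟨hgt, ⟨hxX, hax⟩, hm.2⟩
    · refine ⟨a, ha, ?_⟩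
      rintro x hx ⟨hgt, hxX, -⟩
      exact hne ⟨x, hx, hxX, hgt⟩
  · refine ⟨a, ha, ?_⟩
    rintro x hx ⟨-, -, haX'⟩
    exact haX haX'

end HELPERS

section SHIFT

variable {G : Type u} [AddCommGroup G] [LinearOrder G] [IsOrderedAddMonoid G]

private lemma shift_wf {R : Set G} (hR : R.WellFoundedOn (· > ·)) (u : G) :
    ((fun r => u + r) '' R).WellFoundedOn (· > ·) := by
  have h1 : Set.MapsTo (fun x => x - u) ((fun r => u + r) '' R) R := by
    rintro x ⟨r, hr, rfl⟩
    simpa using hr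
  have h2 := Set.WellFoundedOn.mapsTo (fun x => x - u) h1 hR
  refine Subrelation.wf ?_ h2
  rintro ⟨a, ha⟩ ⟨b, hb⟩ hab
  show (b : G) - u < (a : G) - u
  exact sub_lt_sub_right hab u

private lemma shift_oty_le {R : Set G} (hR : R.WellFoundedOn (· > ·)) (u : G) :
    oty ((fun r => u + r) '' R) ≤ oty R := by
  rw [oty_eq _ (shift_wf hR u), oty_eq _ hR]
  refine @RelEmbedding.ordinal_type_le _ _ _ _ (woOn _ (shift_wf hR u)) (woOn _ hR) ?_
  refine ⟨⟨fun x => ⟨(x : G) - u, ?_⟩, ?_⟩, ?_⟩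
  · obtain ⟨r, hr, hx⟩ := x.2
    rw [← hx]
    simpa using hr
  · intro a b hab
    have : (a : G) - u = (b : G) - u := by simpa [Subtype.ext_iff] using hab
    have : (a : G) = (b : G) := by
      have := congrArg (· + u) this
      simpa using this
    exact Subtype.ext this
  · intro a b
    show ((b : G) - u < (a : G) - u) ↔ ((b : G) < (a : G))
    exact sub_lt_sub_iff_right u

private lemma smul_lt_smul_neg {a b : ℝ} {x : G} [Module ℝ G] [PosSMulStrictMono ℝ G] [PosSMulReflectLT ℝ G]
    (hab : a < b) (hx : x < 0) : b • x < a • x := by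
  have h1 : (0:ℝ) < b - a := by linarith
  have h2 : (0:G) < (b - a) • (-x) := smul_pos h1 (neg_pos.mpr hx)
  rw [smul_neg] at h2
  have h3 : (b - a) • x < 0 := neg_pos.mp h2
  rw [sub_smul] at h3
  exact sub_neg.mp h3

private lemma smul_le_smul_neg' {a b : ℝ} {x : G} [Module ℝ G] [PosSMulStrictMono ℝ G] [PosSMulReflectLT ℝ G]
    (hab : a ≤ b) (hx : x < 0) : b • x ≤ a • x := by
  rcases eq_or_lt_of_le hab with rfl | h
  · exact le_rfl
  · exact (smul_lt_smul_neg h hx).le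

end SHIFT
universe v
private lemma lift_omega0_pow (n : ℕ) :
    Ordinal.lift.{v, 0} (Ordinal.omega0 ^ n) = Ordinal.omega0 ^ n := by
  induction n with
  | zero => simp
  | succ n IH => rw [pow_succ, Ordinal.lift_mul, IH, Ordinal.lift_omega0, pow_succ]

section MAINCONSTRUCTION

variable {M : Type u} [AddCommGroup M] [LinearOrder M] [IsOrderedAddMonoid M] [Module ℝ M] [PosSMulStrictMono ℝ M] [PosSMulReflectLT ℝ M]

private def TTs (n : ℕ) (m : Fin n → M) (S : Fin n → Set ℝ) (s : Finset (Fin n)) : Set M :=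
  {g | ∃ α : Fin n → ℝ, (∀ i, α i ∈ S i) ∧ g = ∑ i ∈ s, α i • m i}

private def sfxs (n j : ℕ) : Finset (Fin n) := Finset.univ.filter (fun i => j ≤ (i : ℕ))

private theorem main_wf_bound (k l : ℕ) (m : Fin (k + 1) → M) (S : Fin (k+1) → Set ℝ)
    (hsmall : ∀ i, m i < 0) (hmono : StrictMono m)
    (classes : Fin (k + 1) → Fin (l + 1))
    (hclasses : ∀ i j,
      (∃ a b : ℝ, 0 < a ∧ 0 < b ∧ a • m j < m i ∧ m i < b • m j) ↔ classes i = classes j)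
    (hSnn : ∀ i a, a ∈ S i → 0 ≤ a)
    (hSfin : ∀ i (b : ℝ), 0 < b → ({a ∈ S i | a < b}).Finite) :
    ∀ d j₀ : ℕ, k + 1 ≤ j₀ + d →
      (TTs (k+1) m S (sfxs (k+1) j₀)).WellFoundedOn (· > ·) ∧
      oty (TTs (k+1) m S (sfxs (k+1) j₀)) ≤
        Ordinal.omega0 ^ ((sfxs (k+1) j₀).image classes).card := by
  classical
  -- nonpositivity of all elements
  have hTnonpos : ∀ s : Finset (Fin (k+1)), ∀ g ∈ TTs (k+1) m S s, g ≤ 0 := by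
    rintro s g ⟨α, hα, rfl⟩
    apply Finset.sum_nonpos
    intro i _
    calc α i • m i ≤ α i • 0 :=
          smul_le_smul_of_nonneg_left (hsmall i).le (hSnn i _ (hα i))
      _ = 0 := smul_zero _
  -- empty-suffix base case
  have base : ∀ j₀, k + 1 ≤ j₀ →
      (TTs (k+1) m S (sfxs (k+1) j₀)).WellFoundedOn (· > ·) ∧
      oty (TTs (k+1) m S (sfxs (k+1) j₀)) ≤
        Ordinal.omega0 ^ ((sfxs (k+1) j₀).image classes).card := by
    intro j₀ hj₀
    have hempty : sfxs (k+1) j₀ = ∅ := by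
      apply Finset.eq_empty_of_forall_notMem
      intro i hi
      simp only [sfxs, Finset.mem_filter] at hi
      have := i.isLt
      omega
    rw [hempty]
    have hsingle : TTs (k+1) m S ∅ ⊆ {(0 : M)} := by
      rintro g ⟨α, hα, rfl⟩
      simp
    have hwf : (TTs (k+1) m S ∅).WellFoundedOn (· > ·) :=
      Set.Finite.wellFoundedOn ((Set.finite_singleton 0).subset hsingle)
    refine ⟨hwf, ?_⟩
    simp only [Finset.image_empty, Finset.card_empty, pow_zero]
    apply oty_le_of_upper hwf
    intro z hz
    have hup : {w ∈ TTs (k+1) m S ∅ | z < w} = (∅ : Set M) := by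
      ext w
      simp only [Set.mem_setOf_eq, Set.mem_empty_iff_false, iff_false, not_and]
      intro hw hzw
      have h1 := hsingle hw
      have h2 := hsingle hz
      simp only [Set.mem_singleton_iff] at h1 h2
      rw [h1, h2] at hzw
      exact lt_irrefl _ hzw
    rw [hup]
    exact oty_empty_lt zero_lt_one
  intro d
  induction d with
  | zero =>
    intro j₀ hj₀
    exact base j₀ (by omega)
  | succ d IH =>
    intro j₀ hj₀
    by_cases hjk : k + 1 ≤ j₀
    · exact base j₀ hjk
    push_neg at hjk
    set istar : Fin (k+1) := ⟨j₀, by omega⟩ with histar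
    have histv : (istar : ℕ) = j₀ := by rw [histar]
    set cstar := classes istar with hcstar
    have hex : ∃ x, j₀ < x ∧ ∀ hx : x < k+1, classes ⟨x, hx⟩ ≠ cstar :=
      ⟨k+1, by omega, fun hx => absurd hx (lt_irrefl _)⟩
    set j' := Nat.find hex with hj'def
    obtain ⟨hjj', hj'cl⟩ := Nat.find_spec hex
    have hj'le : j' ≤ k + 1 := Nat.find_le ⟨by omega, fun hx => absurd hx (lt_irrefl _)⟩
    have hj'min : ∀ x, j₀ < x → x < j' → ∃ hx : x < k+1, classes ⟨x, hx⟩ = cstar := by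
      intro x h1 h2
      rcases Nat.lt_or_ge x (k+1) with hxk | hxk
      · refine ⟨hxk, ?_⟩
        by_contra hne
        exact Nat.find_min hex h2 ⟨h1, fun hx => hne⟩
      · omega
    set blk : Finset (Fin (k+1)) := sfxs (k+1) j₀ \ sfxs (k+1) j' with hblkdef
    have hsub' : sfxs (k+1) j' ⊆ sfxs (k+1) j₀ := by
      intro i hi
      simp only [sfxs, Finset.mem_filter, Finset.mem_univ, true_and] at hi ⊢
      omega
    have hblk_mem : ∀ i : Fin (k+1), i ∈ blk ↔ (j₀ ≤ (i:ℕ) ∧ (i:ℕ) < j') := by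
      intro i
      simp only [hblkdef, sfxs, Finset.mem_sdiff, Finset.mem_filter, Finset.mem_univ,
        true_and]
      omega
    have hmem' : ∀ i : Fin (k+1), i ∈ sfxs (k+1) j' ↔ j' ≤ (i:ℕ) := by
      intro i
      simp only [sfxs, Finset.mem_filter, Finset.mem_univ, true_and]
    have hblk_classes : ∀ i ∈ blk, classes i = cstar := by
      intro i hi
      rw [hblk_mem] at hi
      rcases Nat.eq_or_lt_of_le hi.1 with heq | hlt
      · have : i = istar := Fin.ext (by rw [histv]; omega)
        rw [this]
      · obtain ⟨hx, hcl⟩ := hj'min (i : ℕ) hlt hi.2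
        rwa [show (⟨(i:ℕ), hx⟩ : Fin (k+1)) = i from Fin.ext rfl] at hcl
    -- classes in the strict suffix are ≠ cstar
    have hnecl : ∀ i ∈ sfxs (k+1) j', classes i ≠ cstar := by
      intro i hi hcl
      have hiv : j' ≤ (i : ℕ) := (hmem' i).mp hi
      have hj'k : j' < k + 1 := by
        have := i.isLt
        omega
      apply hj'cl hj'k
      apply (hclasses ⟨j', hj'k⟩ istar).mp
      obtain ⟨a', b', ha', hb', h1, h2⟩ := (hclasses i istar).mpr hcl
      refine ⟨1, b', one_pos, hb', ?_, ?_⟩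
      · rw [one_smul]
        apply hmono
        rw [histar]
        exact Fin.mk_lt_mk.mpr hjj'
      · have hle : m ⟨j', hj'k⟩ ≤ m i := by
          rcases Nat.eq_or_lt_of_le hiv with heq | hlt
          · rw [show i = (⟨j', hj'k⟩ : Fin (k+1)) from Fin.ext (by simp; omega)]
          · exact (hmono (by rw [Fin.lt_def]; simpa using hlt)).le
        exact lt_of_le_of_lt hle h2
    -- one-sided incomparability for the strict suffix
    have hK1 : ∀ i ∈ sfxs (k+1) j', ∀ b : ℝ, 0 < b → b • m istar < m i := by
      intro i hi b hb
      have hiv : j' ≤ (i : ℕ) := (hmem' i).mp hi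
      have hii : istar < i := by
        rw [Fin.lt_def, histv]
        omega
      by_contra hcon
      push_neg at hcon
      apply hnecl i hi
      apply (hclasses i istar).mp
      refine ⟨1, b/2, one_pos, by linarith, ?_, ?_⟩
      · rw [one_smul]
        exact hmono hii
      · calc m i ≤ b • m istar := hcon
          _ < (b/2) • m istar := smul_lt_smul_neg (by linarith) (hsmall istar)
    -- comparability data on the block
    have hK2 : ∀ i : Fin (k+1), ∃ ab : ℝ × ℝ, 0 < ab.1 ∧ 0 < ab.2 ∧
        (i ∈ blk → ab.1 • m istar < m i ∧ m i < ab.2 • m istar) := by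
      intro i
      by_cases hi : i ∈ blk
      · obtain ⟨a', b', ha', hb', h1, h2⟩ := (hclasses i istar).mpr (hblk_classes i hi)
        exact ⟨(a', b'), ha', hb', fun _ => ⟨h1, h2⟩⟩
      · exact ⟨(1, 1), one_pos, one_pos, fun h => absurd h hi⟩
    choose ab hab1 hab2 hab3 using hK2
    -- lower bounds
    have hK5 : ∀ g ∈ TTs (k+1) m S (sfxs (k+1) j₀), ∃ D : ℝ, D • m istar < g := by
      rintro g ⟨α, hα, rfl⟩
      set cf : Fin (k+1) → ℝ := fun i => if i ∈ blk then (ab i).1 else 1 with hcf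
      have hterm : ∀ i ∈ sfxs (k+1) j₀, (α i * cf i) • m istar ≤ α i • m i := by
        intro i hi
        by_cases hib : i ∈ blk
        · rw [hcf]
          simp only [if_pos hib]
          rw [mul_smul]
          exact smul_le_smul_of_nonneg_left ((hab3 i hib).1).le (hSnn i _ (hα i))
        · have hi' : i ∈ sfxs (k+1) j' := by
            rw [hmem' i]
            rw [hblk_mem] at hib
            simp only [sfxs, Finset.mem_filter] at hi
            omega
          rw [hcf]
          simp only [if_neg hib, mul_one]
          have := hK1 i hi' 1 one_pos
          rw [one_smul] at this
          exact smul_le_smul_of_nonneg_left this.le (hSnn i _ (hα i))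
      refine ⟨(∑ i ∈ sfxs (k+1) j₀, α i * cf i) + 1, ?_⟩
      calc ((∑ i ∈ sfxs (k+1) j₀, α i * cf i) + 1) • m istar
          < (∑ i ∈ sfxs (k+1) j₀, α i * cf i) • m istar :=
            smul_lt_smul_neg (lt_add_one _) (hsmall istar)
        _ = ∑ i ∈ sfxs (k+1) j₀, (α i * cf i) • m istar := Finset.sum_smul
        _ ≤ ∑ i ∈ sfxs (k+1) j₀, α i • m i := Finset.sum_le_sum hterm
    -- finiteness of bounded pieces of the block sums
    have hK6 : ∀ D : ℝ, ({u ∈ TTs (k+1) m S blk | D • m istar < u}).Finite := by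
      intro D
      set Bd : Fin (k+1) → ℝ := fun i => max (D / (ab i).2) 1 with hBd
      have hBdpos : ∀ i, 0 < Bd i := fun i => lt_of_lt_of_le one_pos (le_max_right _ _)
      have hfin : (Set.univ.pi (fun i : Fin (k+1) =>
          if i ∈ blk then {a ∈ S i | a < Bd i} else ({0} : Set ℝ))).Finite := by
        apply Set.Finite.pi
        intro i
        split_ifs
        · exact hSfin i (Bd i) (hBdpos i)
        · exact Set.finite_singleton 0
      refine ((hfin.image (fun β : Fin (k+1) → ℝ => ∑ i ∈ blk, β i • m i))).subset ?_
      rintro u ⟨⟨α, hα, rfl⟩, hDu⟩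
      -- the coefficients are bounded
      have hup : ∀ i ∈ blk, α i • m i ≤ (α i * (ab i).2) • m istar := by
        intro i hi
        rw [mul_smul]
        exact smul_le_smul_of_nonneg_left ((hab3 i hi).2).le (hSnn i _ (hα i))
      have hE : (∑ i ∈ blk, α i • m i) ≤ (∑ i ∈ blk, α i * (ab i).2) • m istar := by
        rw [Finset.sum_smul]
        exact Finset.sum_le_sum hup
      have hED : (∑ i ∈ blk, α i * (ab i).2) < D := by
        by_contra hcon
        push_neg at hcon
        have := (hDu.trans_le hE).trans_le (smul_le_smul_neg' hcon (hsmall istar))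
        exact lt_irrefl _ this
      have hbound : ∀ i ∈ blk, α i < Bd i := by
        intro i hi
        have h1 : α i * (ab i).2 ≤ ∑ i ∈ blk, α i * (ab i).2 :=
          Finset.single_le_sum
            (fun i _ => mul_nonneg (hSnn i _ (hα i)) (hab2 i).le) hi
        have h2 : α i * (ab i).2 < D := lt_of_le_of_lt h1 hED
        have h3 : α i < D / (ab i).2 := (lt_div_iff₀ (hab2 i)).mpr h2
        exact lt_of_lt_of_le h3 (le_max_left _ _)
      refine ⟨fun i => if i ∈ blk then α i else 0, ?_, ?_⟩
      · rw [Set.mem_pi]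
        intro i _
        by_cases hi : i ∈ blk
        · simp only [if_pos hi]
          exact ⟨hα i, hbound i hi⟩
        · simp only [if_neg hi, Set.mem_singleton_iff]
      · apply Finset.sum_congr rfl
        intro i hi
        simp only [if_pos hi]
    -- splitting
    have hK3 : ∀ g ∈ TTs (k+1) m S (sfxs (k+1) j₀),
        ∃ u ∈ TTs (k+1) m S blk, ∃ r ∈ TTs (k+1) m S (sfxs (k+1) j'), g = u + r := by
      rintro g ⟨α, hα, rfl⟩
      exact ⟨∑ i ∈ blk, α i • m i, ⟨α, hα, rfl⟩,
        ∑ i ∈ sfxs (k+1) j', α i • m i, ⟨α, hα, rfl⟩,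
        (Finset.sum_sdiff hsub').symm⟩
    -- induction hypothesis for the strict suffix
    obtain ⟨hwf', hbd'⟩ := IH j' (by omega)
    set n := ((sfxs (k+1) j').image classes).card with hn
    -- covering of upper sets
    have hcov : ∀ t : M, ∀ D : ℝ, D • m istar < t →
        {w ∈ TTs (k+1) m S (sfxs (k+1) j₀) | t < w} ⊆
          ⋃ u ∈ (hK6 D).toFinset, (fun r => u + r) '' TTs (k+1) m S (sfxs (k+1) j') := by
      intro t D hDt
      rintro w ⟨hw, htw⟩
      obtain ⟨u, hu, r, hr, rfl⟩ := hK3 w hw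
      have hru : u + r ≤ u := by
        have := hTnonpos _ r hr
        simpa using add_le_add_left this u
      have hDu : D • m istar < u := lt_of_lt_of_le (hDt.trans htw) hru
      apply Set.mem_biUnion ((hK6 D).mem_toFinset.mpr ⟨hu, hDu⟩)
      exact ⟨r, hr, rfl⟩
    -- well-founded + bounded unions
    have hunion : ∀ D : ℝ,
        (⋃ u ∈ (hK6 D).toFinset, (fun r => u + r) '' TTs (k+1) m S (sfxs (k+1) j')).WellFoundedOn (· > ·) ∧
        oty (⋃ u ∈ (hK6 D).toFinset, (fun r => u + r) '' TTs (k+1) m S (sfxs (k+1) j')) <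
          Ordinal.omega0 ^ (n + 1) := by
      intro D
      apply oty_biUnion_lt
      · intro u _
        exact shift_wf hwf' u
      · intro u _
        refine lt_of_le_of_lt ((shift_oty_le hwf' u).trans hbd') ?_
        calc Ordinal.omega0 ^ n = Ordinal.omega0 ^ n * 1 := (mul_one _).symm
          _ < Ordinal.omega0 ^ n * Ordinal.omega0 :=
              mul_lt_mul_of_pos_left Ordinal.one_lt_omega0 (pow_omega0_pos n)
          _ = Ordinal.omega0 ^ (n+1) := (pow_succ _ _).symm
      · exact fun x y hx hy => nadd_principal (n+1) x y hx hy
      · exact pow_omega0_pos (n+1)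
    -- well-foundedness
    have hwfj : (TTs (k+1) m S (sfxs (k+1) j₀)).WellFoundedOn (· > ·) := by
      apply wf_of_upper
      intro t ht
      obtain ⟨D, hD⟩ := hK5 t ht
      exact ((hunion D).1).subset (hcov t D hD)
    refine ⟨hwfj, ?_⟩
    -- cardinality computation
    have hK7 : ((sfxs (k+1) j₀).image classes).card = n + 1 := by
      have himg : (sfxs (k+1) j₀).image classes =
          insert cstar ((sfxs (k+1) j').image classes) := by
        ext c0
        simp only [Finset.mem_image, Finset.mem_insert]
        constructor
        · rintro ⟨i, hi, rfl⟩
          by_cases hi' : i ∈ sfxs (k+1) j'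
          · exact Or.inr ⟨i, hi', rfl⟩
          · exact Or.inl (hblk_classes i (Finset.mem_sdiff.mpr ⟨hi, hi'⟩))
        · rintro (rfl | ⟨i, hi, rfl⟩)
          · exact ⟨istar, by simp [sfxs, histar], rfl⟩
          · exact ⟨i, hsub' hi, rfl⟩
      have hnotmem : cstar ∉ (sfxs (k+1) j').image classes := by
        rw [Finset.mem_image]
        rintro ⟨i, hi, hcl⟩
        exact hnecl i hi hcl
      rw [himg, Finset.card_insert_of_notMem hnotmem]
    rw [hK7]
    apply oty_le_of_upper hwfj
    intro t ht
    obtain ⟨D, hD⟩ := hK5 t ht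
    calc oty {w ∈ TTs (k+1) m S (sfxs (k+1) j₀) | t < w}
        ≤ oty (⋃ u ∈ (hK6 D).toFinset, (fun r => u + r) '' TTs (k+1) m S (sfxs (k+1) j')) :=
          oty_mono (hcov t D hD) (hunion D).1
      _ < Ordinal.omega0 ^ (n + 1) := (hunion D).2

end MAINCONSTRUCTION

/-- The multiplicatively written linearly ordered `ℝ`-vector space `M` is formalized
additively: `m^α` corresponds to `∑ i, α i • m i`, small corresponds to `< 0`, and
comparability of `m, n` means `a • n < m < b • n` for some `a, b > 0`.  The function
`classes` records that `{m₀,…,m_k}` has exactly `l+1` comparability classes.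

Conclusion: the support of `F = G(m₀,…,m_k)` has reverse-order type at most `ω^{l+1}`;
formally, there is a map of the support into the ordinals `< ω^{l+1}` that is strictly
order-reversing (an embedding of the reversed order into `ω^{l+1}`). -/
theorem stmt4 {M : Type*} [AddCommGroup M] [LinearOrder M] [IsOrderedAddMonoid M] [Module ℝ M] [PosSMulStrictMono ℝ M] [PosSMulReflectLT ℝ M]
    {K : Type*} [Field K]
    (k l : ℕ) (m : Fin (k + 1) → M) (hsmall : ∀ i, m i < 0) (hmono : StrictMono m)
    (classes : Fin (k + 1) → Fin (l + 1))
    (hclasses : ∀ i j,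
      (∃ a b : ℝ, 0 < a ∧ 0 < b ∧ a • m j < m i ∧ m i < b • m j) ↔ classes i = classes j)
    (hsurj : Function.Surjective classes)
    (c : (Fin (k + 1) → ℝ) → K)
    (hnn : ∀ α, c α ≠ 0 → ∀ i, 0 ≤ α i)
    (hnatsupp : ∀ i, ∀ a : ℝ, 0 < a → {t : ℝ | t < a ∧ ∃ α, c α ≠ 0 ∧ α i = t}.Finite)
    (F : M → K)
    (hF : ∀ g : M, F g = ∑ᶠ (α : Fin (k + 1) → ℝ) (_ : ∑ i, α i • m i = g), c α) :
    ∃ f : {g : M // F g ≠ 0} → Ordinal,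
      (∀ x, f x < Ordinal.omega0 ^ (l + 1 : ℕ)) ∧
      (∀ x y : {g : M // F g ≠ 0}, (y : M) < (x : M) → f x < f y) := by
  
  classical
  set S : Fin (k+1) → Set ℝ := fun i => insert 0 {a | ∃ α, c α ≠ 0 ∧ α i = a} with hSdef
  have hSnn : ∀ i a, a ∈ S i → 0 ≤ a := by
    intro i a ha
    rcases ha with rfl | ⟨α, hα, rfl⟩
    · exact le_rfl
    · exact hnn α hα i
  have hSfin : ∀ i (b : ℝ), 0 < b → ({a ∈ S i | a < b}).Finite := by
    intro i b hb
    refine ((hnatsupp i b hb).insert 0).subset ?_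
    rintro a ⟨ha, hab⟩
    rcases ha with rfl | ⟨α, h1, h2⟩
    · exact Set.mem_insert _ _
    · exact Set.mem_insert_of_mem _ ⟨hab, α, h1, h2⟩
  obtain ⟨hwfU, hbdU⟩ :=
    main_wf_bound k l m S hsmall hmono classes hclasses hSnn hSfin (k+1) 0 (by omega)
  have hsfx0 : sfxs (k+1) 0 = Finset.univ := by
    apply Finset.eq_univ_of_forall
    intro i
    simp [sfxs]
  rw [hsfx0] at hwfU hbdU
  have hncl : (Finset.univ.image classes).card = l + 1 := by
    rw [Finset.image_univ_of_surjective hsurj, Finset.card_univ, Fintype.card_fin]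
  rw [hncl] at hbdU
  have hsupp : ∀ g : M, F g ≠ 0 → g ∈ TTs (k+1) m S Finset.univ := by
    intro g hg
    by_contra hng
    apply hg
    rw [hF g]
    apply finsum_eq_zero_of_forall_eq_zero
    intro α
    rw [finsum_eq_if]
    split_ifs with hsum
    · by_contra hc
      exact hng ⟨α, fun i => Set.mem_insert_of_mem _ ⟨α, hc, rfl⟩, hsum.symm⟩
    · rfl
  set X := TTs (k+1) m S Finset.univ with hXdef
  have hlt : ∀ x : {g : M // F g ≠ 0},
      (@Ordinal.typein X (srel X) (woOn X hwfU)).toRelEmbedding ⟨(x : M), hsupp x x.2⟩ <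
        Ordinal.omega0 ^ (l+1) := by
    intro x
    refine lt_of_lt_of_le (@Ordinal.typein_lt_type X (srel X) (woOn X hwfU) _) ?_
    rw [← oty_eq X hwfU]
    exact hbdU
  have hstrict : ∀ x y : {g : M // F g ≠ 0}, (y : M) < (x : M) →
      (@Ordinal.typein X (srel X) (woOn X hwfU)).toRelEmbedding ⟨(x : M), hsupp x x.2⟩ <
      (@Ordinal.typein X (srel X) (woOn X hwfU)).toRelEmbedding ⟨(y : M), hsupp y y.2⟩ := by
    intro x y hxy
    exact (@Ordinal.typein_lt_typein X (srel X) (woOn X hwfU) _ _).mpr hxy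
  have hdown : ∀ o : Ordinal, o < Ordinal.omega0 ^ (l+1) →
      ∃ o₀ : Ordinal.{0}, Ordinal.lift o₀ = o ∧ o₀ < Ordinal.omega0 ^ (l+1) := by
    intro o ho
    rw [← lift_omega0_pow (l+1)] at ho
    obtain ⟨o₀, ho₀, hlift⟩ := Ordinal.lt_lift_iff.mp ho
    exact ⟨o₀, hlift, ho₀⟩
  refine ⟨fun x => Ordinal.lift (Classical.choose (hdown _ (hlt x))), ?_, ?_⟩
  · intro x
    exact lt_of_lt_of_eq (Ordinal.lift_lt.mpr (Classical.choose_spec (hdown _ (hlt x))).2)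
      (lift_omega0_pow (l+1))
  · intro x y hxy
    apply Ordinal.lift_lt.mpr
    have hx := (Classical.choose_spec (hdown _ (hlt x))).1
    have hy := (Classical.choose_spec (hdown _ (hlt y))).1
    have := hstrict x y hxy
    rw [← hx, ← hy] at this
    exact Ordinal.lift_lt.mp this
end OTY
end

section
/- Let M be a multiplicatively written linearly ordered ℝ-vector space and K a commutative ring. The set of M-generalized Laurent series over K, i.e. series of the form n·G(m₀,...,m_k) with G a generalized power series over K with natural support, m₀,...,m_k ∈ M small, and n in the multiplicative ℝ-subspace generated by m₀,...,m_k, is a subring of the Hahn series ring K[[M]]; it is closed under both addition and multiplication. -/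
open Set Function
open scoped Classical Pointwise

/-- Coefficient function of a generalized power series over `K` with natural support
contained in `[0,∞)^{k+1}`. -/
def IsNaturalGPS {K : Type*} [CommRing K] {k : ℕ} (c : (Fin (k + 1) → ℝ) → K) : Prop :=
  (∀ α, c α ≠ 0 → ∀ i, 0 ≤ α i) ∧
  ∀ i, ∀ a : ℝ, 0 < a → {t : ℝ | t < a ∧ ∃ α, c α ≠ 0 ∧ α i = t}.Finite

/-- The multiplicatively written linearly ordered `ℝ`-vector space `M` is formalized
additively (monomial products become sums, small `< 1` becomes `< 0`).  `F` is an
`M`-generalized Laurent series over `K`: `F = n · G(m₀,…,m_k)` with `G` a generalized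
power series over `K` with natural support, `m₀,…,m_k ∈ M` small, and `n = m^β` in the
multiplicative `ℝ`-subspace generated by the `m i`. -/
def IsMGenLaurent {M K : Type*} [AddCommGroup M] [LinearOrder M] [IsOrderedAddMonoid M] [Module ℝ M] [CommRing K]
    (F : M → K) : Prop :=
  ∃ (k : ℕ) (m : Fin (k + 1) → M) (β : Fin (k + 1) → ℝ) (c : (Fin (k + 1) → ℝ) → K),
    (∀ i, m i < 0) ∧ IsNaturalGPS c ∧
    ∀ g : M, F g = ∑ᶠ (α : Fin (k + 1) → ℝ) (_ : ∑ i, (β i + α i) • m i = g), c α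

section Aux

variable {M : Type*} [AddCommGroup M] [LinearOrder M] [IsOrderedAddMonoid M] [Module ℝ M] [PosSMulStrictMono ℝ M] [PosSMulReflectLT ℝ M]

private lemma smul_strictAnti {m : M} (hm : m < 0) :
    StrictAnti (fun t : ℝ => t • m) := by
  intro s t hst
  have h1 : (t - s) • m < 0 := smul_neg_of_pos_of_neg (by linarith) hm
  rw [sub_smul] at h1
  simpa using sub_neg.mp h1

/-- A "locally finite" subset of `[0,∞)`. -/
private def Loc (T : Set ℝ) : Prop := T ⊆ Set.Ici 0 ∧ ∀ a : ℝ, (T ∩ Set.Iio a).Finite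

private lemma Loc.isPWO {T : Set ℝ} (hT : Loc T) : T.IsPWO := by
  refine Set.IsWF.isPWO ?_
  rw [Set.isWF_iff_no_descending_seq]
  intro f hf hfT
  have hsub : Set.range f ⊆ T ∩ Set.Iio (f 0 + 1) := by
    rintro x ⟨n, rfl⟩
    exact ⟨hfT n, lt_of_le_of_lt (hf.antitone (Nat.zero_le n)) (by linarith)⟩
  exact (Set.infinite_range_of_injective hf.injective) ((hT.2 (f 0 + 1)).subset hsub)

private lemma loc_image_isPWO {T : Set ℝ} (hT : Loc T) {m : M} (hm : m < 0) :
    Set.IsPWO (α := Mᵒᵈ) ((fun t : ℝ => t • m) '' T) := by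
  refine Set.IsPWO.image_of_monotoneOn (hT.isPWO) ?_
  intro s hs t ht hst
  exact (smul_strictAnti hm).antitone hst

/-- The main combinatorial lemma: the set of monomials reachable from a grid is
partially well-ordered (in the dual order), and each monomial is reachable in only
finitely many ways. -/
private lemma grid_main :
    ∀ (n : ℕ) (m : Fin n → M) (T : Fin n → Set ℝ),
    (∀ i, m i < 0) → (∀ i, Loc (T i)) →
    Set.IsPWO (α := Mᵒᵈ) {g : M | ∃ α : Fin n → ℝ, (∀ i, α i ∈ T i) ∧ ∑ i, α i • m i = g} ∧
    ∀ h : M, {α : Fin n → ℝ | (∀ i, α i ∈ T i) ∧ ∑ i, α i • m i = h}.Finite := by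
  intro n
  induction n with
  | zero =>
    intro m T hm hT
    constructor
    · have : {g : M | ∃ α : Fin 0 → ℝ, (∀ i, α i ∈ T i) ∧ ∑ i, α i • m i = g} ⊆ {0} := by
        rintro g ⟨α, -, rfl⟩; simp
      exact (Set.isPWO_singleton (α := Mᵒᵈ) 0).mono this
    · intro h; exact Set.toFinite _
  | succ n IH =>
    intro m T hm hT
    set A0 : Set M := (fun t : ℝ => t • m 0) '' T 0 with hA0
    set mt : Fin n → M := fun i => m i.succ with hmt
    set Tt : Fin n → Set ℝ := fun i => T i.succ with hTt
    have hmt' : ∀ i, mt i < 0 := fun i => hm _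
    have hTt' : ∀ i, Loc (Tt i) := fun i => hT _
    obtain ⟨IH1, IH2⟩ := IH mt Tt hmt' hTt'
    set St : Set M := {g : M | ∃ α : Fin n → ℝ, (∀ i, α i ∈ Tt i) ∧ ∑ i, α i • mt i = g}
    have hA0p : Set.IsPWO (α := Mᵒᵈ) A0 := loc_image_isPWO (hT 0) (hm 0)
    have key : ∀ (α : Fin (n+1) → ℝ), (∀ i, α i ∈ T i) →
        α 0 • m 0 ∈ A0 ∧ (∑ i : Fin n, α i.succ • mt i) ∈ St ∧
        ∑ i, α i • m i = α 0 • m 0 + ∑ i : Fin n, α i.succ • mt i := by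
      intro α hα
      refine ⟨⟨α 0, hα 0, rfl⟩, ⟨fun i => α i.succ, fun i => hα i.succ, rfl⟩, ?_⟩
      rw [Fin.sum_univ_succ]
    constructor
    · have hsub : {g : M | ∃ α : Fin (n+1) → ℝ, (∀ i, α i ∈ T i) ∧ ∑ i, α i • m i = g}
          ⊆ A0 + St := by
        rintro g ⟨α, hα, rfl⟩
        obtain ⟨h1, h2, h3⟩ := key α hα
        exact ⟨_, h1, _, h2, h3.symm⟩
      exact (Set.IsPWO.add (α := Mᵒᵈ) hA0p IH1).mono hsub
    · intro h
      set ad : Set (M × M) := Set.antidiagonal (α := Mᵒᵈ) A0 St h with had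
      have hadf : ad.Finite := Set.AddAntidiagonal.finite_of_isPWO hA0p IH1 h
      have hUf : ((fun t : ℝ => t • m 0) ⁻¹' (Prod.fst '' ad)).Finite := by
        refine Set.Finite.preimage ?_ (hadf.image _)
        exact ((smul_strictAnti (hm 0)).injective).injOn
      have hVf : (⋃ y ∈ Prod.snd '' ad,
          {αt : Fin n → ℝ | (∀ i, αt i ∈ Tt i) ∧ ∑ i, αt i • mt i = y}).Finite :=
        Set.Finite.biUnion (hadf.image _) (fun y _ => IH2 y)
      set e : (Fin (n+1) → ℝ) → ℝ × (Fin n → ℝ) := fun α => (α 0, fun i => α i.succ) with he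
      have heinj : Injective e := by
        intro α α' hαα
        funext i
        refine Fin.cases ?_ (fun j => ?_) i
        · exact congrArg Prod.fst hαα
        · exact congrFun (congrArg Prod.snd hαα) j
      refine Set.Finite.of_finite_image ?_ heinj.injOn
      refine Set.Finite.subset (hUf.prod hVf) ?_
      rintro p ⟨α, ⟨hα, hsum⟩, rfl⟩
      obtain ⟨h1, h2, h3⟩ := key α hα
      have hmem : (α 0 • m 0, ∑ i : Fin n, α i.succ • mt i) ∈ ad := by
        rw [had]; refine (Set.mem_antidiagonal (α := Mᵒᵈ)).2
          (?_ : _ ∧ _ ∧ α 0 • m 0 + ∑ i : Fin n, α i.succ • mt i = h)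
        exact ⟨h1, h2, by rw [← h3]; exact hsum⟩
      constructor
      · exact Set.mem_preimage.2 ⟨_, hmem, rfl⟩
      · exact Set.mem_biUnion ⟨_, hmem, rfl⟩ ⟨fun i => hα i.succ, rfl⟩

end Aux

section Rep

variable {M K : Type*} [AddCommGroup M] [LinearOrder M] [IsOrderedAddMonoid M] [Module ℝ M] [PosSMulStrictMono ℝ M] [PosSMulReflectLT ℝ M]
  [CommRing K]

/-- The affine monomial-valuation map. -/
private def sigm {k : ℕ} (m : Fin (k+1) → M) (β : Fin (k+1) → ℝ) (α : Fin (k+1) → ℝ) : M :=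
  ∑ i, (β i + α i) • m i

private lemma sigm_decomp {k : ℕ} (m : Fin (k+1) → M) (β α : Fin (k+1) → ℝ) :
    sigm m β α = (∑ i, β i • m i) + ∑ i, α i • m i := by
  simp [sigm, add_smul, Finset.sum_add_distrib]

/-- `F` is represented by the data `(m, β, c)`. -/
private def RepW {k : ℕ} (F : M → K) (m : Fin (k+1) → M) (β : Fin (k+1) → ℝ)
    (c : (Fin (k+1) → ℝ) → K) : Prop :=
  ∀ g : M, F g = ∑ᶠ α ∈ {α : Fin (k+1) → ℝ | sigm m β α = g}, c α

/-- The coordinate supports of a coefficient function. -/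
private def Tset {k : ℕ} (c : (Fin (k+1) → ℝ) → K) (i : Fin (k+1)) : Set ℝ :=
  {t | ∃ α, c α ≠ 0 ∧ α i = t}

private lemma Tset_loc {k : ℕ} {c : (Fin (k+1) → ℝ) → K} (hc : IsNaturalGPS c) (i : Fin (k+1)) :
    Loc (Tset c i) := by
  constructor
  · rintro t ⟨α, hα, rfl⟩; exact hc.1 α hα i
  · intro a
    rcases le_or_gt a 0 with ha | ha
    · have : Tset c i ∩ Set.Iio a = ∅ := by
        apply Set.eq_empty_of_forall_notMem
        rintro t ⟨⟨α, hα, rfl⟩, ht⟩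
        exact absurd (hc.1 α hα i) (by simp at ht ⊢; linarith)
      rw [this]; exact Set.finite_empty
    · have := hc.2 i a ha
      refine this.subset ?_
      rintro t ⟨⟨α, hα, rfl⟩, ht⟩
      exact ⟨ht, α, hα, rfl⟩

private lemma fib_finite {k : ℕ} {m : Fin (k+1) → M} (hm : ∀ i, m i < 0)
    {c : (Fin (k+1) → ℝ) → K} (hc : IsNaturalGPS c) (β : Fin (k+1) → ℝ) (g : M) :
    {α : Fin (k+1) → ℝ | c α ≠ 0 ∧ sigm m β α = g}.Finite := by
  refine ((grid_main (k+1) m (Tset c) hm (Tset_loc hc)).2 (g - ∑ i, β i • m i)).subset ?_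
  rintro α ⟨hα, hσ⟩
  refine ⟨fun i => ⟨α, hα, rfl⟩, ?_⟩
  rw [sigm_decomp] at hσ
  rw [← hσ]; abel

private lemma RepW.value {k : ℕ} {F : M → K} {m : Fin (k+1) → M} {β : Fin (k+1) → ℝ}
    {c : (Fin (k+1) → ℝ) → K} (hrep : RepW F m β c) (g : M) {t : Finset (Fin (k+1) → ℝ)}
    (ht : {α : Fin (k+1) → ℝ | sigm m β α = g} ∩ support c = ↑t ∩ support c) :
    F g = ∑ α ∈ t, c α := by
  rw [hrep g]; exact finsum_mem_eq_sum_of_inter_support_eq c ht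

private lemma RepW.value' {k : ℕ} {F : M → K} {m : Fin (k+1) → M} (hm : ∀ i, m i < 0)
    {β : Fin (k+1) → ℝ} {c : (Fin (k+1) → ℝ) → K} (hc : IsNaturalGPS c)
    (hrep : RepW F m β c) (g : M) :
    F g = ∑ α ∈ (fib_finite hm hc β g).toFinset, c α := by
  refine hrep.value g ?_
  ext α
  simp only [Set.mem_inter_iff, Set.mem_setOf_eq, Finset.coe_sort_coe, Set.Finite.coe_toFinset,
    Function.mem_support]
  tauto

private lemma RepW.support_sub {k : ℕ} {F : M → K} {m : Fin (k+1) → M} {β : Fin (k+1) → ℝ}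
    {c : (Fin (k+1) → ℝ) → K} (hrep : RepW F m β c) (g : M) (hg : F g ≠ 0) :
    ∃ α, c α ≠ 0 ∧ sigm m β α = g := by
  by_contra h
  push_neg at h
  apply hg
  have : F g = ∑ α ∈ (∅ : Finset (Fin (k+1) → ℝ)), c α := by
    refine hrep.value g ?_
    ext α
    simp only [Set.mem_inter_iff, Set.mem_setOf_eq, Finset.coe_empty, Set.mem_empty_iff_false,
      false_and, iff_false, Function.mem_support, not_and, not_not]
    intro hσ
    by_contra hα
    exact h α hα hσ
  simpa using this

/-- The potential support of a represented series. -/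
private def Bset {k : ℕ} (m : Fin (k+1) → M) (β : Fin (k+1) → ℝ)
    (c : (Fin (k+1) → ℝ) → K) : Set M :=
  {g | ∃ α, c α ≠ 0 ∧ sigm m β α = g}

private lemma Bset_isPWO {k : ℕ} {m : Fin (k+1) → M} (hm : ∀ i, m i < 0)
    {c : (Fin (k+1) → ℝ) → K} (hc : IsNaturalGPS c) (β : Fin (k+1) → ℝ) :
    Set.IsPWO (α := Mᵒᵈ) (Bset m β c) := by
  have h1 := (grid_main (k+1) m (Tset c) hm (Tset_loc hc)).1
  refine (Set.IsPWO.add (α := Mᵒᵈ) (Set.isPWO_singleton (α := Mᵒᵈ) (∑ i, β i • m i)) h1).mono ?_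
  rintro g ⟨α, hα, rfl⟩
  exact ⟨_, rfl, _, ⟨α, fun i => ⟨α, hα, rfl⟩, rfl⟩, (sigm_decomp m β α).symm⟩

private lemma antidiag_finite {B₁ B₂ : Set M} (h₁ : Set.IsPWO (α := Mᵒᵈ) B₁)
    (h₂ : Set.IsPWO (α := Mᵒᵈ) B₂) (g : M) :
    {q : M | q ∈ B₁ ∧ g - q ∈ B₂}.Finite := by
  have had : (Set.antidiagonal (α := Mᵒᵈ) B₁ B₂ g).Finite :=
    Set.AddAntidiagonal.finite_of_isPWO h₁ h₂ g
  have hinj : Injective (fun q : M => (q, g - q)) := fun a b hab => congrArg Prod.fst hab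
  refine (had.preimage hinj.injOn).subset ?_
  rintro q ⟨hq1, hq2⟩
  refine Set.mem_preimage.2 (Set.mem_antidiagonal.2 ⟨hq1, hq2, ?_⟩)
  show q + (g - q) = g
  abel

end Rep

section Reindex

variable {M K : Type*} [AddCommGroup M] [LinearOrder M] [IsOrderedAddMonoid M] [Module ℝ M] [PosSMulStrictMono ℝ M] [PosSMulReflectLT ℝ M]
  [CommRing K]

private lemma finsum_mem_subset_support {ι K' : Type*} [AddCommMonoid K'] (f : ι → K')
    (s u : Set ι) (h : support f ⊆ u) : ∑ᶠ i ∈ s, f i = ∑ᶠ i ∈ s ∩ u, f i := by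
  rw [← finsum_mem_inter_support f s, ← finsum_mem_inter_support f (s ∩ u), Set.inter_assoc,
    Set.inter_eq_self_of_subset_right h]

private lemma finsum_mem_reindex {ι₁ ι₂ K' : Type*} [AddCommMonoid K'] {e : ι₁ → ι₂}
    (he : Injective e) (c' : ι₂ → K') (hsupp : support c' ⊆ Set.range e) {s : Set ι₂}
    {s₁ : Set ι₁} (hs : s ∩ Set.range e = e '' s₁) :
    ∑ᶠ x ∈ s, c' x = ∑ᶠ y ∈ s₁, c' (e y) := by
  rw [finsum_mem_subset_support c' s _ hsupp, hs, finsum_mem_image he.injOn]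

private noncomputable def extendC {ι₁ ι₂ : Type*} (e : ι₁ → ι₂) (c₁ : ι₁ → K) : ι₂ → K :=
  fun α => if h : ∃ αL, e αL = α then c₁ h.choose else 0

private lemma extendC_apply {ι₁ ι₂ : Type*} {e : ι₁ → ι₂} (he : Injective e) (c₁ : ι₁ → K)
    (αL : ι₁) : extendC e c₁ (e αL) = c₁ αL := by
  have h : ∃ αL', e αL' = e αL := ⟨αL, rfl⟩
  rw [extendC, dif_pos h, he h.choose_spec]

private lemma extendC_support {ι₁ ι₂ : Type*} (e : ι₁ → ι₂) (c₁ : ι₁ → K) :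
    support (extendC e c₁) ⊆ Set.range e := by
  intro α hα
  rw [mem_support, extendC] at hα
  by_contra hr
  exact hα (dif_neg (fun ⟨αL, hαL⟩ => hr ⟨αL, hαL⟩))

private lemma extendC_ne {ι₁ ι₂ : Type*} {e : ι₁ → ι₂} (he : Injective e) {c₁ : ι₁ → K}
    {α : ι₂} (h : extendC e c₁ α ≠ 0) : ∃ αL, e αL = α ∧ c₁ αL ≠ 0 := by
  obtain ⟨αL, rfl⟩ := extendC_support e c₁ h
  rw [extendC_apply he] at h
  exact ⟨αL, rfl, h⟩

/-- Generic padding: transport a representation along a coordinatewise injection. -/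
private lemma pad_generic {k₁ k : ℕ} {F : M → K} {m₁ : Fin (k₁+1) → M} {β₁ : Fin (k₁+1) → ℝ}
    {c₁ : (Fin (k₁+1) → ℝ) → K} (hc₁ : IsNaturalGPS c₁) (hrep : RepW F m₁ β₁ c₁)
    (m : Fin (k+1) → M) (β : Fin (k+1) → ℝ)
    (e : (Fin (k₁+1) → ℝ) → (Fin (k+1) → ℝ)) (he : Injective e)
    (hσ : ∀ αL, sigm m β (e αL) = sigm m₁ β₁ αL)
    (hcoord : ∀ i, (∃ j, ∀ αL, e αL i = αL j) ∨ (∀ αL, e αL i = 0)) :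
    IsNaturalGPS (extendC e c₁) ∧ RepW F m β (extendC e c₁) := by
  constructor
  · constructor
    · intro α hα i
      obtain ⟨αL, rfl, hαL⟩ := extendC_ne he hα
      rcases hcoord i with ⟨j, hj⟩ | hz
      · rw [hj]; exact hc₁.1 αL hαL j
      · rw [hz]
    · intro i a ha
      rcases hcoord i with ⟨j, hj⟩ | hz
      · refine (hc₁.2 j a ha).subset ?_
        rintro t ⟨ht, α, hα, rfl⟩
        obtain ⟨αL, rfl, hαL⟩ := extendC_ne he hα
        exact ⟨ht, αL, hαL, (hj αL).symm⟩
      · refine (Set.finite_singleton (0 : ℝ)).subset ?_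
        rintro t ⟨ht, α, hα, rfl⟩
        obtain ⟨αL, rfl, hαL⟩ := extendC_ne he hα
        simp [hz αL]
  · intro g
    have hs : {α : Fin (k+1) → ℝ | sigm m β α = g} ∩ Set.range e
        = e '' {αL | sigm m₁ β₁ αL = g} := by
      ext α
      constructor
      · rintro ⟨hσg, αL, rfl⟩
        exact ⟨αL, by rw [Set.mem_setOf_eq, ← hσ]; exact hσg, rfl⟩
      · rintro ⟨αL, hαL, rfl⟩
        exact ⟨by rw [Set.mem_setOf_eq, hσ]; exact hαL, ⟨αL, rfl⟩⟩
    rw [finsum_mem_reindex he _ (extendC_support e c₁) hs,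
      finsum_mem_congr rfl (fun αL _ => extendC_apply he c₁ αL)]
    exact hrep g

/-- Shift of the exponent `β` by a nonnegative vector. -/
private lemma shift_rep {k : ℕ} {F : M → K} {m : Fin (k+1) → M} {β : Fin (k+1) → ℝ}
    {c : (Fin (k+1) → ℝ) → K} (hc : IsNaturalGPS c) (hrep : RepW F m β c)
    (δ : Fin (k+1) → ℝ) (hδ : ∀ i, 0 ≤ δ i) :
    IsNaturalGPS (fun α => c (α - δ)) ∧ RepW F m (β - δ) (fun α => c (α - δ)) := by
  constructor
  · constructor
    · intro α hα i
      have := hc.1 _ hα i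
      rw [Pi.sub_apply] at this
      have := hδ i
      linarith
    · intro i a ha
      refine ((hc.2 i a ha).image (fun t => t + δ i)).subset ?_
      rintro t ⟨ht, α, hα, rfl⟩
      refine ⟨(α - δ) i, ⟨?_, α - δ, hα, rfl⟩, ?_⟩
      · rw [Pi.sub_apply]; have := hδ i; linarith
      · rw [Pi.sub_apply]; ring
  · intro g
    have he : Injective (fun α' : Fin (k+1) → ℝ => α' + δ) := fun a b hab => by
      simpa using congrArg (· - δ) hab
    have hσ : ∀ α' : Fin (k+1) → ℝ, sigm m (β - δ) (α' + δ) = sigm m β α' := by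
      intro α'
      refine Finset.sum_congr rfl (fun i _ => ?_)
      congr 1
      simp only [Pi.sub_apply, Pi.add_apply]
      ring
    have hs : {α : Fin (k+1) → ℝ | sigm m (β - δ) α = g} ∩
        Set.range (fun α' : Fin (k+1) → ℝ => α' + δ)
        = (fun α' : Fin (k+1) → ℝ => α' + δ) '' {α' | sigm m β α' = g} := by
      ext α
      constructor
      · rintro ⟨hσg, -⟩
        exact ⟨α - δ, by rw [Set.mem_setOf_eq, ← hσ (α - δ), sub_add_cancel]; exact hσg,
          sub_add_cancel α δ⟩
      · rintro ⟨α', hα', rfl⟩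
        exact ⟨by rw [Set.mem_setOf_eq, hσ]; exact hα', ⟨α', rfl⟩⟩
    rw [finsum_mem_reindex he _ (fun α _ => ⟨α - δ, sub_add_cancel α δ⟩) hs]
    rw [finsum_mem_congr rfl (fun α' _ => by rw [add_sub_cancel_right])]
    exact hrep g

/-- Sum of two series represented with the same `m` and `β`. -/
private lemma add_rep {k : ℕ} {F G : M → K} {m : Fin (k+1) → M} (hm : ∀ i, m i < 0)
    {β : Fin (k+1) → ℝ} {c₁ c₂ : (Fin (k+1) → ℝ) → K} (hc₁ : IsNaturalGPS c₁)
    (hc₂ : IsNaturalGPS c₂) (h₁ : RepW F m β c₁) (h₂ : RepW G m β c₂) :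
    IsNaturalGPS (fun α => c₁ α + c₂ α) ∧ RepW (F + G) m β (fun α => c₁ α + c₂ α) := by
  have hor : ∀ α : Fin (k+1) → ℝ, c₁ α + c₂ α ≠ 0 → c₁ α ≠ 0 ∨ c₂ α ≠ 0 := by
    intro α hα
    by_contra h
    push_neg at h
    exact hα (by rw [h.1, h.2, add_zero])
  constructor
  · constructor
    · intro α hα i
      rcases hor α hα with h | h
      · exact hc₁.1 α h i
      · exact hc₂.1 α h i
    · intro i a ha
      refine ((hc₁.2 i a ha).union (hc₂.2 i a ha)).subset ?_
      rintro t ⟨ht, α, hα, rfl⟩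
      rcases hor α hα with h | h
      · exact Or.inl ⟨ht, α, h, rfl⟩
      · exact Or.inr ⟨ht, α, h, rfl⟩
  · intro g
    have hf1 : ({α : Fin (k+1) → ℝ | sigm m β α = g} ∩ support c₁).Finite := by
      refine (fib_finite hm hc₁ β g).subset ?_
      rintro α ⟨h1, h2⟩
      exact ⟨h2, h1⟩
    have hf2 : ({α : Fin (k+1) → ℝ | sigm m β α = g} ∩ support c₂).Finite := by
      refine (fib_finite hm hc₂ β g).subset ?_
      rintro α ⟨h1, h2⟩
      exact ⟨h2, h1⟩
    have := finsum_mem_add_distrib' hf1 hf2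
    rw [Pi.add_apply, h₁ g, h₂ g]
    exact this.symm

end Reindex

section Common

variable {M K : Type*} [AddCommGroup M] [LinearOrder M] [IsOrderedAddMonoid M] [Module ℝ M] [PosSMulStrictMono ℝ M] [PosSMulReflectLT ℝ M]
  [CommRing K]

private lemma common_rep {F G : M → K} (hF : IsMGenLaurent F) (hG : IsMGenLaurent G) :
    ∃ (k : ℕ) (m : Fin (k+1) → M) (βF βG : Fin (k+1) → ℝ)
      (cF cG : (Fin (k+1) → ℝ) → K),
      (∀ i, m i < 0) ∧ IsNaturalGPS cF ∧ IsNaturalGPS cG ∧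
      RepW F m βF cF ∧ RepW G m βG cG := by
  obtain ⟨k₁, m₁, β₁, c₁, hm₁, hc₁, hrep₁⟩ := hF
  obtain ⟨k₂, m₂, β₂, c₂, hm₂, hc₂, hrep₂⟩ := hG
  refine ⟨k₁ + 1 + k₂, (Fin.append m₁ m₂ : Fin (k₁ + 1 + (k₂ + 1)) → M),
    (Fin.append β₁ 0 : Fin (k₁ + 1 + (k₂ + 1)) → ℝ),
    (Fin.append 0 β₂ : Fin (k₁ + 1 + (k₂ + 1)) → ℝ), ?_⟩
  have hm : ∀ i : Fin (k₁ + 1 + (k₂ + 1)), Fin.append m₁ m₂ i < 0 := by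
    intro i
    refine Fin.addCases (m := k₁ + 1) (n := k₂ + 1) (fun j => ?_) (fun j => ?_) i
    · rw [Fin.append_left]; exact hm₁ j
    · rw [Fin.append_right]; exact hm₂ j
  have hpadF := pad_generic hc₁ hrep₁ (Fin.append m₁ m₂ : Fin (k₁ + 1 + (k₂ + 1)) → M)
    (Fin.append β₁ 0 : Fin (k₁ + 1 + (k₂ + 1)) → ℝ)
    (fun αL => (Fin.append αL 0 : Fin (k₁ + 1 + (k₂ + 1)) → ℝ)) ?_ ?_ ?_
  · have hpadG := pad_generic hc₂ hrep₂ (Fin.append m₁ m₂ : Fin (k₁ + 1 + (k₂ + 1)) → M)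
      (Fin.append 0 β₂ : Fin (k₁ + 1 + (k₂ + 1)) → ℝ)
      (fun αR => (Fin.append 0 αR : Fin (k₁ + 1 + (k₂ + 1)) → ℝ)) ?_ ?_ ?_
    · exact ⟨_, _, hm, hpadF.1, hpadG.1, hpadF.2, hpadG.2⟩
    · intro a b hab
      funext j
      have h := congrFun hab (Fin.natAdd (k₁+1) j)
      simpa only [Fin.append_right] using h
    · intro αR
      have hsum := Fin.sum_univ_add (a := k₁ + 1) (b := k₂ + 1)
        (f := fun i => ((Fin.append 0 β₂ : Fin (k₁ + 1 + (k₂ + 1)) → ℝ) i +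
          (Fin.append 0 αR : Fin (k₁ + 1 + (k₂ + 1)) → ℝ) i) •
          (Fin.append m₁ m₂ : Fin (k₁ + 1 + (k₂ + 1)) → M) i)
      refine hsum.trans ?_
      simp [Fin.append_left, Fin.append_right, sigm]
    · intro i
      refine Fin.addCases (m := k₁ + 1) (n := k₂ + 1) (fun j => ?_) (fun j => ?_) i
      · exact Or.inr (fun αR => by simp [Fin.append_left])
      · exact Or.inl ⟨j, fun αR => by simp [Fin.append_right]⟩
  · intro a b hab
    funext j
    have h := congrFun hab (Fin.castAdd (k₂+1) j)
    simpa only [Fin.append_left] using h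
  · intro αL
    have hsum := Fin.sum_univ_add (a := k₁ + 1) (b := k₂ + 1)
      (f := fun i => ((Fin.append β₁ 0 : Fin (k₁ + 1 + (k₂ + 1)) → ℝ) i +
        (Fin.append αL 0 : Fin (k₁ + 1 + (k₂ + 1)) → ℝ) i) •
        (Fin.append m₁ m₂ : Fin (k₁ + 1 + (k₂ + 1)) → M) i)
    refine hsum.trans ?_
    simp [Fin.append_left, Fin.append_right, sigm]
  · intro i
    refine Fin.addCases (m := k₁ + 1) (n := k₂ + 1) (fun j => ?_) (fun j => ?_) i
    · exact Or.inl ⟨j, fun αL => by simp [Fin.append_left]⟩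
    · exact Or.inr (fun αL => by simp [Fin.append_right])

end Common

section Product

variable {M K : Type*} [AddCommGroup M] [LinearOrder M] [IsOrderedAddMonoid M] [Module ℝ M] [PosSMulStrictMono ℝ M] [PosSMulReflectLT ℝ M]
  [CommRing K]

private lemma sigm_add {k : ℕ} (m : Fin (k+1) → M) (βF βG α₁ α₂ : Fin (k+1) → ℝ) :
    sigm m βF α₁ + sigm m βG α₂ = sigm m (βF + βG) (α₁ + α₂) := by
  rw [sigm, sigm, sigm, ← Finset.sum_add_distrib]
  refine Finset.sum_congr rfl (fun i _ => ?_)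
  rw [← add_smul]
  congr 1
  simp only [Pi.add_apply]
  ring

private lemma conv_fib_finite {k : ℕ} {cF cG : (Fin (k+1) → ℝ) → K}
    (hcF : IsNaturalGPS cF) (hcG : IsNaturalGPS cG) (α : Fin (k+1) → ℝ) :
    {α₁ : Fin (k+1) → ℝ | cF α₁ ≠ 0 ∧ cG (α - α₁) ≠ 0}.Finite := by
  refine (Set.Finite.pi (t := fun i => Tset cF i ∩ Set.Iio (α i + 1))
      (fun i => ((Tset_loc hcF i).2 (α i + 1)))).subset ?_
  rintro α₁ ⟨h1, h2⟩
  intro i _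
  refine ⟨⟨α₁, h1, rfl⟩, ?_⟩
  have hb := hcG.1 _ h2 i
  rw [Pi.sub_apply] at hb
  simp only [Set.mem_Iio]
  linarith

/-- Convolution of coefficient functions. -/
private noncomputable def convC {k : ℕ} (cF cG : (Fin (k+1) → ℝ) → K) :
    (Fin (k+1) → ℝ) → K :=
  fun α => ∑ᶠ α₁, cF α₁ * cG (α - α₁)

private lemma convC_eq_sum {k : ℕ} {cF cG : (Fin (k+1) → ℝ) → K}
    (hcF : IsNaturalGPS cF) (hcG : IsNaturalGPS cG) (α : Fin (k+1) → ℝ) :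
    convC cF cG α = ∑ α₁ ∈ (conv_fib_finite hcF hcG α).toFinset, cF α₁ * cG (α - α₁) := by
  refine finsum_eq_sum_of_support_subset _ ?_
  intro α₁ hα₁
  rw [mem_support] at hα₁
  rw [Set.Finite.coe_toFinset]
  exact ⟨fun h => hα₁ (by rw [h, zero_mul]), fun h => hα₁ (by rw [h, mul_zero])⟩

private lemma convC_ne {k : ℕ} {cF cG : (Fin (k+1) → ℝ) → K} {α : Fin (k+1) → ℝ}
    (h : convC cF cG α ≠ 0) : ∃ α₁, cF α₁ ≠ 0 ∧ cG (α - α₁) ≠ 0 := by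
  by_contra hcon
  push_neg at hcon
  refine h (finsum_eq_zero_of_forall_eq_zero fun α₁ => ?_)
  by_cases h1 : cF α₁ = 0
  · rw [h1, zero_mul]
  · rw [hcon α₁ h1, mul_zero]

private lemma convC_natural {k : ℕ} {cF cG : (Fin (k+1) → ℝ) → K}
    (hcF : IsNaturalGPS cF) (hcG : IsNaturalGPS cG) : IsNaturalGPS (convC cF cG) := by
  constructor
  · intro α hα i
    obtain ⟨α₁, h1, h2⟩ := convC_ne hα
    have := hcF.1 α₁ h1 i
    have := hcG.1 _ h2 i
    rw [Pi.sub_apply] at this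
    linarith
  · intro i a ha
    refine ((hcF.2 i a ha).add (hcG.2 i a ha)).subset ?_
    rintro t ⟨ht, α, hα, rfl⟩
    obtain ⟨α₁, h1, h2⟩ := convC_ne hα
    have hn1 : 0 ≤ α₁ i := hcF.1 α₁ h1 i
    have hn2 : 0 ≤ (α - α₁) i := hcG.1 _ h2 i
    rw [Pi.sub_apply] at hn2
    refine Set.mem_add.2 ⟨α₁ i, ⟨by linarith, α₁, h1, rfl⟩,
      (α - α₁) i, ⟨by rw [Pi.sub_apply]; linarith, α - α₁, h2, rfl⟩, ?_⟩
    rw [Pi.sub_apply]; ring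

private lemma pairP_finite {k : ℕ} {m : Fin (k+1) → M} (hm : ∀ i, m i < 0)
    {cF cG : (Fin (k+1) → ℝ) → K} (hcF : IsNaturalGPS cF) (hcG : IsNaturalGPS cG)
    (βF βG : Fin (k+1) → ℝ) (g : M) :
    {p : (Fin (k+1) → ℝ) × (Fin (k+1) → ℝ) |
      cF p.1 ≠ 0 ∧ cG p.2 ≠ 0 ∧ sigm m βF p.1 + sigm m βG p.2 = g}.Finite := by
  have hmm : ∀ j : Fin ((k+1)+(k+1)), Fin.append m m j < 0 := by
    intro j
    refine Fin.addCases (m := k+1) (n := k+1) (fun j' => ?_) (fun j' => ?_) j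
    · rw [Fin.append_left]; exact hm j'
    · rw [Fin.append_right]; exact hm j'
  have hTT : ∀ j : Fin ((k+1)+(k+1)), Loc (Fin.append (Tset cF) (Tset cG) j) := by
    intro j
    refine Fin.addCases (m := k+1) (n := k+1) (fun j' => ?_) (fun j' => ?_) j
    · rw [Fin.append_left]; exact Tset_loc hcF j'
    · rw [Fin.append_right]; exact Tset_loc hcG j'
  have hgrid := (grid_main ((k+1)+(k+1)) (Fin.append m m) (Fin.append (Tset cF) (Tset cG))
    hmm hTT).2 (g - ∑ i, βF i • m i - ∑ i, βG i • m i)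
  have heinj : Injective (fun p : (Fin (k+1) → ℝ) × (Fin (k+1) → ℝ) =>
      (Fin.append p.1 p.2 : Fin ((k+1)+(k+1)) → ℝ)) := by
    intro p p' hpp
    refine Prod.ext ?_ ?_
    · funext j
      have h := congrFun hpp (Fin.castAdd (k+1) j)
      simpa only [Fin.append_left] using h
    · funext j
      have h := congrFun hpp (Fin.natAdd (k+1) j)
      simpa only [Fin.append_right] using h
  refine (hgrid.preimage heinj.injOn).subset ?_
  rintro ⟨p1, p2⟩ ⟨h1, h2, h3⟩
  refine Set.mem_preimage.2 ⟨?_, ?_⟩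
  · intro j
    refine Fin.addCases (m := k+1) (n := k+1) (fun j' => ?_) (fun j' => ?_) j
    · simp only [Fin.append_left]; exact ⟨p1, h1, rfl⟩
    · simp only [Fin.append_right]; exact ⟨p2, h2, rfl⟩
  · have hsum := Fin.sum_univ_add (a := k+1) (b := k+1)
      (f := fun j => (Fin.append p1 p2 : Fin ((k+1)+(k+1)) → ℝ) j •
        (Fin.append m m : Fin ((k+1)+(k+1)) → M) j)
    refine hsum.trans ?_
    simp only [Fin.append_left, Fin.append_right]
    rw [sigm_decomp, sigm_decomp] at h3
    rw [← h3]
    abel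

private lemma mul_rep {k : ℕ} {F G : M → K} {m : Fin (k+1) → M} (hm : ∀ i, m i < 0)
    {βF βG : Fin (k+1) → ℝ} {cF cG : (Fin (k+1) → ℝ) → K}
    (hcF : IsNaturalGPS cF) (hcG : IsNaturalGPS cG)
    (hF : RepW F m βF cF) (hG : RepW G m βG cG) :
    RepW (fun g => ∑ᶠ q : M, F q * G (g - q)) m (βF + βG) (convC cF cG) := by
  intro g
  have hPfin := pairP_finite hm hcF hcG βF βG g
  set P := {p : (Fin (k+1) → ℝ) × (Fin (k+1) → ℝ) |
      cF p.1 ≠ 0 ∧ cG p.2 ≠ 0 ∧ sigm m βF p.1 + sigm m βG p.2 = g} with hP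
  have hQfin := antidiag_finite (M := M) (Bset_isPWO hm hcF βF) (Bset_isPWO hm hcG βG) g
  -- the left-hand side as a finite sum over pairs
  have hL1 : ∑ᶠ q : M, F q * G (g - q) = ∑ q ∈ hQfin.toFinset, F q * G (g - q) := by
    refine finsum_eq_sum_of_support_subset _ ?_
    intro q hq
    rw [mem_support] at hq
    have h1 : F q ≠ 0 := fun h => hq (by rw [h, zero_mul])
    have h2 : G (g - q) ≠ 0 := fun h => hq (by rw [h, mul_zero])
    rw [Set.Finite.coe_toFinset]
    exact ⟨hF.support_sub q h1, hG.support_sub (g - q) h2⟩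
  have hL2 : ∀ q : M, F q * G (g - q) =
      ∑ p ∈ (fib_finite hm hcF βF q).toFinset ×ˢ (fib_finite hm hcG βG (g - q)).toFinset,
        cF p.1 * cG p.2 := by
    intro q
    rw [hF.value' hm hcF q, hG.value' hm hcG (g - q), Finset.sum_mul_sum, Finset.sum_product]
  have hdisj1 : (↑hQfin.toFinset : Set M).PairwiseDisjoint
      (fun q => (fib_finite hm hcF βF q).toFinset ×ˢ (fib_finite hm hcG βG (g - q)).toFinset) := by
    intro q _ q' _ hne
    refine Finset.disjoint_left.2 (fun p hp hp' => hne ?_)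
    rw [Finset.mem_product, Set.Finite.mem_toFinset, Set.Finite.mem_toFinset] at hp hp'
    rw [← hp.1.2, ← hp'.1.2]
  have hunion1 : hQfin.toFinset.biUnion
      (fun q => (fib_finite hm hcF βF q).toFinset ×ˢ (fib_finite hm hcG βG (g - q)).toFinset)
      = hPfin.toFinset := by
    ext p
    rw [Finset.mem_biUnion, Set.Finite.mem_toFinset]
    constructor
    · rintro ⟨q, hq, hp⟩
      rw [Finset.mem_product, Set.Finite.mem_toFinset, Set.Finite.mem_toFinset] at hp
      refine ⟨hp.1.1, hp.2.1, ?_⟩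
      rw [hp.1.2, hp.2.2]
      abel
    · rintro ⟨h1, h2, h3⟩
      refine ⟨sigm m βF p.1, ?_, ?_⟩
      · rw [Set.Finite.mem_toFinset]
        exact ⟨⟨p.1, h1, rfl⟩, ⟨p.2, h2, eq_sub_of_add_eq' h3⟩⟩
      · rw [Finset.mem_product, Set.Finite.mem_toFinset, Set.Finite.mem_toFinset]
        exact ⟨⟨h1, rfl⟩, ⟨h2, eq_sub_of_add_eq' h3⟩⟩
  have hLHS : ∑ᶠ q : M, F q * G (g - q) = ∑ p ∈ hPfin.toFinset, cF p.1 * cG p.2 := by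
    rw [hL1, Finset.sum_congr rfl (fun q _ => hL2 q), ← hunion1, Finset.sum_biUnion hdisj1]
  -- the right-hand side as the same finite sum over pairs
  have hRfin : ((fun p : (Fin (k+1) → ℝ) × (Fin (k+1) → ℝ) => p.1 + p.2) '' P).Finite :=
    hPfin.image _
  have hR1 : ∑ᶠ α ∈ {α : Fin (k+1) → ℝ | sigm m (βF + βG) α = g}, convC cF cG α
      = ∑ α ∈ hRfin.toFinset, convC cF cG α := by
    refine finsum_mem_eq_sum_of_inter_support_eq _ ?_
    ext α
    simp only [Set.mem_inter_iff, Set.mem_setOf_eq, Finset.coe_sort_coe,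
      Set.Finite.coe_toFinset, mem_support]
    constructor
    · rintro ⟨hσ, hc⟩
      obtain ⟨α₁, h1, h2⟩ := convC_ne hc
      refine ⟨⟨(α₁, α - α₁), ⟨h1, h2, ?_⟩, by simp⟩, hc⟩
      rw [sigm_add]
      rw [show α₁ + (α - α₁) = α by ring]
      exact hσ
    · rintro ⟨⟨p, hp, rfl⟩, hc⟩
      exact ⟨by rw [← sigm_add]; exact hp.2.2, hc⟩
  have hR2 : ∀ α : Fin (k+1) → ℝ, convC cF cG α =
      ∑ p ∈ (conv_fib_finite hcF hcG α).toFinset.image (fun α₁ => (α₁, α - α₁)),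
        cF p.1 * cG p.2 := by
    intro α
    rw [convC_eq_sum hcF hcG α]
    refine (Finset.sum_image (g := fun α₁ => (α₁, α - α₁))
      (f := fun p : (Fin (k+1) → ℝ) × (Fin (k+1) → ℝ) => cF p.1 * cG p.2) ?_).symm
    intro x _ y _ hxy
    exact congrArg Prod.fst hxy
  have hdisj2 : (↑hRfin.toFinset : Set (Fin (k+1) → ℝ)).PairwiseDisjoint
      (fun α => (conv_fib_finite hcF hcG α).toFinset.image (fun α₁ => (α₁, α - α₁))) := by
    intro α _ α' _ hne
    refine Finset.disjoint_left.2 (fun p hp hp' => hne ?_)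
    rw [Finset.mem_image] at hp hp'
    obtain ⟨x, _, rfl⟩ := hp
    obtain ⟨y, _, hy⟩ := hp'
    have h1 : y = x := congrArg Prod.fst hy
    subst h1
    have h2 := congrArg Prod.snd hy
    simp only at h2
    have := congrArg (fun z => z + y) h2
    have h3 : α' = α := by simpa [sub_add_cancel] using this
    exact h3.symm
  have hunion2 : hRfin.toFinset.biUnion
      (fun α => (conv_fib_finite hcF hcG α).toFinset.image (fun α₁ => (α₁, α - α₁)))
      = hPfin.toFinset := by
    ext p
    rw [Finset.mem_biUnion, Set.Finite.mem_toFinset]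
    constructor
    · rintro ⟨α, hα, hp⟩
      rw [Set.Finite.mem_toFinset] at hα
      obtain ⟨q, hq, rfl⟩ := hα
      rw [Finset.mem_image] at hp
      obtain ⟨α₁, hα₁, rfl⟩ := hp
      rw [Set.Finite.mem_toFinset] at hα₁
      refine ⟨hα₁.1, hα₁.2, ?_⟩
      rw [sigm_add]
      rw [show α₁ + (q.1 + q.2 - α₁) = q.1 + q.2 by ring, ← sigm_add]
      exact hq.2.2
    · rintro ⟨h1, h2, h3⟩
      refine ⟨p.1 + p.2, ?_, ?_⟩
      · rw [Set.Finite.mem_toFinset]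
        exact ⟨p, ⟨h1, h2, h3⟩, rfl⟩
      · rw [Finset.mem_image]
        refine ⟨p.1, ?_, ?_⟩
        · rw [Set.Finite.mem_toFinset]
          exact ⟨h1, by rw [show p.1 + p.2 - p.1 = p.2 by ring]; exact h2⟩
        · exact Prod.ext rfl (by rw [show p.1 + p.2 - p.1 = p.2 by ring])
  have hRHS : ∑ᶠ α ∈ {α : Fin (k+1) → ℝ | sigm m (βF + βG) α = g}, convC cF cG α
      = ∑ p ∈ hPfin.toFinset, cF p.1 * cG p.2 := by
    rw [hR1, Finset.sum_congr rfl (fun α _ => hR2 α), ← hunion2, Finset.sum_biUnion hdisj2]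
  show ∑ᶠ q : M, F q * G (g - q)
      = ∑ᶠ α ∈ {α : Fin (k+1) → ℝ | sigm m (βF + βG) α = g}, convC cF cG α
  rw [hLHS, hRHS]

end Product

/-- The set of `M`-generalized Laurent series over `K` is a subring of the Hahn series
ring `K[[M]]`: it is closed under addition, and closed under multiplication (the
Hahn-series convolution product, which is well defined: for each monomial `g` only
finitely many pairs contribute). -/
theorem stmt6 {M K : Type*} [AddCommGroup M] [LinearOrder M] [IsOrderedAddMonoid M] [Module ℝ M] [PosSMulStrictMono ℝ M] [PosSMulReflectLT ℝ M]
    [CommRing K] (F G : M → K) (hF : IsMGenLaurent F) (hG : IsMGenLaurent G) :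
    IsMGenLaurent (F + G) ∧
    (∀ g : M, {q : M | F q ≠ 0 ∧ G (g - q) ≠ 0}.Finite) ∧
    IsMGenLaurent (fun g => ∑ᶠ q : M, F q * G (g - q)) := by
  obtain ⟨k, m, βF, βG, cF, cG, hm, hcF, hcG, hrF, hrG⟩ := common_rep hF hG
  refine ⟨?_, ?_, ?_⟩
  · -- closure under addition
    set β : Fin (k+1) → ℝ := fun i => min (βF i) (βG i) with hβ
    have hδF : ∀ i, 0 ≤ (fun i => βF i - β i) i := fun i => by
      simp only [hβ]; have := min_le_left (βF i) (βG i); linarith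
    have hδG : ∀ i, 0 ≤ (fun i => βG i - β i) i := fun i => by
      simp only [hβ]; have := min_le_right (βF i) (βG i); linarith
    have h1 := shift_rep hcF hrF (fun i => βF i - β i) hδF
    have h2 := shift_rep hcG hrG (fun i => βG i - β i) hδG
    have e1 : βF - (fun i => βF i - β i) = β := funext fun i => by
      simp only [Pi.sub_apply]; ring
    have e2 : βG - (fun i => βG i - β i) = β := funext fun i => by
      simp only [Pi.sub_apply]; ring
    rw [e1] at h1
    rw [e2] at h2
    have h3 := add_rep hm h1.1 h2.1 h1.2 h2.2
    exact ⟨k, m, β, _, hm, h3.1, h3.2⟩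
  · -- finiteness of the convolution antidiagonals
    intro g
    refine (antidiag_finite (M := M) (Bset_isPWO hm hcF βF) (Bset_isPWO hm hcG βG) g).subset ?_
    rintro q ⟨hq1, hq2⟩
    exact ⟨hrF.support_sub q hq1, hrG.support_sub (g - q) hq2⟩
  · -- closure under multiplication
    exact ⟨k, m, βF + βG, convC cF cG, hm, convC_natural hcF hcG,
      mul_rep hm hcF hcG hrF hrG⟩
end

section
/- Let F be an M-generalized power series over a commutative ring K with generating monomials m₀,...,m_k, with small leading monomial, and let P = Σ_ν a_ν T^ν be a formal power series in one variable over K. Then the composition P ∘ F := Σ_ν a_ν F^ν is a well-defined M-generalized power series with the same generating monomials m₀,...,m_k. If moreover supp(F) is M-natural and the powers lm(F)^ν are coinitial in M, then P ∘ F has M-natural support. -/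
open scoped Classical

/-- Convolution product of coefficient functions of generalized power series. -/
noncomputable def cMul {K : Type*} [CommRing K] {k : ℕ}
    (c d : (Fin (k + 1) → ℝ) → K) : (Fin (k + 1) → ℝ) → K :=
  fun α => ∑ᶠ β : Fin (k + 1) → ℝ, c β * d (α - β)

/-- Convolution powers `G^ν` of a generalized power series. -/
noncomputable def cPow {K : Type*} [CommRing K] {k : ℕ}
    (c : (Fin (k + 1) → ℝ) → K) : ℕ → (Fin (k + 1) → ℝ) → K
  | 0 => fun α => if α = 0 then 1 else 0
  | n + 1 => cMul c (cPow c n)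

open scoped Pointwise




lemma sumSetFinite (A : Finset ℝ) : ∀ p : ℕ,
    {x : ℝ | ∃ l : Multiset ℝ, (∀ y ∈ l, y ∈ A) ∧ Multiset.card l = p ∧ l.sum = x}.Finite := by
  intro p
  induction p with
  | zero =>
    refine Set.Finite.subset (Set.finite_singleton 0) ?_
    rintro x ⟨l, -, hcard, hsum⟩
    rw [Multiset.card_eq_zero] at hcard
    simp [hcard] at hsum
    simp [← hsum]
  | succ p ih =>
    refine Set.Finite.subset ((A.finite_toSet.biUnion (fun v _ => ih.image (v + ·)))) ?_
    rintro x ⟨l, hmem, hcard, hsum⟩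
    have hl : l ≠ 0 := by
      intro h; rw [h] at hcard; simp at hcard
    obtain ⟨v, hv⟩ := Multiset.exists_mem_of_ne_zero hl
    obtain ⟨l', rfl⟩ := Multiset.exists_cons_of_mem hv
    refine Set.mem_biUnion (hmem v (Multiset.mem_cons_self _ _)) ?_
    refine ⟨l'.sum, ⟨l', fun y hy => hmem y (Multiset.mem_cons_of_mem hy), ?_, rfl⟩, ?_⟩
    · simpa using hcard
    · simp [← hsum, Multiset.sum_cons]

lemma natClosure (V : Set ℝ) (hV0 : ∀ v ∈ V, 0 ≤ v)
    (hVf : ∀ a : ℝ, {v : ℝ | v ∈ V ∧ v < a}.Finite) (a : ℝ) :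
    {x : ℝ | x ∈ AddSubmonoid.closure V ∧ x < a}.Finite := by
  set A : Finset ℝ := ((hVf a).toFinset.filter (fun v => 0 < v)) with hA
  have hApos : ∀ v ∈ A, 0 < v := by
    intro v hv; rw [hA, Finset.mem_filter] at hv; exact hv.2
  have hAmem : ∀ v, v ∈ V → 0 < v → v < a → v ∈ A := by
    intro v h1 h2 h3
    rw [hA, Finset.mem_filter, Set.Finite.mem_toFinset]
    exact ⟨⟨h1, h3⟩, h2⟩
  set δ : ℝ := if h : A.Nonempty then A.min' h else 1 with hδ
  have hδpos : 0 < δ := by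
    rw [hδ]; split
    · next h => exact hApos _ (A.min'_mem h)
    · norm_num
  have hδle : ∀ v ∈ A, δ ≤ v := by
    intro v hv; rw [hδ, dif_pos ⟨v, hv⟩]; exact A.min'_le v hv
  set N : ℕ := ⌈a / δ⌉₊ with hN
  refine Set.Finite.subset (Set.Finite.biUnion (Set.finite_Iic N) (fun p _ => sumSetFinite A p)) ?_
  rintro x ⟨hx, hxa⟩
  obtain ⟨l, hlmem, hlsum⟩ := AddSubmonoid.exists_multiset_of_mem_closure hx
  -- positive part
  set l' : Multiset ℝ := l.filter (fun y => 0 < y) with hl'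
  have hsum' : l'.sum = x := by
    have h1 := Multiset.sum_filter_add_sum_filter_not (p := fun y => 0 < y) (s := l)
    have hz : (l.filter (fun y => ¬ 0 < y)).sum = 0 := by
      apply Multiset.sum_eq_zero
      intro y hy
      rw [Multiset.mem_filter] at hy
      exact le_antisymm (not_lt.1 hy.2) (hV0 y (hlmem y hy.1))
    rw [hz, add_zero] at h1
    rw [hl', h1, hlsum]
  have hl'mem : ∀ y ∈ l', y ∈ A := by
    intro y hy
    rw [hl', Multiset.mem_filter] at hy
    refine hAmem y (hlmem y hy.1) hy.2 ?_
    calc y ≤ l'.sum := Multiset.single_le_sum (fun z hz => by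
            rw [hl', Multiset.mem_filter] at hz; exact le_of_lt hz.2) y (Multiset.mem_filter.2 hy)
      _ = x := hsum'
      _ < a := hxa
  have hcard : Multiset.card l' ≤ N := by
    have h2 : (Multiset.card l') • δ ≤ l'.sum := Multiset.card_nsmul_le_sum (fun y hy => hδle y (hl'mem y hy))
    rw [hsum'] at h2
    have h3 : (Multiset.card l' : ℝ) * δ < a := lt_of_le_of_lt (by rw [nsmul_eq_mul] at h2; exact h2) hxa
    have h4 : (Multiset.card l' : ℝ) < a / δ := (lt_div_iff₀ hδpos).2 h3
    exact_mod_cast le_of_lt (lt_of_lt_of_le h4 (Nat.le_ceil _))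
  refine Set.mem_biUnion (Set.mem_Iic.2 hcard) ?_
  exact ⟨l', hl'mem, rfl, hsum'⟩

lemma natPWO {k : ℕ} (S : Set (Fin (k + 1) → ℝ))
    (h0 : ∀ α ∈ S, ∀ i, 0 ≤ α i)
    (hfin : ∀ i, ∀ a : ℝ, 0 < a → {t : ℝ | t < a ∧ ∃ α ∈ S, α i = t}.Finite) :
    S.IsPWO := by
  classical
  set W : Fin (k + 1) → Set ℝ := fun i => {t : ℝ | t = 0 ∨ ∃ α ∈ S, α i = t} with hW
  have hWnn : ∀ i, ∀ t ∈ W i, 0 ≤ t := by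
    rintro i t (rfl | ⟨α, hα, rfl⟩)
    · exact le_refl 0
    · exact h0 α hα i
  have hWwf : ∀ i, (W i).IsWF := by
    intro i
    rw [Set.isWF_iff_no_descending_seq]
    intro f hf hmem
    have hnn : ∀ n, 0 ≤ f n := fun n => hWnn i (f n) (hmem n)
    have hb : ∀ n, f n < f 0 + 1 := fun n => by
      rcases Nat.eq_zero_or_pos n with rfl | hn
      · linarith
      · have := hf hn
        linarith [this]
    have hfin' : {t : ℝ | t < f 0 + 1 ∧ ∃ α ∈ S, α i = t}.Finite :=
      hfin i (f 0 + 1) (by linarith [hnn 0])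
    have hsub : Set.range f ⊆ insert 0 {t : ℝ | t < f 0 + 1 ∧ ∃ α ∈ S, α i = t} := by
      rintro t ⟨n, rfl⟩
      rcases hmem n with h | h
      · exact Set.mem_insert_iff.2 (Or.inl h)
      · exact Set.mem_insert_iff.2 (Or.inr ⟨hb n, h⟩)
    have : (Set.range f).Finite := (hfin'.insert 0).subset hsub
    exact Set.infinite_range_of_injective hf.injective this
  haveI : ∀ i, IsWellFounded ↥(W i) (· < ·) := fun i => ⟨hWwf i⟩
  haveI : ∀ i, IsWellOrder ↥(W i) (· < ·) := fun i => { }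
  have hPi : Set.IsPWO (Set.univ : Set (∀ i : Fin (k + 1), ↥(W i))) := by
    simpa using Set.IsPWO.pi (s := fun i => (Set.univ : Set ↥(W i))) (fun i => (Set.isWF_univ_iff.2 inferInstance).isPWO)
  have hmono : Monotone (fun (x : ∀ i : Fin (k + 1), ↥(W i)) => (fun i => (x i : ℝ))) := by
    intro x y hxy i
    exact Subtype.coe_le_coe.2 (hxy i)
  refine ((hPi.image_of_monotone hmono).mono ?_)
  intro α hα
  refine ⟨fun i => ⟨α i, Or.inr ⟨α, hα, rfl⟩⟩, Set.mem_univ _, rfl⟩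

section phi
variable {M : Type*} [AddCommGroup M] [LinearOrder M] [IsOrderedAddMonoid M] [Module ℝ M] [PosSMulStrictMono ℝ M]
variable {k : ℕ}

def Phi8 (m : Fin (k + 1) → M) (α : Fin (k + 1) → ℝ) : M := ∑ i, α i • m i

lemma Phi8_add (m : Fin (k + 1) → M) (α β : Fin (k + 1) → ℝ) :
    Phi8 m (α + β) = Phi8 m α + Phi8 m β := by
  simp [Phi8, add_smul, Finset.sum_add_distrib]

lemma Phi8_zero (m : Fin (k + 1) → M) : Phi8 m 0 = 0 := by simp [Phi8]

lemma Phi8_neg (m : Fin (k + 1) → M) (hsmall : ∀ i, m i < 0) {α : Fin (k + 1) → ℝ}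
    (hα : ∀ i, 0 ≤ α i) (hne : α ≠ 0) : Phi8 m α < 0 := by
  obtain ⟨j, hj⟩ : ∃ j, α j ≠ 0 := by
    by_contra h
    push_neg at h
    exact hne (funext h)
  have hterm : ∀ i ∈ Finset.univ, α i • m i ≤ (0 : M) := by
    intro i _
    calc α i • m i ≤ α i • 0 := smul_le_smul_of_nonneg_left (le_of_lt (hsmall i)) (hα i)
      _ = 0 := smul_zero _
  have hstrict : α j • m j < 0 := by
    have := smul_lt_smul_of_pos_left (hsmall j) (lt_of_le_of_ne (hα j) (Ne.symm hj))
    simpa using this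
  calc Phi8 m α < ∑ _i : Fin (k + 1), (0 : M) :=
        Finset.sum_lt_sum hterm ⟨j, Finset.mem_univ j, hstrict⟩
    _ = 0 := by simp

lemma Phi8_strict (m : Fin (k + 1) → M) (hsmall : ∀ i, m i < 0) {α β : Fin (k + 1) → ℝ}
    (hle : α ≤ β) (hne : α ≠ β) : Phi8 m β < Phi8 m α := by
  have h1 : β = α + (β - α) := by abel
  have h2 : Phi8 m β = Phi8 m α + Phi8 m (β - α) := by
    rw [← Phi8_add]; exact congrArg _ h1
  have h3 : Phi8 m (β - α) < 0 := by
    refine Phi8_neg m hsmall (fun i => ?_) (fun h => hne ?_)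
    · simpa using hle i
    · have : β - α = 0 := h
      have := sub_eq_zero.1 this
      exact this.symm
  calc Phi8 m β = Phi8 m α + Phi8 m (β - α) := h2
    _ < Phi8 m α + 0 := add_lt_add_right h3 _
    _ = Phi8 m α := add_zero _

lemma fiber8_finite (m : Fin (k + 1) → M) (hsmall : ∀ i, m i < 0)
    {T : Set (Fin (k + 1) → ℝ)} (hT : T.IsPWO) (g : M) :
    {α | α ∈ T ∧ Phi8 m α = g}.Finite := by
  by_contra hinf
  have hinf' : {α | α ∈ T ∧ Phi8 m α = g}.Infinite := hinf
  let f := Set.Infinite.natEmbedding _ hinf'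
  obtain ⟨a, b, hab, hle⟩ := hT (fun n => ⟨(f n : Fin (k + 1) → ℝ), (f n).2.1⟩)
  have hne : ((f a : Fin (k + 1) → ℝ)) ≠ (f b : Fin (k + 1) → ℝ) := by
    intro h
    exact absurd (f.injective (Subtype.coe_injective h)) (Nat.ne_of_lt hab)
  have := Phi8_strict m hsmall (α := (f a : Fin (k + 1) → ℝ)) (β := (f b : Fin (k + 1) → ℝ)) hle hne
  rw [(f a).2.2, (f b).2.2] at this
  exact lt_irrefl g this

end phi

section conv
set_option linter.unusedSectionVars false
variable {K : Type*} [CommRing K] {k : ℕ}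

lemma cMul_ne {c d : (Fin (k + 1) → ℝ) → K} {α : Fin (k + 1) → ℝ} (h : cMul c d α ≠ 0) :
    ∃ β, c β ≠ 0 ∧ d (α - β) ≠ 0 := by
  by_contra h'
  push_neg at h'
  apply h
  apply finsum_eq_zero_of_forall_eq_zero
  intro β
  rcases eq_or_ne (c β) 0 with h0 | h0
  · rw [h0, zero_mul]
  · rw [h' β h0, mul_zero]

lemma cPow_zero_ne {c : (Fin (k + 1) → ℝ) → K} {α : Fin (k + 1) → ℝ}
    (h : cPow c 0 α ≠ 0) : α = 0 := by
  by_contra h'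
  rw [show cPow c 0 α = if α = 0 then 1 else 0 from rfl, if_neg h'] at h
  exact h rfl

lemma cPow_nonneg {c : (Fin (k + 1) → ℝ) → K} (hc1 : ∀ α, c α ≠ 0 → ∀ i, 0 ≤ α i) :
    ∀ ν (α : Fin (k + 1) → ℝ), cPow c ν α ≠ 0 → ∀ i, 0 ≤ α i := by
  intro ν
  induction ν with
  | zero => intro α h i; rw [cPow_zero_ne h]; exact le_refl 0
  | succ ν ih =>
    intro α h i
    obtain ⟨β, hβ, hγ⟩ := cMul_ne h
    have h1 := hc1 β hβ i
    have h2 := ih _ hγ i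
    have h3 : (α - β) i = α i - β i := rfl
    rw [h3] at h2
    linarith

lemma cPow_coord_closure {c : (Fin (k + 1) → ℝ) → K} (i : Fin (k + 1)) :
    ∀ ν (α : Fin (k + 1) → ℝ), cPow c ν α ≠ 0 →
      α i ∈ AddSubmonoid.closure {t : ℝ | ∃ β, c β ≠ 0 ∧ β i = t} := by
  intro ν
  induction ν with
  | zero => intro α h; rw [cPow_zero_ne h]; exact AddSubmonoid.zero_mem _
  | succ ν ih =>
    intro α h
    obtain ⟨β, hβ, hγ⟩ := cMul_ne h
    have h1 : β i ∈ AddSubmonoid.closure {t : ℝ | ∃ β, c β ≠ 0 ∧ β i = t} :=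
      AddSubmonoid.subset_closure ⟨β, hβ, rfl⟩
    have h2 := ih _ hγ
    have h3 : α i = β i + (α - β) i := by
      have : (α - β) i = α i - β i := rfl
      rw [this]; ring
    rw [h3]
    exact AddSubmonoid.add_mem _ h1 h2

lemma cPow_mem_closure {c : (Fin (k + 1) → ℝ) → K} :
    ∀ ν (α : Fin (k + 1) → ℝ), cPow c ν α ≠ 0 →
      α ∈ AddSubmonoid.closure (Function.support c) := by
  intro ν
  induction ν with
  | zero => intro α h; rw [cPow_zero_ne h]; exact AddSubmonoid.zero_mem _
  | succ ν ih =>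
    intro α h
    obtain ⟨β, hβ, hγ⟩ := cMul_ne h
    have h3 : α = β + (α - β) := by abel
    rw [h3]
    exact AddSubmonoid.add_mem _ (AddSubmonoid.subset_closure hβ) (ih _ hγ)

lemma cMul_supp {c d : (Fin (k + 1) → ℝ) → K} :
    Function.support (cMul c d) ⊆ Function.support c + Function.support d := by
  intro α h
  obtain ⟨β, hβ, hγ⟩ := cMul_ne h
  have h3 : β + (α - β) = α := by
    funext i
    simp
  exact ⟨β, hβ, α - β, hγ, h3⟩

lemma cPow_supp_pwo {c : (Fin (k + 1) → ℝ) → K} (hS : (Function.support c).IsPWO) :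
    ∀ ν, (Function.support (cPow c ν)).IsPWO := by
  intro ν
  induction ν with
  | zero =>
    refine ((Set.finite_singleton (0 : Fin (k + 1) → ℝ)).isPWO).mono ?_
    intro α h
    exact cPow_zero_ne h
  | succ ν ih => exact (hS.add ih).mono cMul_supp

end conv

section eps
set_option linter.unusedSectionVars false
variable {K : Type*} [CommRing K] {k : ℕ}

lemma eps_exists {c : (Fin (k + 1) → ℝ) → K} (hc : IsNaturalGPS c) (hc0 : c 0 = 0) :
    ∃ ε : ℝ, 0 < ε ∧ ∀ β, c β ≠ 0 → ε ≤ ∑ i, β i := by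
  classical
  set B : Fin (k + 1) → Finset ℝ :=
    fun i => ((hc.2 i 1 one_pos).toFinset.filter (fun v => 0 < v)) with hB
  set δ : Fin (k + 1) → ℝ := fun i => if h : (B i).Nonempty then (B i).min' h else 1 with hδ
  have hδpos : ∀ i, 0 < δ i := by
    intro i
    rw [hδ]
    dsimp only
    split
    · next h =>
      have := (B i).min'_mem h
      exact (Finset.mem_filter.1 this).2
    · norm_num
  have hδle : ∀ i v, v ∈ B i → δ i ≤ v := by
    intro i v hv
    rw [hδ]
    dsimp only
    rw [dif_pos ⟨v, hv⟩]
    exact (B i).min'_le v hv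
  set ε : ℝ := min (Finset.univ.inf' Finset.univ_nonempty δ) 1 with hε
  refine ⟨ε, lt_min (by
    rcases Finset.exists_mem_eq_inf' (Finset.univ_nonempty) δ with ⟨j, _, hj⟩
    rw [hj]; exact hδpos j) one_pos, ?_⟩
  intro β hβ
  have hβnn : ∀ i, 0 ≤ β i := hc.1 β hβ
  obtain ⟨j, hj⟩ : ∃ j, β j ≠ 0 := by
    by_contra h
    push_neg at h
    exact hβ (by rw [funext h]; exact hc0)
  have hβj : 0 < β j := lt_of_le_of_ne (hβnn j) (Ne.symm hj)
  have hsum : β j ≤ ∑ i, β i :=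
    Finset.single_le_sum (fun i _ => hβnn i) (Finset.mem_univ j)
  rcases lt_or_ge (β j) 1 with h1 | h1
  · have hmem : β j ∈ B j := by
      rw [hB, Finset.mem_filter, Set.Finite.mem_toFinset]
      exact ⟨⟨h1, β, hβ, rfl⟩, hβj⟩
    calc ε ≤ Finset.univ.inf' Finset.univ_nonempty δ := min_le_left _ _
      _ ≤ δ j := Finset.inf'_le δ (Finset.mem_univ j)
      _ ≤ β j := hδle j _ hmem
      _ ≤ ∑ i, β i := hsum
  · calc ε ≤ 1 := min_le_right _ _
      _ ≤ β j := h1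
      _ ≤ ∑ i, β i := hsum

lemma nuFinite {c : (Fin (k + 1) → ℝ) → K} (hc : IsNaturalGPS c) (hc0 : c 0 = 0)
    (α : Fin (k + 1) → ℝ) : {ν : ℕ | cPow c ν α ≠ 0}.Finite := by
  obtain ⟨ε, hεpos, hε⟩ := eps_exists hc hc0
  have hpow : ∀ ν (α : Fin (k + 1) → ℝ), cPow c ν α ≠ 0 → (ν : ℝ) * ε ≤ ∑ i, α i := by
    intro ν
    induction ν with
    | zero =>
      intro α h
      rw [cPow_zero_ne h]
      simp
    | succ ν ih =>
      intro α h
      obtain ⟨β, hβ, hγ⟩ := cMul_ne h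
      have h1 := hε β hβ
      have h2 := ih _ hγ
      have h3 : ∑ i, (α - β) i = ∑ i, α i - ∑ i, β i := by
        simp [Finset.sum_sub_distrib]
      rw [h3] at h2
      push_cast
      linarith
  refine (Set.finite_Iic ⌈(∑ i, α i) / ε⌉₊).subset ?_
  intro ν hν
  have h1 := hpow ν α hν
  have h2 : (ν : ℝ) ≤ (∑ i, α i) / ε := (le_div_iff₀ hεpos).2 h1
  exact_mod_cast h2.trans (Nat.le_ceil _)

end eps

section push
set_option linter.unusedSectionVars false
variable {M K : Type*} [AddCommGroup M] [LinearOrder M] [IsOrderedAddMonoid M] [Module ℝ M] [PosSMulStrictMono ℝ M]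
  [CommRing K] {k : ℕ}

lemma push_eq_sum (m : Fin (k + 1) → M) (hsmall : ∀ i, m i < 0)
    (d : (Fin (k + 1) → ℝ) → K) {T : Set (Fin (k + 1) → ℝ)} (hT : T.IsPWO)
    (hsupp : Function.support d ⊆ T) (g : M) :
    (∑ᶠ (α) (_ : Phi8 m α = g), d α) =
      ∑ α ∈ (fiber8_finite m hsmall hT g).toFinset, d α := by
  have h1 : ∀ α : Fin (k + 1) → ℝ, (∑ᶠ _ : Phi8 m α = g, d α) =
      if Phi8 m α = g then d α else 0 := fun α => finsum_eq_if
  rw [finsum_congr h1]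
  rw [finsum_eq_sum_of_support_subset]
  · refine Finset.sum_congr rfl (fun α hα => ?_)
    rw [Set.Finite.mem_toFinset] at hα
    rw [if_pos hα.2]
  · intro α hα
    rw [Function.mem_support] at hα
    by_cases h : Phi8 m α = g
    · rw [if_pos h] at hα
      simp only [Finset.coe_sort_coe, Set.Finite.coe_toFinset, Set.mem_setOf_eq]
      exact ⟨hsupp hα, h⟩
    · rw [if_neg h] at hα
      exact absurd rfl hα

lemma push_mul_ne (m : Fin (k + 1) → M) (hsmall : ∀ i, m i < 0)
    {c d : (Fin (k + 1) → ℝ) → K} (hcS : (Function.support c).IsPWO)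
    (hd : (Function.support d).IsPWO) (g : M)
    (h : (∑ᶠ (α) (_ : Phi8 m α = g), cMul c d α) ≠ 0) :
    ∃ g', (∑ᶠ (β) (_ : Phi8 m β = g'), c β) ≠ 0 ∧
      (∑ᶠ (γ) (_ : Phi8 m γ = g - g'), d γ) ≠ 0 := by
  classical
  have hSU : (Function.support c + Function.support d).IsPWO := hcS.add hd
  set P : Set ((Fin (k + 1) → ℝ) × (Fin (k + 1) → ℝ)) :=
    {p | c p.1 ≠ 0 ∧ d p.2 ≠ 0 ∧ Phi8 m p.1 + Phi8 m p.2 = g} with hP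
  have hPfin : P.Finite := by
    refine ((fiber8_finite m hsmall hSU g).biUnion
      (fun α _ => Set.AddAntidiagonal.finite_of_isPWO hcS hd α)).subset ?_
    rintro ⟨β, γ⟩ ⟨h1, h2, h3⟩
    have hm : β + γ ∈ {α | α ∈ Function.support c + Function.support d ∧ Phi8 m α = g} :=
      ⟨Set.add_mem_add h1 h2, by rw [Phi8_add]; exact h3⟩
    exact Set.mem_biUnion hm ⟨h1, h2, rfl⟩
  have hBfin : ∀ α : Fin (k + 1) → ℝ, {β | c β ≠ 0 ∧ d (α - β) ≠ 0}.Finite := by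
    intro α
    refine ((Set.AddAntidiagonal.finite_of_isPWO hcS hd α).image Prod.fst).subset ?_
    rintro β ⟨h1, h2⟩
    refine ⟨(β, α - β), ⟨h1, h2, ?_⟩, rfl⟩
    funext i; simp
  -- LHS as a sum over pairs
  have hL : (∑ᶠ (α) (_ : Phi8 m α = g), cMul c d α) =
      ∑ p ∈ hPfin.toFinset, c p.1 * d p.2 := by
    rw [push_eq_sum m hsmall (cMul c d) hSU cMul_supp g]
    have hMul : ∀ α : Fin (k + 1) → ℝ,
        cMul c d α = ∑ β ∈ (hBfin α).toFinset, c β * d (α - β) := by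
      intro α
      refine finsum_eq_sum_of_support_subset _ ?_
      intro β hβ
      rw [Function.mem_support] at hβ
      have h1 : c β ≠ 0 := fun h0 => hβ (by rw [h0, zero_mul])
      have h2 : d (α - β) ≠ 0 := fun h0 => hβ (by rw [h0, mul_zero])
      simp only [Finset.coe_sort_coe, Set.Finite.coe_toFinset, Set.mem_setOf_eq]
      exact ⟨h1, h2⟩
    rw [Finset.sum_congr rfl (fun α _ => hMul α)]
    rw [Finset.sum_sigma']
    refine Finset.sum_nbij' (i := fun q => (q.2, q.1 - q.2))
      (j := fun p => ⟨p.1 + p.2, p.1⟩) ?_ ?_ ?_ ?_ ?_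
    · rintro ⟨α, β⟩ hq
      rw [Finset.mem_sigma, Set.Finite.mem_toFinset, Set.Finite.mem_toFinset] at hq
      obtain ⟨⟨hα1, hα2⟩, hβ1, hβ2⟩ := hq
      rw [Set.Finite.mem_toFinset]
      refine ⟨hβ1, hβ2, ?_⟩
      rw [← Phi8_add, show β + (α - β) = α from by funext i; simp, hα2]
    · rintro ⟨β, γ⟩ hp
      rw [Set.Finite.mem_toFinset] at hp
      obtain ⟨h1, h2, h3⟩ := hp
      rw [Finset.mem_sigma, Set.Finite.mem_toFinset, Set.Finite.mem_toFinset]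
      constructor
      · exact ⟨Set.add_mem_add h1 h2, by rw [Phi8_add]; exact h3⟩
      · constructor
        · exact h1
        · rw [show β + γ - β = γ from by funext i; simp]
          exact h2
    · rintro ⟨α, β⟩ hq
      have : β + (α - β) = α := by funext i; simp
      simp only [Sigma.mk.inj_iff, this, heq_eq_eq, and_true]
    · rintro ⟨β, γ⟩ hp
      have : β + γ - β = γ := by funext i; simp
      simp only [Prod.mk.injEq, this, and_true]
    · rintro ⟨α, β⟩ hq
      rfl
  -- regroup by the value of Phi8 on the first component
  set Df : Finset M := hPfin.toFinset.image (fun p : (Fin (k + 1) → ℝ) × (Fin (k + 1) → ℝ) => Phi8 m p.1) with hDf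
  have hR : ∑ p ∈ hPfin.toFinset, c p.1 * d p.2 =
      ∑ g' ∈ Df, (∑ᶠ (β) (_ : Phi8 m β = g'), c β) *
        (∑ᶠ (γ) (_ : Phi8 m γ = g - g'), d γ) := by
    rw [← Finset.sum_fiberwise_of_maps_to (g := fun p : (Fin (k + 1) → ℝ) × (Fin (k + 1) → ℝ) => Phi8 m p.1)
      (fun p hp => Finset.mem_image_of_mem (fun q : (Fin (k + 1) → ℝ) × (Fin (k + 1) → ℝ) => Phi8 m q.1) hp) (fun p : (Fin (k + 1) → ℝ) × (Fin (k + 1) → ℝ) => c p.1 * d p.2)]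
    refine Finset.sum_congr rfl (fun g' hg' => ?_)
    rw [push_eq_sum m hsmall c hcS subset_rfl g',
      push_eq_sum m hsmall d hd subset_rfl (g - g'), Finset.sum_mul_sum]
    have hset : (hPfin.toFinset.filter (fun p => Phi8 m p.1 = g')) =
        (fiber8_finite m hsmall hcS g').toFinset ×ˢ
          (fiber8_finite m hsmall hd (g - g')).toFinset := by
      ext ⟨β, γ⟩
      simp only [Finset.mem_filter, Finset.mem_product, Set.Finite.mem_toFinset,
        Set.mem_setOf_eq, Function.mem_support, hP]
      constructor
      · rintro ⟨⟨h1, h2, h3⟩, h4⟩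
        exact ⟨⟨h1, h4⟩, h2, by rw [← h3, ← h4]; abel⟩
      · rintro ⟨⟨h1, h2⟩, h3, h4⟩
        exact ⟨⟨h1, h3, by rw [h2, h4]; abel⟩, h2⟩
    rw [hset, Finset.sum_product]
  rw [hL, hR] at h
  obtain ⟨g', _, hg'⟩ := Finset.exists_ne_zero_of_sum_ne_zero h
  refine ⟨g', fun h0 => hg' (by rw [h0, zero_mul]), fun h0 => hg' (by rw [h0, mul_zero])⟩

end push

section swap
set_option linter.unusedSectionVars false
variable {M K : Type*} [AddCommGroup M] [LinearOrder M] [IsOrderedAddMonoid M] [Module ℝ M] [PosSMulStrictMono ℝ M]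
  [CommRing K] {k : ℕ}

lemma supp_pwo {c : (Fin (k + 1) → ℝ) → K} (hc : IsNaturalGPS c) :
    (Function.support c).IsPWO := by
  refine natPWO _ (fun α hα i => hc.1 α hα i) (fun i a ha => (hc.2 i a ha).subset ?_)
  rintro t ⟨h1, α, hα, h2⟩
  exact ⟨h1, α, hα, h2⟩

lemma closure_pwo {c : (Fin (k + 1) → ℝ) → K} (hc : IsNaturalGPS c) :
    (↑(AddSubmonoid.closure (Function.support c)) : Set (Fin (k + 1) → ℝ)).IsPWO :=
  Set.IsPWO.addSubmonoid_closure (fun x hx i => hc.1 x hx i) (supp_pwo hc)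

lemma swap_ne (m : Fin (k + 1) → M) (hsmall : ∀ i, m i < 0)
    {c : (Fin (k + 1) → ℝ) → K} (hc : IsNaturalGPS c) (hc0 : c 0 = 0)
    (P : PowerSeries K) (g : M)
    (h : (∑ᶠ (α) (_ : Phi8 m α = g),
        ∑ᶠ ν : ℕ, PowerSeries.coeff ν P * cPow c ν α) ≠ 0) :
    ∃ ν : ℕ, (∑ᶠ (α) (_ : Phi8 m α = g), cPow c ν α) ≠ 0 := by
  classical
  have hcl := closure_pwo hc
  have hfib := fiber8_finite m hsmall hcl g
  have hsupp : Function.support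
      (fun α => ∑ᶠ ν : ℕ, PowerSeries.coeff ν P * cPow c ν α) ⊆
      (↑(AddSubmonoid.closure (Function.support c)) : Set (Fin (k + 1) → ℝ)) := by
    intro α hα
    rw [Function.mem_support] at hα
    have : ∃ ν : ℕ, PowerSeries.coeff ν P * cPow c ν α ≠ 0 := by
      by_contra h'
      push_neg at h'
      exact hα (finsum_eq_zero_of_forall_eq_zero h')
    obtain ⟨ν, hν⟩ := this
    have : cPow c ν α ≠ 0 := fun h0 => hν (by rw [h0, mul_zero])
    exact cPow_mem_closure ν α this
  rw [push_eq_sum m hsmall _ hcl hsupp g] at h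
  set Nf : Finset ℕ := hfib.toFinset.biUnion (fun α => (nuFinite hc hc0 α).toFinset) with hNf
  have hinner : ∀ α ∈ hfib.toFinset,
      (∑ᶠ ν : ℕ, PowerSeries.coeff ν P * cPow c ν α) =
        ∑ ν ∈ Nf, PowerSeries.coeff ν P * cPow c ν α := by
    intro α hα
    refine finsum_eq_sum_of_support_subset _ ?_
    intro ν hν
    rw [Function.mem_support] at hν
    have h1 : cPow c ν α ≠ 0 := fun h0 => hν (by rw [h0, mul_zero])
    simp only [Finset.coe_biUnion, Finset.coe_sort_coe, Set.mem_iUnion, hNf]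
    exact ⟨α, hα, (Set.Finite.mem_toFinset _).2 h1⟩
  rw [Finset.sum_congr rfl hinner, Finset.sum_comm] at h
  obtain ⟨ν, _, hν⟩ := Finset.exists_ne_zero_of_sum_ne_zero h
  refine ⟨ν, ?_⟩
  have hsupp2 : Function.support (cPow c ν) ⊆
      (↑(AddSubmonoid.closure (Function.support c)) : Set (Fin (k + 1) → ℝ)) :=
    fun α hα => cPow_mem_closure ν α hα
  rw [push_eq_sum m hsmall _ hcl hsupp2 g]
  intro h0
  apply hν
  rw [← Finset.mul_sum] at hν ⊢
  rw [h0, mul_zero]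

end swap


/-- The multiplicatively written linearly ordered `ℝ`-vector space `M` is formalized
additively: `m^α` corresponds to `∑ i, α i • m i` and small (`< 1`) to `< 0`.

Let `F = G(m₀,…,m_k)` be an `M`-generalized power series over `K` (coefficient function
`c` with natural support) whose leading monomial `g₀` is small, and let
`P = Σ_ν a_ν T^ν` be a formal power series over `K`.  Then `P ∘ F := Σ_ν a_ν F^ν` is a
well-defined `M`-generalized power series with the same generating monomials
`m₀, …, m_k`: for each exponent `α` only finitely many `ν` contribute, and the composed
coefficient function `α ↦ Σ_ν a_ν (G^ν)_α` again has natural support.  If moreover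
`supp F` is `M`-natural and the powers `lm(F)^ν` are coinitial in `M`, then `P ∘ F` has
`M`-natural support. -/
theorem stmt8 {M K : Type*} [AddCommGroup M] [LinearOrder M] [IsOrderedAddMonoid M] [Module ℝ M] [PosSMulStrictMono ℝ M]
    [CommRing K]
    (k : ℕ) (m : Fin (k + 1) → M) (hsmall : ∀ i, m i < 0)
    (c : (Fin (k + 1) → ℝ) → K) (hc : IsNaturalGPS c)
    (F : M → K)
    (hFc : ∀ g : M, F g = ∑ᶠ (α : Fin (k + 1) → ℝ) (_ : ∑ i, α i • m i = g), c α)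
    (g₀ : M) (hlm : F g₀ ≠ 0 ∧ g₀ < 0 ∧ ∀ g, F g ≠ 0 → g ≤ g₀)
    (P : PowerSeries K) :
    ((∀ α : Fin (k + 1) → ℝ, {ν : ℕ | cPow c ν α ≠ 0}.Finite) ∧
      IsNaturalGPS (fun α => ∑ᶠ ν : ℕ, PowerSeries.coeff ν P * cPow c ν α)) ∧
    ((∀ n : M, {g : M | F g ≠ 0 ∧ n < g}.Finite) →
      (∀ n : M, ∃ ν : ℕ, (ν : ℝ) • g₀ ≤ n) →
      ∀ n : M, {g : M |
        (∑ᶠ (α : Fin (k + 1) → ℝ) (_ : ∑ i, α i • m i = g),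
          ∑ᶠ ν : ℕ, PowerSeries.coeff ν P * cPow c ν α) ≠ 0 ∧ n < g}.Finite) := by
  classical
  have hS : (Function.support c).IsPWO := supp_pwo hc
  -- `c 0 = 0`
  have hc0 : c 0 = 0 := by
    have hF0 : F 0 = c 0 := by
      rw [hFc 0]
      have h1 : ∀ α : Fin (k + 1) → ℝ, (∑ᶠ _ : (∑ i, α i • m i) = (0 : M), c α) =
          if Phi8 m α = (0 : M) then c α else 0 := fun α => finsum_eq_if
      rw [finsum_congr h1, finsum_eq_single _ 0 ?_]
      · rw [if_pos (Phi8_zero m)]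
      · intro α hα
        by_cases hcα : c α = 0
        · simp [hcα]
        · rw [if_neg ?_]
          intro hφ
          exact absurd hφ (ne_of_lt (Phi8_neg m hsmall (hc.1 α hcα) hα))
    by_contra h0
    have h2 : F 0 ≠ 0 := by rw [hF0]; exact h0
    exact absurd (lt_of_le_of_lt (hlm.2.2 0 h2) hlm.2.1) (lt_irrefl 0)
  have hpart1 : ∀ α : Fin (k + 1) → ℝ, {ν : ℕ | cPow c ν α ≠ 0}.Finite :=
    fun α => nuFinite hc hc0 α
  have hexists : ∀ α : Fin (k + 1) → ℝ,
      (∑ᶠ ν : ℕ, PowerSeries.coeff ν P * cPow c ν α) ≠ 0 →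
      ∃ ν : ℕ, cPow c ν α ≠ 0 := by
    intro α hα
    have : ∃ ν : ℕ, PowerSeries.coeff ν P * cPow c ν α ≠ 0 := by
      by_contra h'
      push_neg at h'
      exact hα (finsum_eq_zero_of_forall_eq_zero h')
    obtain ⟨ν, hν⟩ := this
    exact ⟨ν, fun h0 => hν (by rw [h0, mul_zero])⟩
  refine ⟨⟨hpart1, ?_, ?_⟩, ?_⟩
  · -- composed coefficients have nonnegative support
    intro α hα i
    obtain ⟨ν, hν⟩ := hexists α hα
    exact cPow_nonneg hc.1 ν α hν i
  · -- coordinatewise finiteness of the composed support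
    intro i a ha
    have hV0 : ∀ v ∈ {t : ℝ | ∃ β, c β ≠ 0 ∧ β i = t}, 0 ≤ v := by
      rintro v ⟨β, hβ, rfl⟩
      exact hc.1 β hβ i
    have hVf : ∀ a' : ℝ, {v : ℝ | v ∈ {t : ℝ | ∃ β, c β ≠ 0 ∧ β i = t} ∧ v < a'}.Finite := by
      intro a'
      rcases le_or_gt a' 0 with h' | h'
      · refine Set.finite_empty.subset ?_
        rintro v ⟨⟨β, hβ, rfl⟩, h2⟩
        exact absurd (lt_of_lt_of_le h2 h') (not_lt.2 (hc.1 β hβ i))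
      · refine (hc.2 i a' h').subset ?_
        rintro v ⟨h1, h2⟩
        exact ⟨h2, h1⟩
    refine (natClosure _ hV0 hVf a).subset ?_
    rintro t ⟨hta, α, hα, rfl⟩
    obtain ⟨ν, hν⟩ := hexists α hα
    exact ⟨cPow_coord_closure i ν α hν, hta⟩
  · -- part 3
    intro hF hco n
    have hstep : ∀ (ν : ℕ) (g : M), (∑ᶠ (α) (_ : Phi8 m α = g), cPow c (ν + 1) α) ≠ 0 →
        ∃ g', F g' ≠ 0 ∧ (∑ᶠ (α) (_ : Phi8 m α = g - g'), cPow c ν α) ≠ 0 := by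
      intro ν g h
      obtain ⟨g', h1, h2⟩ := push_mul_ne m hsmall hS (cPow_supp_pwo hS ν) g h
      refine ⟨g', ?_, h2⟩
      rw [hFc g']
      exact h1
    have hzero : ∀ g : M, (∑ᶠ (α) (_ : Phi8 m α = g), cPow c 0 α) ≠ 0 → g = 0 := by
      intro g h
      by_contra hg
      apply h
      apply finsum_eq_zero_of_forall_eq_zero
      intro α
      rw [show (∑ᶠ _ : Phi8 m α = g, cPow c 0 α) =
        if Phi8 m α = g then cPow c 0 α else 0 from finsum_eq_if]
      rcases eq_or_ne α 0 with rfl | hα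
      · rw [if_neg]
        rw [Phi8_zero m]
        exact fun h' => hg h'.symm
      · have : cPow c 0 α = 0 := by
          rw [show cPow c 0 α = if α = 0 then 1 else 0 from rfl, if_neg hα]
        rw [this]
        simp
    have hbound : ∀ (ν : ℕ) (g : M), (∑ᶠ (α) (_ : Phi8 m α = g), cPow c ν α) ≠ 0 →
        g ≤ ν • g₀ := by
      intro ν
      induction ν with
      | zero =>
        intro g h
        rw [hzero g h, zero_smul]
      | succ ν ih =>
        intro g h
        obtain ⟨g', h1, h2⟩ := hstep ν g h
        have h3 : g' ≤ g₀ := hlm.2.2 g' h1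
        have h4 : g - g' ≤ ν • g₀ := ih _ h2
        calc g = g' + (g - g') := by abel
          _ ≤ g₀ + ν • g₀ := add_le_add h3 h4
          _ = (ν + 1) • g₀ := (succ_nsmul' g₀ ν).symm
    have hDfin : ∀ (ν : ℕ) (n' : M),
        {g : M | (∑ᶠ (α) (_ : Phi8 m α = g), cPow c ν α) ≠ 0 ∧ n' < g}.Finite := by
      intro ν
      induction ν with
      | zero =>
        intro n'
        refine (Set.finite_singleton (0 : M)).subset ?_
        rintro g ⟨h1, _⟩
        exact hzero g h1
      | succ ν ih =>
        intro n'
        refine (((hF (n' - ν • g₀)).prod (ih (n' - g₀))).image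
          (fun p => p.1 + p.2)).subset ?_
        rintro g ⟨h1, h2⟩
        obtain ⟨g', hg1, hg2⟩ := hstep ν g h1
        have hb1 : g - g' ≤ ν • g₀ := hbound ν _ hg2
        have hb2 : g' ≤ g₀ := hlm.2.2 g' hg1
        refine ⟨(g', g - g'), ⟨⟨hg1, ?_⟩, hg2, ?_⟩, by simp⟩
        · have h5 : g - ν • g₀ ≤ g' := by
            have h6 := sub_le_sub_left hb1 g
            have h7 : g - (g - g') = g' := by abel
            rw [h7] at h6
            exact h6
          exact lt_of_lt_of_le (sub_lt_sub_right h2 _) h5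
        · exact lt_of_lt_of_le (sub_lt_sub_right h2 _) (sub_le_sub_left hb2 g)
    obtain ⟨ν₀, hν₀⟩ := hco n
    have hν₀' : ν₀ • g₀ ≤ n := by
      rw [← Nat.cast_smul_eq_nsmul ℝ]
      exact hν₀
    refine ((Set.finite_Iio ν₀).biUnion (fun ν _ => hDfin ν n)).subset ?_
    rintro g ⟨hg, hng⟩
    obtain ⟨ν, hν⟩ := swap_ne m hsmall hc hc0 P g hg
    have hνlt : ν ∈ Set.Iio ν₀ := by
      by_contra hlt
      rw [Set.mem_Iio, not_lt] at hlt
      have h1 : g ≤ ν • g₀ := hbound ν g hν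
      have h2 : ν • g₀ ≤ ν₀ • g₀ := by
        have h3 : ν • g₀ = (ν - ν₀) • g₀ + ν₀ • g₀ := by
          rw [← add_nsmul, Nat.sub_add_cancel hlt]
        rw [h3]
        have h4 : (ν - ν₀) • g₀ ≤ 0 := nsmul_nonpos hlm.2.1.le _
        calc (ν - ν₀) • g₀ + ν₀ • g₀ ≤ 0 + ν₀ • g₀ := add_le_add_left h4 _
          _ = ν₀ • g₀ := zero_add _
      exact absurd (lt_of_lt_of_le hng (h1.trans (h2.trans hν₀'))) (lt_irrefl n)
    exact Set.mem_biUnion hνlt ⟨hν, hng⟩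
end

section
/- For C > 0 and ε ∈ (0,1), the map φ_C^ε : H(0) → ℂ defined by φ_C^ε(z) = z + C(1+z)^ε (standard branch of the power function on the right half-plane H(0) = {Re z > 0}) is injective, hence biholomorphic onto its image. -/
open Complex Set Real

lemma re_cpow_pos' {w : ℂ} (hw : 0 < w.re) {s : ℝ} (hs : |s| < 1) :
    0 < (w ^ (s : ℂ)).re := by
  have hw0 : w ≠ 0 := fun h => by simp [h] at hw
  rw [Complex.cpow_def_of_ne_zero hw0, Complex.exp_re]
  apply mul_pos (Real.exp_pos _)
  have him : (Complex.log w * (s : ℂ)).im = s * w.arg := by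
    simp [Complex.mul_im, Complex.log_im]; ring
  rw [him]
  apply Real.cos_pos_of_mem_Ioo
  have harg : |w.arg| < π / 2 := Complex.abs_arg_lt_pi_div_two_iff.mpr (Or.inl hw)
  have : |s * w.arg| < π / 2 := by
    rw [abs_mul]
    calc |s| * |w.arg| ≤ 1 * |w.arg| := by
          apply mul_le_mul_of_nonneg_right hs.le (abs_nonneg _)
      _ < π / 2 := by rwa [one_mul]
  constructor <;> [linarith [neg_abs_le (s * w.arg)]; linarith [le_abs_self (s * w.arg)]]

lemma hasDeriv' (C ε : ℝ) {ξ : ℂ} (hξ : 0 < ξ.re) :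
    HasDerivAt (fun z : ℂ => z + C * (1 + z) ^ (ε : ℂ))
      (1 + C * ((ε : ℂ) * (1 + ξ) ^ ((ε : ℂ) - 1))) ξ := by
  have h1 : HasDerivAt (fun z : ℂ => 1 + z) 1 ξ := (hasDerivAt_id ξ).const_add 1
  have hsl : (1 + ξ) ∈ Complex.slitPlane := Or.inl (by simp; linarith)
  have h2 := h1.cpow_const (c := (ε : ℂ)) hsl
  have h3 := (hasDerivAt_id ξ).add (h2.const_mul (C : ℂ))
  rw [mul_one] at h3
  exact h3

/-- For `C > 0` and `ε ∈ (0,1)`, the map `φ_C^ε(z) = z + C(1+z)^ε` (principal branch of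
the power function) is holomorphic and injective on the right half-plane
`H(0) = {Re z > 0}`, hence biholomorphic onto its image. -/
theorem stmt9 (C ε : ℝ) (hC : 0 < C) (hε : ε ∈ Set.Ioo (0 : ℝ) 1) :
    DifferentiableOn ℂ (fun z : ℂ => z + C * (1 + z) ^ (ε : ℂ)) {z : ℂ | 0 < z.re} ∧
    Set.InjOn (fun z : ℂ => z + C * (1 + z) ^ (ε : ℂ)) {z : ℂ | 0 < z.re} := by
  obtain ⟨hε0, hε1⟩ := hε
  have hsabs : |ε - 1| < 1 := by rw [abs_lt]; constructor <;> linarith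
  -- Re of derivative is > 0
  have hre : ∀ ξ : ℂ, 0 < ξ.re →
      1 ≤ (1 + (C : ℂ) * ((ε : ℂ) * (1 + ξ) ^ ((ε : ℂ) - 1))).re := by
    intro ξ hξ
    have h1 : 0 < ((1 + ξ) ^ ((ε : ℂ) - 1)).re := by
      have : ((ε : ℂ) - 1) = ((ε - 1 : ℝ) : ℂ) := by push_cast; ring
      rw [this]
      exact re_cpow_pos' (by simp; linarith) hsabs
    have : (1 + (C : ℂ) * ((ε : ℂ) * (1 + ξ) ^ ((ε : ℂ) - 1))).re
        = 1 + C * (ε * ((1 + ξ) ^ ((ε : ℂ) - 1)).re) := by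
      simp [Complex.add_re, Complex.re_ofReal_mul]
    rw [this]
    nlinarith [mul_pos hC (mul_pos hε0 h1)]
  constructor
  · intro z hz
    exact ((hasDeriv' C ε hz).differentiableAt).differentiableWithinAt
  · intro z hz w hw hzw
    by_contra hne
    set u := w - z with hu
    have hune : u ≠ 0 := sub_ne_zero.mpr (Ne.symm hne)
    set γ : ℝ → ℂ := fun t => z + t * u with hγ
    have hmem : ∀ t ∈ Set.Icc (0:ℝ) 1, 0 < (γ t).re := by
      intro t ht
      have hz' : 0 < z.re := hz
      have hw' : 0 < w.re := hw
      have : (γ t).re = z.re + t * (w.re - z.re) := by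
        simp [hγ, hu, Complex.add_re, Complex.sub_re, Complex.re_ofReal_mul]
      rw [this]
      rcases eq_or_lt_of_le ht.1 with h | h
      · simp [← h, hz']
      · nlinarith [mul_pos h hw', mul_nonneg (sub_nonneg.mpr ht.2) hz'.le]
    have hγd : ∀ t : ℝ, HasDerivAt γ u t := by
      intro t
      simpa [hγ] using ((Complex.ofRealCLM.hasDerivAt (x := t)).mul_const u).const_add z
    set φ' : ℂ → ℂ := fun ξ => 1 + (C : ℂ) * ((ε : ℂ) * (1 + ξ) ^ ((ε : ℂ) - 1)) with hφ'
    set g : ℝ → ℂ := fun t => φ' (γ t) * u with hg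
    have hgd : ∀ t ∈ Set.uIcc (0:ℝ) 1, HasDerivAt (fun t => (fun z : ℂ => z + C * (1 + z) ^ (ε : ℂ)) (γ t)) (g t) t := by
      intro t ht
      rw [Set.uIcc_of_le (by norm_num)] at ht
      exact (hasDeriv' C ε (hmem t ht)).comp t (hγd t)
    have hcontφ : ContinuousOn (fun t => φ' (γ t)) (Set.uIcc (0:ℝ) 1) := by
      rw [Set.uIcc_of_le (by norm_num)]
      apply ContinuousOn.add continuousOn_const
      apply ContinuousOn.mul continuousOn_const
      apply ContinuousOn.mul continuousOn_const
      intro t ht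
      have hsl : (1 + γ t) ∈ Complex.slitPlane := Or.inl (by simp; linarith [hmem t ht])
      exact (((by continuity : Continuous fun t : ℝ => 1 + γ t).continuousAt.cpow
        continuousAt_const hsl)).continuousWithinAt
    have hcont : ContinuousOn g (Set.uIcc (0:ℝ) 1) := hcontφ.mul continuousOn_const
    have hint : IntervalIntegrable g MeasureTheory.volume 0 1 :=
      hcont.intervalIntegrable
    have hintφ : IntervalIntegrable (fun t => φ' (γ t)) MeasureTheory.volume 0 1 :=
      hcontφ.intervalIntegrable
    have hFTC := intervalIntegral.integral_eq_sub_of_hasDerivAt hgd hint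
    simp only [hγ] at hFTC
    have hzw' : z + (C:ℂ) * (1 + z) ^ (ε:ℂ) = w + (C:ℂ) * (1 + w) ^ (ε:ℂ) := hzw
    have hzero : (∫ t in (0:ℝ)..1, g t) = 0 := by
      rw [hFTC]
      simp only [Complex.ofReal_one, Complex.ofReal_zero, one_mul, zero_mul, add_zero]
      rw [show z + u = w by rw [hu]; ring, sub_eq_zero]
      exact hzw'.symm
    have hμ : (∫ t in (0:ℝ)..1, φ' (γ t)) = 0 := by
      have : (∫ t in (0:ℝ)..1, g t) = (∫ t in (0:ℝ)..1, φ' (γ t)) * u := by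
        simp only [hg]
        exact intervalIntegral.integral_mul_const u _
      rw [this] at hzero
      rcases mul_eq_zero.mp hzero with h | h
      · exact h
      · exact absurd h hune
    have hre0 : (∫ t in (0:ℝ)..1, (φ' (γ t)).re) = 0 := by
      have := Complex.reCLM.intervalIntegral_comp_comm hintφ
      simp only [Complex.reCLM_apply] at this
      rw [this, hμ, Complex.zero_re]
    have hintre : IntervalIntegrable (fun t => (φ' (γ t)).re) MeasureTheory.volume 0 1 :=
      (Complex.continuous_re.comp_continuousOn hcontφ).intervalIntegrable
    have hone : (1:ℝ) ≤ ∫ t in (0:ℝ)..1, (φ' (γ t)).re := by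
      have := intervalIntegral.integral_mono_on (a := (0:ℝ)) (b := 1)
        (f := fun _ => (1:ℝ)) (by norm_num) intervalIntegrable_const hintre
        (fun t ht => hre (γ t) (hmem t ht))
      simpa using this
    linarith
end

section
/- For C > 0 and ε ∈ (0,1), as r → +∞ in ℝ one has Re φ_C^ε(ir) ∼ C cos(επ/2) r^ε and Im φ_C^ε(ir) ∼ r, where φ_C^ε(z) = z + C(1+z)^ε with the standard branch of the power function on the right half-plane, and f ∼ g means f/g → 1. -/
open Filter Real Complex

private lemma abs_one_add_I_mul (r : ℝ) :
    ‖(1 + Complex.I * r)‖ = Real.sqrt (1 + r ^ 2) := by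
  rw [Complex.norm_def]
  congr 1
  simp [Complex.normSq_apply]
  ring

private lemma arg_one_add_I_mul (r : ℝ) :
    Complex.arg (1 + Complex.I * r) = Real.arctan r := by
  have hre : (1 + Complex.I * r).re = 1 := by simp
  have him : (1 + Complex.I * r).im = r := by simp
  have h1 : -(Real.pi / 2) < Complex.arg (1 + Complex.I * r) := by
    rw [Complex.neg_pi_div_two_lt_arg_iff]
    left; rw [hre]; norm_num
  have h2 : Complex.arg (1 + Complex.I * r) < Real.pi / 2 := by
    rw [Complex.arg_lt_pi_div_two_iff]
    left; rw [hre]; norm_num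
  have ht := Complex.tan_arg (1 + Complex.I * r)
  rw [hre, him, div_one] at ht
  conv_rhs => rw [← ht]
  exact (Real.arctan_tan h1 h2).symm

private lemma sqrt_rpow_div (ε : ℝ) {r : ℝ} (hr : 0 < r) :
    Real.sqrt (1 + r ^ 2) ^ ε / r ^ ε = Real.sqrt (1 / r ^ 2 + 1) ^ ε := by
  have hr2 : (0:ℝ) < r ^ 2 := by positivity
  have h1 : Real.sqrt (1 / r ^ 2 + 1) = Real.sqrt (1 + r ^ 2) / r := by
    have : 1 / r ^ 2 + 1 = (1 + r ^ 2) / r ^ 2 := by field_simp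
    rw [this, Real.sqrt_div (by positivity), Real.sqrt_sq hr.le]
  rw [h1, Real.div_rpow (Real.sqrt_nonneg _) hr.le]

private lemma tendsto_sqrt_rpow (ε : ℝ) :
    Tendsto (fun r : ℝ => Real.sqrt (1 / r ^ 2 + 1) ^ ε) atTop (nhds 1) := by
  have h0 : Tendsto (fun r : ℝ => 1 / r ^ 2 + 1) atTop (nhds 1) := by
    have hp : Tendsto (fun r : ℝ => r ^ 2) atTop atTop :=
      tendsto_pow_atTop (by norm_num)
    have hinv : Tendsto (fun r : ℝ => (r ^ 2)⁻¹) atTop (nhds 0) :=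
      tendsto_inv_atTop_zero.comp hp
    have := hinv.add (tendsto_const_nhds (x := (1:ℝ)))
    simpa [one_div] using this
  have h1 : Tendsto (fun r : ℝ => Real.sqrt (1 / r ^ 2 + 1)) atTop (nhds 1) := by
    have := (Real.continuous_sqrt.continuousAt (x := (1:ℝ))).tendsto.comp h0
    simpa [Function.comp_def] using this
  have := h1.rpow_const (p := ε) (Or.inl one_ne_zero)
  simpa using this

/-- For `C > 0` and `ε ∈ (0,1)`, with `φ_C^ε(z) = z + C(1+z)^ε` (principal branch),
one has `Re φ_C^ε(ir) ∼ C cos(επ/2) r^ε` and `Im φ_C^ε(ir) ∼ r` as `r → +∞`,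
where `f ∼ g` means `f/g → 1`. -/
theorem stmt10 (C ε : ℝ) (hC : 0 < C) (hε : ε ∈ Set.Ioo (0 : ℝ) 1) :
    Filter.Tendsto
      (fun r : ℝ =>
        (Complex.I * r + C * (1 + Complex.I * r) ^ (ε : ℂ)).re /
          (C * Real.cos (ε * Real.pi / 2) * r ^ ε))
      Filter.atTop (nhds 1) ∧
    Filter.Tendsto
      (fun r : ℝ =>
        (Complex.I * r + C * (1 + Complex.I * r) ^ (ε : ℂ)).im / r)
      Filter.atTop (nhds 1) := by
  obtain ⟨hε0, hε1⟩ := hε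
  have hcos : 0 < Real.cos (ε * Real.pi / 2) := by
    apply Real.cos_pos_of_mem_Ioo
    constructor
    · nlinarith [Real.pi_pos]
    · nlinarith [Real.pi_pos]
  -- real/imag parts
  have hre : ∀ r : ℝ, (Complex.I * r + C * (1 + Complex.I * r) ^ (ε : ℂ)).re
      = C * (Real.sqrt (1 + r ^ 2) ^ ε * Real.cos (Real.arctan r * ε)) := by
    intro r
    rw [Complex.add_re]
    have h := Complex.cpow_ofReal_re (1 + Complex.I * r) ε
    rw [abs_one_add_I_mul, arg_one_add_I_mul] at h
    simp [Complex.mul_re, h]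
  have him : ∀ r : ℝ, (Complex.I * r + C * (1 + Complex.I * r) ^ (ε : ℂ)).im
      = r + C * (Real.sqrt (1 + r ^ 2) ^ ε * Real.sin (Real.arctan r * ε)) := by
    intro r
    rw [Complex.add_im]
    have h := Complex.cpow_ofReal_im (1 + Complex.I * r) ε
    rw [abs_one_add_I_mul, arg_one_add_I_mul] at h
    simp [Complex.mul_im, h]
  -- arctan * ε limit
  have harct : Tendsto (fun r : ℝ => Real.arctan r * ε) atTop (nhds (ε * Real.pi / 2)) := by
    have h := (Real.tendsto_arctan_atTop.mono_right nhdsWithin_le_nhds).mul_const ε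
    convert h using 2
    ring
  have hsq := tendsto_sqrt_rpow ε
  constructor
  · -- real part
    have hcosl : Tendsto (fun r : ℝ => Real.cos (Real.arctan r * ε) / Real.cos (ε * Real.pi / 2))
        atTop (nhds 1) := by
      have := ((Real.continuous_cos.continuousAt).tendsto.comp harct).div_const
        (Real.cos (ε * Real.pi / 2))
      simpa [div_self hcos.ne'] using this
    have hmain : Tendsto (fun r : ℝ => Real.sqrt (1 / r ^ 2 + 1) ^ ε *
        (Real.cos (Real.arctan r * ε) / Real.cos (ε * Real.pi / 2))) atTop (nhds 1) := by
      simpa using hsq.mul hcosl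
    apply hmain.congr'
    filter_upwards [eventually_gt_atTop (0:ℝ)] with r hr
    rw [hre r, ← sqrt_rpow_div ε hr]
    have hrε : (0:ℝ) < r ^ ε := Real.rpow_pos_of_pos hr ε
    field_simp
  · -- imaginary part
    have htail : Tendsto (fun r : ℝ => C * (Real.sqrt (1 + r ^ 2) ^ ε *
        Real.sin (Real.arctan r * ε)) / r) atTop (nhds 0) := by
      have hbd : Tendsto (fun r : ℝ => C * (Real.sqrt (1 / r ^ 2 + 1) ^ ε * r ^ (ε - 1)))
          atTop (nhds 0) := by
        have h2 : Tendsto (fun r : ℝ => r ^ (ε - 1)) atTop (nhds 0) := by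
          have := tendsto_rpow_neg_atTop (y := 1 - ε) (by linarith)
          simpa [neg_sub] using this
        have := (hsq.mul h2).const_mul C
        simpa using this
      apply squeeze_zero_norm' _ hbd
      filter_upwards [eventually_gt_atTop (0:ℝ)] with r hr
      have hrε : (0:ℝ) < r ^ ε := Real.rpow_pos_of_pos hr ε
      have hsin : |Real.sin (Real.arctan r * ε)| ≤ 1 := Real.abs_sin_le_one _
      have hkey : Real.sqrt (1 / r ^ 2 + 1) ^ ε * r ^ (ε - 1)
          = Real.sqrt (1 + r ^ 2) ^ ε / r := by
        rw [← sqrt_rpow_div ε hr, Real.rpow_sub hr, Real.rpow_one]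
        field_simp
      rw [hkey]
      rw [Real.norm_eq_abs, abs_div, abs_mul, abs_mul, abs_of_pos hC, abs_of_pos hr,
        _root_.abs_of_nonneg (Real.rpow_nonneg (Real.sqrt_nonneg _) ε)]
      have h1 : C * (Real.sqrt (1 + r ^ 2) ^ ε * |Real.sin (Real.arctan r * ε)|) / r
          ≤ C * (Real.sqrt (1 + r ^ 2) ^ ε * 1) / r := by gcongr
      simpa [mul_div_assoc] using h1
    have hmain : Tendsto (fun r : ℝ => 1 + C * (Real.sqrt (1 + r ^ 2) ^ ε *
        Real.sin (Real.arctan r * ε)) / r) atTop (nhds 1) := by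
      simpa using (tendsto_const_nhds (x := (1:ℝ)) (f := atTop)).add htail
    apply hmain.congr'
    filter_upwards [eventually_gt_atTop (0:ℝ)] with r hr
    rw [him r, add_div, div_self hr.ne']
end

section
/- Let C > 0, ε ∈ (0,1), and set K := C cos(επ/2) / 3^{ε/2}. There exists k ∈ (0,1) such that for all z in the standard power domain U_C^ε = φ_C^ε(H(0)), one has k·exp(K|z|^ε) ≤ |exp(z)| ≤ exp(|z|). -/
/-- The standard power domain `U_C^ε = φ_C^ε(H(0))`, where
`φ_C^ε(z) = z + C(1+z)^ε` (principal branch) and `H(0) = {Re z > 0}`. -/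
def SPD (C ε : ℝ) : Set ℂ :=
  (fun z : ℂ => z + C * (1 + z) ^ (ε : ℂ)) '' {z : ℂ | 0 < z.re}

/-- With `K := C cos(επ/2)/3^{ε/2}`, there exists `k ∈ (0,1)` such that
`k·exp(K|z|^ε) ≤ |exp z| ≤ exp |z|` for all `z ∈ U_C^ε`. -/
theorem stmt11 (C ε : ℝ) (hC : 0 < C) (hε : ε ∈ Set.Ioo (0 : ℝ) 1) :
    ∃ k ∈ Set.Ioo (0 : ℝ) 1, ∀ z ∈ SPD C ε,
      k * Real.exp (C * Real.cos (ε * Real.pi / 2) / (3 : ℝ) ^ (ε / 2) *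
          ‖z‖ ^ ε)
        ≤ ‖Complex.exp z‖ ∧
      ‖Complex.exp z‖ ≤ Real.exp ‖z‖ := by
  obtain ⟨hε0, hε1⟩ := hε
  have hπ := Real.pi_pos
  set cε := Real.cos (ε * Real.pi / 2) with hcεdef
  have hcε : 0 < cε := Real.cos_pos_of_mem_Ioo ⟨by nlinarith, by nlinarith⟩
  have h3 : (0:ℝ) < (3:ℝ) ^ (ε/2) := Real.rpow_pos_of_pos (by norm_num) _
  set K := C * cε / (3:ℝ) ^ (ε/2) with hKdef
  have hK : 0 < K := div_pos (mul_pos hC hcε) h3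
  clear_value K
  clear_value cε
  set R := max 1 ((2*C) ^ (1/(1-ε)) : ℝ) with hRdef
  have hR1 : (1:ℝ) ≤ R := le_max_left _ _
  have hRε : (0:ℝ) < R ^ ε := Real.rpow_pos_of_pos (by linarith) _
  set B := R + C * R ^ ε with hBdef
  have hB : (1:ℝ) ≤ B := by nlinarith
  have hBε : (0:ℝ) < B ^ ε := Real.rpow_pos_of_pos (by linarith) _
  set M := K * B ^ ε with hMdef
  have hM : 0 < M := mul_pos hK hBε
  clear_value M
  clear_value B
  clear_value R
  refine ⟨Real.exp (-M), ⟨Real.exp_pos _, by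
    have := Real.exp_lt_exp.2 (show -M < (0:ℝ) by linarith)
    simpa using this⟩, ?_⟩
  rintro z ⟨w, hw, rfl⟩
  simp only [Set.mem_setOf_eq] at hw
  beta_reduce
  set a : ℂ := 1 + w with hadef
  have hare : 1 < a.re := by simp [hadef, Complex.add_re]; linarith
  have ha0 : a ≠ 0 := by
    intro h; rw [h] at hare; simp at hare; linarith
  have habsw : ‖w‖ ≤ ‖a‖ := by
    have hsq : Complex.normSq w ≤ Complex.normSq a := by
      simp only [Complex.normSq_apply, hadef, Complex.add_re, Complex.add_im,
        Complex.one_re, Complex.one_im]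
      nlinarith
    rw [Complex.norm_def, Complex.norm_def]
    exact Real.sqrt_le_sqrt hsq
  clear_value a
  set r := ‖a‖ with hrdef
  have hr1 : 1 < r := lt_of_lt_of_le hare (Complex.re_le_norm a)
  have hr0 : (0:ℝ) < r := by linarith
  have hrε : (0:ℝ) < r ^ ε := Real.rpow_pos_of_pos hr0 _
  clear_value r
  -- |a ^ ε| = r ^ ε
  have habs_pow : ‖a ^ (ε : ℂ)‖ = r ^ ε := by
    rw [Complex.norm_cpow_of_ne_zero ha0]
    simp [hrdef]
  -- real part of a ^ ε
  have hre_pow : (a ^ (ε : ℂ)).re = r ^ ε * Real.cos (ε * Complex.arg a) := by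
    rw [Complex.cpow_def_of_ne_zero ha0, Complex.exp_re]
    have h1 : (Complex.log a * (ε : ℂ)).re = Real.log r * ε := by
      simp [Complex.mul_re, Complex.log_re, hrdef]
    have h2 : (Complex.log a * (ε : ℂ)).im = ε * Complex.arg a := by
      simp [Complex.mul_im, Complex.log_im]; ring
    rw [h1, h2, Real.rpow_def_of_pos hr0]
  -- cosine lower bound
  have hcos : cε ≤ Real.cos (ε * Complex.arg a) := by
    have harg : |Complex.arg a| ≤ Real.pi / 2 :=
      Complex.abs_arg_le_pi_div_two_iff.2 (by linarith)
    have h1 : Real.cos (ε * Complex.arg a) = Real.cos (ε * |Complex.arg a|) := by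
      rcases abs_cases (Complex.arg a) with ⟨h, _⟩ | ⟨h, _⟩
      · rw [h]
      · rw [h, mul_neg, Real.cos_neg]
    rw [h1, hcεdef]
    apply Real.cos_le_cos_of_nonneg_of_le_pi
    · positivity
    · nlinarith
    · nlinarith [abs_nonneg (Complex.arg a)]
  -- real part of z
  have hzre : (w + (C : ℂ) * a ^ (ε : ℂ)).re = w.re + C * (a ^ (ε : ℂ)).re := by
    simp [Complex.add_re, Complex.mul_re]
  have hz_lb : C * cε * r ^ ε ≤ (w + (C : ℂ) * a ^ (ε : ℂ)).re := by
    rw [hzre, hre_pow]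
    nlinarith [mul_le_mul_of_nonneg_left hcos (le_of_lt hrε)]
  have hz_pos : 0 < (w + (C : ℂ) * a ^ (ε : ℂ)).re :=
    lt_of_lt_of_le (mul_pos (mul_pos hC hcε) hrε) hz_lb
  -- |z| upper bound
  have habsz : ‖w + (C : ℂ) * a ^ (ε : ℂ)‖ ≤ r + C * r ^ ε := by
    calc ‖w + (C : ℂ) * a ^ (ε : ℂ)‖
        ≤ ‖w‖ + ‖(C : ℂ) * a ^ (ε : ℂ)‖ := norm_add_le _ _
      _ ≤ r + C * r ^ ε := by
          rw [norm_mul, Complex.norm_real, Real.norm_eq_abs, habs_pow, abs_of_pos hC]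
          linarith
  set z := w + (C : ℂ) * a ^ (ε : ℂ) with hzdef
  clear_value z
  have key : K * ‖z‖ ^ ε ≤ z.re + M := by
    rcases le_total r R with hcase | hcase
    · -- bounded region
      have h1 : ‖z‖ ≤ B := by
        rw [hBdef]
        calc ‖z‖ ≤ r + C * r ^ ε := habsz
          _ ≤ R + C * R ^ ε :=
            add_le_add hcase (mul_le_mul_of_nonneg_left
              (Real.rpow_le_rpow (le_of_lt hr0) hcase (le_of_lt hε0)) (le_of_lt hC))
      have h2 : ‖z‖ ^ ε ≤ B ^ ε :=
        Real.rpow_le_rpow (norm_nonneg _) h1 (le_of_lt hε0)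
      have h3' : K * ‖z‖ ^ ε ≤ M := by
        rw [hMdef]; exact mul_le_mul_of_nonneg_left h2 (le_of_lt hK)
      linarith
    · -- large region
      have h2C : (0:ℝ) < 2 * C := by linarith
      have hr2C : 2 * C ≤ r ^ (1 - ε) := by
        have h1 : (2*C) ^ (1/(1-ε)) ≤ r := by
          refine le_trans ?_ hcase
          rw [hRdef]; exact le_max_right _ _
        have h2 : ((2*C) ^ (1/(1-ε))) ^ (1-ε) ≤ r ^ (1-ε) :=
          Real.rpow_le_rpow (by positivity) h1 (by linarith)
        rwa [← Real.rpow_mul (le_of_lt h2C),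
          one_div_mul_cancel (by linarith : (1:ℝ) - ε ≠ 0), Real.rpow_one] at h2
      have hCr : C * r ^ ε ≤ r / 2 := by
        have hmul : r ^ (1 - ε) * r ^ ε = r := by
          rw [← Real.rpow_add hr0, show 1 - ε + ε = 1 by ring, Real.rpow_one]
        have h4 := mul_le_mul_of_nonneg_right hr2C (le_of_lt hrε)
        rw [hmul] at h4
        linarith
      have hzr : ‖z‖ ≤ Real.sqrt 3 * r := by
        have hs : (3/2 : ℝ) ≤ Real.sqrt 3 := by
          rw [show (3:ℝ)/2 = Real.sqrt ((3/2)^2) by rw [Real.sqrt_sq (by norm_num)]]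
          exact Real.sqrt_le_sqrt (by norm_num)
        calc ‖z‖ ≤ r + C * r ^ ε := habsz
          _ ≤ r + r / 2 := by linarith
          _ = (3/2) * r := by ring
          _ ≤ Real.sqrt 3 * r := mul_le_mul_of_nonneg_right hs (le_of_lt hr0)
      have hzε : ‖z‖ ^ ε ≤ (3:ℝ) ^ (ε/2) * r ^ ε := by
        have h1 : ‖z‖ ^ ε ≤ (Real.sqrt 3 * r) ^ ε :=
          Real.rpow_le_rpow (norm_nonneg _) hzr (le_of_lt hε0)
        have h2 : (Real.sqrt 3 * r) ^ ε = (3:ℝ) ^ (ε/2) * r ^ ε := by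
          rw [Real.mul_rpow (Real.sqrt_nonneg _) (le_of_lt hr0),
            Real.sqrt_eq_rpow, ← Real.rpow_mul (by norm_num : (0:ℝ) ≤ 3)]
          ring_nf
        linarith [h2 ▸ h1]
      have hKz : K * ‖z‖ ^ ε ≤ C * cε * r ^ ε := by
        have h1 : K * ‖z‖ ^ ε ≤ K * ((3:ℝ) ^ (ε/2) * r ^ ε) :=
          mul_le_mul_of_nonneg_left hzε (le_of_lt hK)
        have h2 : K * ((3:ℝ) ^ (ε/2) * r ^ ε) = C * cε * r ^ ε := by
          rw [hKdef]; field_simp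
        linarith [h2 ▸ h1]
      linarith
  constructor
  · rw [Complex.norm_exp, ← Real.exp_add]
    exact Real.exp_le_exp.2 (by linarith)
  · rw [Complex.norm_exp]
    exact Real.exp_le_exp.2 (Complex.re_le_norm z)
end

section
/- (Uniqueness principle on standard power domains) Let U = φ_C^ε(H(0)) be a standard power domain and φ : U → ℂ holomorphic and bounded. If the restriction of φ to the positive real axis satisfies φ(x) = o(e^{-nx}) as x → +∞ for every n ∈ ℕ, then φ is identically zero. -/
open Complex Filter Set

/-- Uniqueness principle (Phragmén–Lindelöf): if `φ` is holomorphic and bounded on a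
standard power domain `U = U_C^ε`, and its restriction to the positive real axis
satisfies `φ(x) = o(e^{-nx})` as `x → +∞` for every `n ∈ ℕ`, then `φ ≡ 0` on `U`. -/
theorem stmt13 (C ε : ℝ) (hC : 0 < C) (hε : ε ∈ Set.Ioo (0 : ℝ) 1)
    (φ : ℂ → ℂ) (hhol : DifferentiableOn ℂ φ (SPD C ε))
    (hbdd : ∃ B : ℝ, ∀ z ∈ SPD C ε, ‖φ z‖ ≤ B)
    (hflat : ∀ n : ℕ,
      Filter.Tendsto (fun x : ℝ => ‖φ x‖ * Real.exp (n * x))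
        Filter.atTop (nhds 0)) :
    ∀ z ∈ SPD C ε, φ z = 0 := by
  obtain ⟨B, hB⟩ := hbdd
  set F : ℂ → ℂ := fun z => z + C * (1 + z) ^ (ε : ℂ) with hF
  have hmaps : ∀ z : ℂ, 0 < z.re → F z ∈ SPD C ε := fun z hz => Set.mem_image_of_mem _ hz
  -- F is differentiable wherever Re z > -1
  have hFdiff : ∀ z : ℂ, -1 < z.re → DifferentiableAt ℂ F z := by
    intro z hz
    refine differentiableAt_id.add ((differentiableAt_const _).mul ?_)
    refine DifferentiableAt.cpow ((differentiableAt_const _).add differentiableAt_id)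
      (differentiableAt_const _) ?_
    have : 0 < (1 + z).re := by simp only [Complex.add_re, Complex.one_re]; linarith
    exact Complex.mem_slitPlane_iff.2 (Or.inl this)
  -- Φ = φ ∘ F, differentiable (within) on the open right half plane
  set Φ : ℂ → ℂ := fun z => φ (F z) with hΦdef
  have hΦdiff : DifferentiableOn ℂ Φ {z : ℂ | 0 < z.re} := by
    refine hhol.comp (fun z hz => (hFdiff z (by linarith [Set.mem_setOf.1 hz])).differentiableWithinAt)
      fun z hz => hmaps z hz
  -- ψ z = Φ (z + 1), differentiable on {Re z > -1}
  set ψ : ℂ → ℂ := fun z => Φ (z + 1) with hψdef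
  have hψdiff : DifferentiableOn ℂ ψ {z : ℂ | -1 < z.re} := by
    refine hΦdiff.comp (fun z hz => (differentiableAt_id.add_const 1).differentiableWithinAt)
      fun z hz => ?_
    simp only [Set.mem_setOf_eq, Complex.add_re, Complex.one_re] at hz ⊢
    linarith
  have hopen : IsOpen {z : ℂ | -1 < z.re} := isOpen_lt continuous_const Complex.continuous_re
  -- the real function giving F on the reals
  set g : ℝ → ℝ := fun t => (t + 1) + C * (2 + t) ^ ε with hg
  have hFreal : ∀ t : ℝ, 0 ≤ t → F ((t : ℂ) + 1) = ((g t : ℝ) : ℂ) := by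
    intro t ht
    have h2 : (1 : ℂ) + ((t : ℂ) + 1) = (((2 + t : ℝ) : ℝ) : ℂ) := by push_cast; ring
    have h3 : ((((2 + t : ℝ) ^ ε : ℝ)) : ℂ) = (((2 + t : ℝ)) : ℂ) ^ (ε : ℂ) :=
      Complex.ofReal_cpow (by linarith) ε
    simp only [hF, hg, h2, ← h3]
    push_cast
    ring
  have hg_ge : ∀ t : ℝ, 0 ≤ t → t ≤ g t := by
    intro t ht
    have : 0 ≤ C * (2 + t) ^ ε := by positivity
    simp only [hg]; linarith
  have hg_tendsto : Tendsto g atTop atTop :=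
    tendsto_atTop_mono' _ ((eventually_ge_atTop 0).mono fun t ht => hg_ge t ht) tendsto_id
  -- apply Phragmén–Lindelöf
  have hzero : Set.EqOn ψ 0 {z : ℂ | 0 ≤ z.re} := by
    apply PhragmenLindelof.eq_zero_on_right_half_plane_of_superexponential_decay
    · refine ⟨hψdiff.mono fun z hz => by simp only [Set.mem_setOf_eq] at hz ⊢; linarith, ?_⟩
      refine (hψdiff.continuousOn).mono ?_
      rw [closure_setOf_lt_re]
      intro z hz
      simp only [Set.mem_setOf_eq] at hz ⊢
      linarith
    · refine ⟨1, one_lt_two, 0, ?_⟩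
      rw [Asymptotics.isBigO_iff]
      refine ⟨B, ?_⟩
      have hev0 : ∀ᶠ z : ℂ in Bornology.cobounded ℂ ⊓ Filter.principal {z : ℂ | 0 < z.re},
          0 < z.re :=
        Filter.Eventually.filter_mono inf_le_right
          (Filter.eventually_principal.2 fun z hz => hz)
      filter_upwards [hev0] with z hz
      have hz1 : 0 < (z + 1).re := by
        simp only [Complex.add_re, Complex.one_re]; linarith
      have hb := hB _ (hmaps (z + 1) hz1)
      simp only [zero_mul, Real.exp_zero, norm_one, mul_one]
      exact hb
    · intro n
      have key : Tendsto (fun t : ℝ => ‖φ ((g t : ℝ) : ℂ)‖ * Real.exp (n * g t))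
          atTop (nhds 0) := (hflat n).comp hg_tendsto
      rw [show (0 : ℝ) = 0 from rfl]
      refine squeeze_zero' ?_ ?_ key
      · filter_upwards with t
        positivity
      · filter_upwards [eventually_ge_atTop (0 : ℝ)] with t ht
        have h1 : ψ ((t : ℝ) : ℂ) = φ ((g t : ℝ) : ℂ) := by
          simp only [hψdef, hΦdef, hFreal t ht]
        rw [h1]
        have h2 : Real.exp t ^ n = Real.exp (n * t) := by
          rw [← Real.exp_nat_mul]
        rw [h2, mul_comm]
        have h3 : Real.exp (n * t) ≤ Real.exp (n * g t) :=
          Real.exp_le_exp.2 (by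
            have := hg_ge t ht
            have hn : (0 : ℝ) ≤ n := Nat.cast_nonneg n
            nlinarith)
        exact mul_le_mul_of_nonneg_left h3 (norm_nonneg _)
    · refine ⟨B, fun y => ?_⟩
      have hz1 : 0 < ((y : ℂ) * Complex.I + 1).re := by
        simp [Complex.add_re, Complex.mul_re]
      simpa using hB _ (hmaps _ hz1)
  -- so Φ vanishes on {Re ≥ 1}
  have hΦzero : ∀ w : ℂ, 1 ≤ w.re → Φ w = 0 := by
    intro w hw
    have h1 : (0 : ℝ) ≤ (w - 1).re := by
      simp only [Complex.sub_re, Complex.one_re]; linarith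
    have := hzero h1
    simpa only [hψdef, sub_add_cancel, Pi.zero_apply] using this
  -- identity theorem on the half plane
  have hopen2 : IsOpen {z : ℂ | 0 < z.re} := isOpen_lt continuous_const Complex.continuous_re
  have han : AnalyticOnNhd ℂ Φ {z : ℂ | 0 < z.re} := hΦdiff.analyticOnNhd hopen2
  have hpre : IsPreconnected {z : ℂ | 0 < z.re} := (convex_halfSpace_re_gt 0).isPreconnected
  have h2mem : (2 : ℂ) ∈ {z : ℂ | 0 < z.re} := by norm_num [Set.mem_setOf_eq]
  have hev : Φ =ᶠ[nhds (2 : ℂ)] 0 := by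
    have ho : IsOpen {z : ℂ | 1 < z.re} := isOpen_lt continuous_const Complex.continuous_re
    have hmem : (2 : ℂ) ∈ {z : ℂ | 1 < z.re} := by norm_num [Set.mem_setOf_eq]
    filter_upwards [ho.mem_nhds hmem] with z hz
    exact hΦzero z (le_of_lt hz)
  have heq : Set.EqOn Φ 0 {z : ℂ | 0 < z.re} :=
    han.eqOn_zero_of_preconnected_of_eventuallyEq_zero hpre h2mem hev
  rintro z ⟨w, hw, rfl⟩
  exact heq hw
end

section
/- Let 𝒞 be the ring of germs at +∞ of continuous functions ℝ → ℝ, let M be an asymptotic scale (a multiplicative ℝ-vector subspace of positive germs in a Hardy field such that distinct elements lie in distinct archimedean classes). If f, g ∈ 𝒞 have asymptotic expansions F = Σ a_m m and G = Σ b_m m in ℝ[[M]] respectively (with M-natural support), then f + g has asymptotic expansion F + G and f·g has asymptotic expansion F·G. -/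
open Filter

/-- `f ≺ g`: `g` is ultimately nonzero and `f/g → 0` at `+∞`. -/
def Prec (f g : ℝ → ℝ) : Prop :=
  (∀ᶠ x in atTop, g x ≠ 0) ∧ Tendsto (fun x => f x / g x) atTop (nhds 0)

/-- `f ≍ g`: same archimedean class. -/
def AsympEq (f g : ℝ → ℝ) : Prop := f =O[atTop] g ∧ g =O[atTop] f

/-- `M` is an asymptotic scale: a multiplicative `ℝ`-vector subspace of the positive
germs of a Hardy field such that distinct elements lie in distinct archimedean
classes. -/
structure AsymScale (M : Set (ℝ → ℝ)) : Prop where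
  pos : ∀ m ∈ M, ∀ x, 0 < m x
  one_mem : (fun _ : ℝ => (1 : ℝ)) ∈ M
  mul_mem : ∀ m ∈ M, ∀ n ∈ M, (fun x => m x * n x) ∈ M
  rpow_mem : ∀ m ∈ M, ∀ r : ℝ, (fun x => m x ^ r) ∈ M
  total : ∀ m ∈ M, ∀ n ∈ M, m = n ∨ Prec m n ∨ Prec n m
  scale : ∀ m ∈ M, ∀ n ∈ M, AsympEq m n → m = n

/-- `f` has asymptotic expansion `F = Σ_{m ∈ M} a m · m` (at `+∞`): the support of the
coefficient function `a` is contained in `M` and is `M`-natural, and for every `n ∈ M`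
the difference between `f` and the truncation `Σ_{m ≥ n} a m · m` is `≺ n`. -/
def HasAE (M : Set (ℝ → ℝ)) (f : ℝ → ℝ) (a : (ℝ → ℝ) → ℝ) : Prop :=
  (∀ m, a m ≠ 0 → m ∈ M) ∧
  (∀ n ∈ M, {m : ℝ → ℝ | a m ≠ 0 ∧ Prec n m}.Finite) ∧
  ∀ n ∈ M, ∀ hfin : {m : ℝ → ℝ | a m ≠ 0 ∧ (m = n ∨ Prec n m)}.Finite,
    Prec (fun x => f x - ∑ m ∈ hfin.toFinset, a m * m x) n

namespace Aux

/-- `n ≼ m` -/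
abbrev ple (n m : ℝ → ℝ) : Prop := m = n ∨ Prec n m

theorem prec_congr {f f' n : ℝ → ℝ} (h : ∀ x, f x = f' x) (hp : Prec f n) : Prec f' n := by
  refine ⟨hp.1, hp.2.congr fun x => by rw [h]⟩

theorem prec_add {f g n : ℝ → ℝ} (hf : Prec f n) (hg : Prec g n) :
    Prec (fun x => f x + g x) n := by
  refine ⟨hf.1, ?_⟩
  have := hf.2.add hg.2
  simp only [add_zero] at this
  exact this.congr fun x => (add_div _ _ _).symm

theorem prec_const_mul {f n : ℝ → ℝ} (c : ℝ) (hf : Prec f n) :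
    Prec (fun x => c * f x) n := by
  refine ⟨hf.1, ?_⟩
  have := hf.2.const_mul c
  simp only [mul_zero] at this
  exact this.congr fun x => (mul_div_assoc _ _ _).symm

theorem prec_zero {n : ℝ → ℝ} (hn : ∀ x, 0 < n x) : Prec (fun _ => (0:ℝ)) n := by
  refine ⟨Eventually.of_forall fun x => (hn x).ne', ?_⟩
  simpa using tendsto_const_nhds.congr fun x => (zero_div _).symm

theorem prec_sum {ι : Type*} {n : ℝ → ℝ} (hn : ∀ x, 0 < n x) (s : Finset ι)
    (h : ι → ℝ → ℝ) (hs : ∀ i ∈ s, Prec (h i) n) :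
    Prec (fun x => ∑ i ∈ s, h i x) n := by
  classical
  induction s using Finset.induction_on with
  | empty => simpa using prec_zero hn
  | @insert i t hni ih =>
    have h1 := hs i (Finset.mem_insert_self i t)
    have h2 := ih fun j hj => hs j (Finset.mem_insert_of_mem hj)
    exact prec_congr (fun x => by rw [Finset.sum_insert hni]) (prec_add h1 h2)

theorem prec_trans_ple {f u w : ℝ → ℝ} (hf : Prec f u) (h : ple u w) : Prec f w := by
  rcases h with rfl | h
  · exact hf
  · refine ⟨h.1, ?_⟩
    have := hf.2.mul h.2
    simp only [mul_zero] at this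
    refine this.congr' ?_
    filter_upwards [hf.1] with x hx
    field_simp

theorem ple_trans {u v w : ℝ → ℝ} (h1 : ple u v) (h2 : ple v w) : ple u w := by
  rcases h1 with rfl | h1
  · exact h2
  · exact Or.inr (prec_trans_ple h1 h2)

theorem prec_mul_prec {f g u v : ℝ → ℝ} (hf : Prec f u) (hg : Prec g v) :
    Prec (fun x => f x * g x) (fun x => u x * v x) := by
  refine ⟨?_, ?_⟩
  · filter_upwards [hf.1, hg.1] with x h1 h2 using mul_ne_zero h1 h2
  · have := hf.2.mul hg.2
    simp only [mul_zero] at this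
    exact this.congr fun x => by rw [div_mul_div_comm]

theorem prec_mul_right {f u r : ℝ → ℝ} (hr : ∀ x, 0 < r x) (hf : Prec f u) :
    Prec (fun x => f x * r x) (fun x => u x * r x) := by
  refine ⟨?_, ?_⟩
  · filter_upwards [hf.1] with x hx using mul_ne_zero hx (hr x).ne'
  · exact hf.2.congr fun x => by rw [mul_div_mul_right _ _ (hr x).ne']

theorem prec_mul_left {f v r : ℝ → ℝ} (hr : ∀ x, 0 < r x) (hf : Prec f v) :
    Prec (fun x => r x * f x) (fun x => r x * v x) := by
  refine ⟨?_, ?_⟩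
  · filter_upwards [hf.1] with x hx using mul_ne_zero (hr x).ne' hx
  · exact hf.2.congr fun x => by rw [mul_div_mul_left _ _ (hr x).ne']

theorem ple_mul_right {u u' w : ℝ → ℝ} (hw : ∀ x, 0 < w x) (h : ple u u') :
    ple (fun x => u x * w x) (fun x => u' x * w x) := by
  rcases h with rfl | h
  · exact Or.inl rfl
  · refine Or.inr ⟨?_, ?_⟩
    · filter_upwards [h.1] with x hx using mul_ne_zero hx (hw x).ne'
    · refine h.2.congr' ?_
      filter_upwards [h.1] with x hx
      rw [mul_div_mul_right _ _ (hw x).ne']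

theorem ple_mul_left {v v' w : ℝ → ℝ} (hw : ∀ x, 0 < w x) (h : ple v v') :
    ple (fun x => w x * v x) (fun x => w x * v' x) := by
  rcases h with rfl | h
  · exact Or.inl rfl
  · refine Or.inr ⟨?_, ?_⟩
    · filter_upwards [h.1] with x hx using mul_ne_zero (hw x).ne' hx
    · refine h.2.congr' ?_
      filter_upwards [h.1] with x hx
      rw [mul_div_mul_left _ _ (hw x).ne']

theorem ple_mul_ple {u u' v v' : ℝ → ℝ} (hu' : ∀ x, 0 < u' x) (hv : ∀ x, 0 < v x)
    (h1 : ple u u') (h2 : ple v v') :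
    ple (fun x => u x * v x) (fun x => u' x * v' x) :=
  ple_trans (ple_mul_right hv h1) (ple_mul_left hu' h2)

theorem ple_congr {u u' v v' : ℝ → ℝ} (h1 : u = u') (h2 : v = v') (h : ple u v) :
    ple u' v' := h1 ▸ h2 ▸ h

theorem exists_min {M : Set (ℝ → ℝ)} (hM : AsymScale M) (s : Finset (ℝ → ℝ))
    (hs : s.Nonempty) (hsub : ∀ m ∈ s, m ∈ M) : ∃ u ∈ M, ∀ m ∈ s, ple u m := by
  classical
  induction s using Finset.induction_on with
  | empty => exact absurd hs (by simp)
  | @insert q t hq ih =>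
    have hqM : q ∈ M := hsub q (Finset.mem_insert_self q t)
    rcases t.eq_empty_or_nonempty with rfl | ht
    · exact ⟨q, hqM, by simp [ple]⟩
    · obtain ⟨u, huM, hmin⟩ := ih ht fun m hm => hsub m (Finset.mem_insert_of_mem hm)
      rcases hM.total q hqM u huM with h | h | h
      · exact ⟨u, huM, fun m hm => by
          rcases Finset.mem_insert.1 hm with rfl | hm
          · exact Or.inl h
          · exact hmin m hm⟩
      · exact ⟨q, hqM, fun m hm => by
          rcases Finset.mem_insert.1 hm with rfl | hm
          · exact Or.inl rfl
          · exact ple_trans (Or.inr h) (hmin m hm)⟩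
      · exact ⟨u, huM, fun m hm => by
          rcases Finset.mem_insert.1 hm with rfl | hm
          · exact Or.inr h
          · exact hmin m hm⟩

theorem exists_max {M : Set (ℝ → ℝ)} (hM : AsymScale M) (s : Finset (ℝ → ℝ))
    (hs : s.Nonempty) (hsub : ∀ m ∈ s, m ∈ M) : ∃ u ∈ M, ∀ m ∈ s, ple m u := by
  classical
  induction s using Finset.induction_on with
  | empty => exact absurd hs (by simp)
  | @insert q t hq ih =>
    have hqM : q ∈ M := hsub q (Finset.mem_insert_self q t)
    rcases t.eq_empty_or_nonempty with rfl | ht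
    · exact ⟨q, hqM, by simp [ple]⟩
    · obtain ⟨u, huM, hmax⟩ := ih ht fun m hm => hsub m (Finset.mem_insert_of_mem hm)
      rcases hM.total q hqM u huM with h | h | h
      · exact ⟨u, huM, fun m hm => by
          rcases Finset.mem_insert.1 hm with rfl | hm
          · exact Or.inl h.symm
          · exact hmax m hm⟩
      · exact ⟨u, huM, fun m hm => by
          rcases Finset.mem_insert.1 hm with rfl | hm
          · exact Or.inr h
          · exact hmax m hm⟩
      · exact ⟨q, hqM, fun m hm => by
          rcases Finset.mem_insert.1 hm with rfl | hm
          · exact Or.inl rfl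
          · exact ple_trans (hmax m hm) (Or.inr h)⟩

theorem supp_max {M : Set (ℝ → ℝ)} (hM : AsymScale M) {a : (ℝ → ℝ) → ℝ}
    (hsa : ∀ m, a m ≠ 0 → m ∈ M)
    (hna : ∀ n ∈ M, {m : ℝ → ℝ | a m ≠ 0 ∧ Prec n m}.Finite) :
    ∃ w ∈ M, ∀ q, a q ≠ 0 → ple q w := by
  classical
  by_cases h : ∃ q0, a q0 ≠ 0
  · obtain ⟨q0, hq0⟩ := h
    have hq0M := hsa q0 hq0
    have hfin := hna q0 hq0M
    obtain ⟨w, hwM, hmax⟩ := exists_max hM (insert q0 hfin.toFinset)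
      ⟨q0, Finset.mem_insert_self _ _⟩ (by
        intro m hm
        rcases Finset.mem_insert.1 hm with rfl | hm
        · exact hq0M
        · exact hsa m ((hfin.mem_toFinset.1 hm).1))
    refine ⟨w, hwM, fun q hq => ?_⟩
    rcases hM.total q (hsa q hq) q0 hq0M with h | h | h
    · exact h ▸ hmax q0 (Finset.mem_insert_self _ _)
    · exact ple_trans (Or.inr h) (hmax q0 (Finset.mem_insert_self _ _))
    · exact hmax q (Finset.mem_insert_of_mem (hfin.mem_toFinset.2 ⟨hq, h⟩))
  · push_neg at h
    exact ⟨(fun _ => (1:ℝ)), hM.one_mem, fun q hq => absurd (h q) hq⟩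

theorem inv_cancel {n w : ℝ → ℝ} (hw : ∀ x, 0 < w x) :
    (fun x => (n x * w x ^ (-1:ℝ)) * w x) = n := by
  funext x
  rw [Real.rpow_neg_one, inv_mul_cancel_right₀ (hw x).ne']

theorem ple_of_ple_mul {n q w : ℝ → ℝ} (hq : ∀ x, 0 < q x) (hw : ∀ x, 0 < w x)
    (h : ple n (fun x => q x * w x)) :
    ple (fun x => n x * w x ^ (-1:ℝ)) q := by
  have hwi : ∀ x, 0 < w x ^ (-1:ℝ) := fun x => Real.rpow_pos_of_pos (hw x) _
  have h2 := ple_mul_right (u := n) (u' := fun x => q x * w x) hwi h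
  refine ple_congr rfl ?_ h2
  funext x
  show q x * w x * w x ^ (-1:ℝ) = q x
  rw [Real.rpow_neg_one, mul_inv_cancel_right₀ (hw x).ne']

theorem pairs_finite {M : Set (ℝ → ℝ)} (hM : AsymScale M) {a b : (ℝ → ℝ) → ℝ}
    (hsa : ∀ m, a m ≠ 0 → m ∈ M) (hsb : ∀ m, b m ≠ 0 → m ∈ M)
    (hna : ∀ n ∈ M, {m : ℝ → ℝ | a m ≠ 0 ∧ Prec n m}.Finite)
    (hnb : ∀ n ∈ M, {m : ℝ → ℝ | b m ≠ 0 ∧ Prec n m}.Finite)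
    {n : ℝ → ℝ} (hn : n ∈ M) :
    {z : (ℝ → ℝ) × (ℝ → ℝ) |
      a z.1 ≠ 0 ∧ b z.2 ≠ 0 ∧ ple n (fun x => z.1 x * z.2 x)}.Finite := by
  classical
  obtain ⟨w, hwM, hwmax⟩ := supp_max hM hsb hnb
  set n' : ℝ → ℝ := fun x => n x * w x ^ (-1:ℝ) with hn'def
  have hn'M : n' ∈ M := hM.mul_mem n hn _ (hM.rpow_mem w hwM (-1))
  have hQfin : (insert n' {q : ℝ → ℝ | a q ≠ 0 ∧ Prec n' q}).Finite :=
    (hna n' hn'M).insert n'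
  set R : (ℝ → ℝ) → Set ((ℝ → ℝ) × (ℝ → ℝ)) := fun q =>
    (fun r => (q, r)) '' (insert (fun x => n x * q x ^ (-1:ℝ))
      {r : ℝ → ℝ | b r ≠ 0 ∧ Prec (fun x => n x * q x ^ (-1:ℝ)) r}) with hRdef
  have hUfin : (⋃ q ∈ insert n' {q : ℝ → ℝ | a q ≠ 0 ∧ Prec n' q}, R q).Finite := by
    refine Set.Finite.biUnion hQfin (fun q hq => ?_)
    have hqM : q ∈ M := by
      rcases hq with rfl | hq
      · exact hn'M
      · exact hsa q hq.1
    exact Set.Finite.image (fun r => (q, r))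
      ((hnb (fun x => n x * q x ^ (-1:ℝ))
        (hM.mul_mem n hn _ (hM.rpow_mem q hqM (-1)))).insert
        (fun x => n x * q x ^ (-1:ℝ)))
  refine hUfin.subset ?_
  rintro ⟨q, r⟩ ⟨haq, hbr, hple⟩
  have hqM := hsa q haq
  have hrM := hsb r hbr
  have hqpos := hM.pos q hqM
  have hrpos := hM.pos r hrM
  have hwpos := hM.pos w hwM
  have hq1 : ple n' q := by
    have h1 : ple (fun x => q x * r x) (fun x => q x * w x) :=
      ple_mul_left hqpos (hwmax r hbr)
    exact ple_of_ple_mul hqpos hwpos (ple_trans hple h1)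
  have hr1 : ple (fun x => n x * q x ^ (-1:ℝ)) r := by
    refine ple_of_ple_mul hrpos hqpos (ple_trans hple ?_)
    exact Or.inl (funext fun x => mul_comm _ _)
  have hqmem : q ∈ insert n' {q : ℝ → ℝ | a q ≠ 0 ∧ Prec n' q} := by
    rcases hq1 with h | h
    · exact Set.mem_insert_iff.2 (Or.inl h)
    · exact Set.mem_insert_iff.2 (Or.inr ⟨haq, h⟩)
  refine Set.mem_biUnion hqmem ?_
  exact ⟨r, by
    rcases hr1 with h | h
    · exact Set.mem_insert_iff.2 (Or.inl h)
    · exact Set.mem_insert_iff.2 (Or.inr ⟨hbr, h⟩), rfl⟩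

theorem conv_fiber_finite {M : Set (ℝ → ℝ)} (hM : AsymScale M) {a b : (ℝ → ℝ) → ℝ}
    (hsa : ∀ m, a m ≠ 0 → m ∈ M) (hsb : ∀ m, b m ≠ 0 → m ∈ M)
    (hna : ∀ n ∈ M, {m : ℝ → ℝ | a m ≠ 0 ∧ Prec n m}.Finite)
    (hnb : ∀ n ∈ M, {m : ℝ → ℝ | b m ≠ 0 ∧ Prec n m}.Finite)
    (p : ℝ → ℝ) :
    {q : ℝ → ℝ | a q ≠ 0 ∧ b (fun x => p x / q x) ≠ 0}.Finite := by
  classical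
  rcases Set.eq_empty_or_nonempty
    {q : ℝ → ℝ | a q ≠ 0 ∧ b (fun x => p x / q x) ≠ 0} with he | ⟨q0, hq01, hq02⟩
  · rw [he]; exact Set.finite_empty
  have hq0M := hsa q0 hq01
  have hq0pos := hM.pos q0 hq0M
  have hpeq : (fun x => q0 x * (fun x => p x / q0 x) x) = p := by
    funext x
    rw [mul_comm, div_mul_cancel₀ _ (hq0pos x).ne']
  have hpM : p ∈ M := hpeq ▸ hM.mul_mem q0 hq0M _ (hsb _ hq02)
  refine Set.Finite.of_finite_image (f := fun q => (q, fun x => p x / q x))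
    (Set.Finite.subset (pairs_finite hM hsa hsb hna hnb hpM) ?_) ?_
  · rintro ⟨q, r⟩ ⟨q', ⟨hq1, hq2⟩, heq⟩
    obtain ⟨rfl, rfl⟩ := Prod.mk.injEq .. ▸ heq
    refine ⟨hq1, hq2, Or.inl ?_⟩
    funext x
    exact (mul_comm _ _).trans (div_mul_cancel₀ _ (hM.pos q' (hsa q' hq1) x).ne')
  · intro q1 _ q2 _ h
    exact congrArg Prod.fst h

end Aux

/-- If `f` and `g` (germs at `+∞` of continuous functions) have asymptotic expansions
`F = Σ a_m m` and `G = Σ b_m m` in `ℝ[[M]]`, then `f + g` has asymptotic expansion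
`F + G` and `f·g` has asymptotic expansion `F·G` (the Hahn convolution product, which
is well defined: for each monomial only finitely many pairs contribute). -/
theorem stmt15 (M : Set (ℝ → ℝ)) (hM : AsymScale M)
    (f g : ℝ → ℝ) (hfc : Continuous f) (hgc : Continuous g)
    (a b : (ℝ → ℝ) → ℝ) (hfa : HasAE M f a) (hgb : HasAE M g b) :
    HasAE M (fun x => f x + g x) (fun m => a m + b m) ∧
    (∀ p : ℝ → ℝ, {q : ℝ → ℝ | a q ≠ 0 ∧ b (fun x => p x / q x) ≠ 0}.Finite) ∧
    HasAE M (fun x => f x * g x)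
      (fun p => ∑ᶠ q : ℝ → ℝ, a q * b fun x => p x / q x) := by
  classical
  obtain ⟨hsa, hna, hta⟩ := hfa
  obtain ⟨hsb, hnb, htb⟩ := hgb
  set c : (ℝ → ℝ) → ℝ := fun p => ∑ᶠ q : ℝ → ℝ, a q * b fun x => p x / q x with hcdef
  have hfiber : ∀ p : ℝ → ℝ, {q : ℝ → ℝ | a q ≠ 0 ∧ b (fun x => p x / q x) ≠ 0}.Finite :=
    fun p => Aux.conv_fiber_finite hM hsa hsb hna hnb p
  have hcsupp : ∀ p, c p ≠ 0 → ∃ q, a q ≠ 0 ∧ b (fun x => p x / q x) ≠ 0 := by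
    intro p hp
    by_contra h
    push_neg at h
    refine hp (finsum_eq_zero_of_forall_eq_zero fun q => ?_)
    rcases eq_or_ne (a q) 0 with h0 | h0
    · rw [h0, zero_mul]
    · rw [h q h0, mul_zero]
  have hdivmul : ∀ (p q : ℝ → ℝ), (∀ x, 0 < q x) → (fun x => q x * (p x / q x)) = p :=
    fun p q hq => funext fun x => (mul_comm _ _).trans (div_mul_cancel₀ _ (hq x).ne')
  refine ⟨⟨?_, ?_, ?_⟩, hfiber, ?_, ?_, ?_⟩
  · -- sum support
    intro m hm
    rcases eq_or_ne (a m) 0 with h | h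
    · exact hsb m (by intro hb; exact hm (show a m + b m = 0 by rw [h, hb, add_zero]))
    · exact hsa m h
  · -- sum naturality
    intro n hn
    refine ((hna n hn).union (hnb n hn)).subset ?_
    rintro m ⟨hm, hp⟩
    rcases eq_or_ne (a m) 0 with h | h
    · exact Or.inr ⟨fun hb => hm (show a m + b m = 0 by rw [h, hb, add_zero]), hp⟩
    · exact Or.inl ⟨h, hp⟩
  · -- sum truncation
    intro n hn hfin
    have hfinA : {m : ℝ → ℝ | a m ≠ 0 ∧ (m = n ∨ Prec n m)}.Finite := by
      refine ((hna n hn).insert n).subset ?_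
      rintro m ⟨h1, rfl | h2⟩
      · exact Set.mem_insert _ _
      · exact Set.mem_insert_of_mem _ ⟨h1, h2⟩
    have hfinB : {m : ℝ → ℝ | b m ≠ 0 ∧ (m = n ∨ Prec n m)}.Finite := by
      refine ((hnb n hn).insert n).subset ?_
      rintro m ⟨h1, rfl | h2⟩
      · exact Set.mem_insert _ _
      · exact Set.mem_insert_of_mem _ ⟨h1, h2⟩
    have hA := hta n hn hfinA
    have hB := htb n hn hfinB
    refine Aux.prec_congr (f := fun x =>
      (f x - ∑ m ∈ hfinA.toFinset, a m * m x) + (g x - ∑ m ∈ hfinB.toFinset, b m * m x))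
      ?_ (Aux.prec_add hA hB)
    intro x
    have hU : ∀ m, m ∈ hfin.toFinset ∪ hfinA.toFinset ∪ hfinB.toFinset →
        (m = n ∨ Prec n m) := by
      intro m hm
      rcases Finset.mem_union.1 hm with hm | hm
      · rcases Finset.mem_union.1 hm with hm | hm
        · exact (hfin.mem_toFinset.1 hm).2
        · exact (hfinA.mem_toFinset.1 hm).2
      · exact (hfinB.mem_toFinset.1 hm).2
    have e1 : ∑ m ∈ hfin.toFinset, (a m + b m) * m x
        = ∑ m ∈ hfin.toFinset ∪ hfinA.toFinset ∪ hfinB.toFinset, (a m + b m) * m x := by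
      refine Finset.sum_subset (by intro m hm; exact Finset.mem_union_left _ (Finset.mem_union_left _ hm)) ?_
      intro m hm hm'
      have : ¬(a m + b m ≠ 0 ∧ (m = n ∨ Prec n m)) := fun h => hm' (hfin.mem_toFinset.2 h)
      rcases not_and_or.1 this with h | h
      · rw [not_ne_iff.1 h, zero_mul]
      · exact absurd (hU m hm) h
    have e2 : ∑ m ∈ hfinA.toFinset, a m * m x
        = ∑ m ∈ hfin.toFinset ∪ hfinA.toFinset ∪ hfinB.toFinset, a m * m x := by
      refine Finset.sum_subset (by intro m hm; exact Finset.mem_union_left _ (Finset.mem_union_right _ hm)) ?_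
      intro m hm hm'
      have : ¬(a m ≠ 0 ∧ (m = n ∨ Prec n m)) := fun h => hm' (hfinA.mem_toFinset.2 h)
      rcases not_and_or.1 this with h | h
      · rw [not_ne_iff.1 h, zero_mul]
      · exact absurd (hU m hm) h
    have e3 : ∑ m ∈ hfinB.toFinset, b m * m x
        = ∑ m ∈ hfin.toFinset ∪ hfinA.toFinset ∪ hfinB.toFinset, b m * m x := by
      refine Finset.sum_subset (by intro m hm; exact Finset.mem_union_right _ hm) ?_
      intro m hm hm'
      have : ¬(b m ≠ 0 ∧ (m = n ∨ Prec n m)) := fun h => hm' (hfinB.mem_toFinset.2 h)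
      rcases not_and_or.1 this with h | h
      · rw [not_ne_iff.1 h, zero_mul]
      · exact absurd (hU m hm) h
    show (f x - ∑ m ∈ hfinA.toFinset, a m * m x) + (g x - ∑ m ∈ hfinB.toFinset, b m * m x)
      = (f x + g x) - ∑ m ∈ hfin.toFinset, (a m + b m) * m x
    rw [e1, e2, e3]
    rw [Finset.sum_congr rfl (fun m _ => add_mul (a m) (b m) (m x)), Finset.sum_add_distrib]
    ring
  · -- product support
    intro p hp
    obtain ⟨q, hq1, hq2⟩ := hcsupp p hp
    have := hM.mul_mem q (hsa q hq1) _ (hsb _ hq2)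
    rwa [hdivmul p q (hM.pos q (hsa q hq1))] at this
  · -- product naturality
    intro n hn
    refine ((Aux.pairs_finite hM hsa hsb hna hnb hn).image
      (fun z => fun x => z.1 x * z.2 x)).subset ?_
    rintro p ⟨hp, hprec⟩
    obtain ⟨q, hq1, hq2⟩ := hcsupp p hp
    have heq : (fun x => q x * (p x / q x)) = p := hdivmul p q (hM.pos q (hsa q hq1))
    exact ⟨(q, fun x => p x / q x), ⟨hq1, hq2, by rw [show (fun x => q x * (p x / q x)) = p from heq]; exact Or.inr hprec⟩, heq⟩
  · -- product truncation
    intro n hn hfinT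
    have hnpos := hM.pos n hn
    obtain ⟨qm, hqmM, hqmax⟩ := Aux.supp_max hM hsa hna
    obtain ⟨rm, hrmM, hrmax⟩ := Aux.supp_max hM hsb hnb
    have hqmpos := hM.pos qm hqmM
    have hrmpos := hM.pos rm hrmM
    have hPfin : {z : (ℝ → ℝ) × (ℝ → ℝ) |
        a z.1 ≠ 0 ∧ b z.2 ≠ 0 ∧ Aux.ple n (fun x => z.1 x * z.2 x)}.Finite :=
      Aux.pairs_finite hM hsa hsb hna hnb hn
    -- choose v
    obtain ⟨v, hvM, hvmin⟩ := Aux.exists_min hM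
      (insert (fun x => n x * qm x ^ (-1:ℝ)) (hPfin.image Prod.snd).toFinset)
      ⟨_, Finset.mem_insert_self _ _⟩
      (by
        intro m hm
        rcases Finset.mem_insert.1 hm with rfl | hm
        · exact hM.mul_mem n hn _ (hM.rpow_mem qm hqmM (-1))
        · obtain ⟨z, hz, rfl⟩ := ((hPfin.image Prod.snd).mem_toFinset).1 hm
          exact hsb _ hz.2.1)
    have hvpos := hM.pos v hvM
    have hv_q : Aux.ple v (fun x => n x * qm x ^ (-1:ℝ)) :=
      hvmin _ (Finset.mem_insert_self _ _)
    -- choose u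
    obtain ⟨u, huM, humin⟩ := Aux.exists_min hM
      (insert (fun x => n x * rm x ^ (-1:ℝ))
        (insert (fun x => n x * v x ^ (-1:ℝ)) (hPfin.image Prod.fst).toFinset))
      ⟨_, Finset.mem_insert_self _ _⟩
      (by
        intro m hm
        rcases Finset.mem_insert.1 hm with rfl | hm
        · exact hM.mul_mem n hn _ (hM.rpow_mem rm hrmM (-1))
        rcases Finset.mem_insert.1 hm with rfl | hm
        · exact hM.mul_mem n hn _ (hM.rpow_mem v hvM (-1))
        · obtain ⟨z, hz, rfl⟩ := ((hPfin.image Prod.fst).mem_toFinset).1 hm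
          exact hsa _ hz.1)
    have hupos := hM.pos u huM
    have hu_r : Aux.ple u (fun x => n x * rm x ^ (-1:ℝ)) :=
      humin _ (Finset.mem_insert_self _ _)
    have hu_nv : Aux.ple u (fun x => n x * v x ^ (-1:ℝ)) :=
      humin _ (Finset.mem_insert_of_mem (Finset.mem_insert_self _ _))
    have hPu : ∀ z ∈ {z : (ℝ → ℝ) × (ℝ → ℝ) |
        a z.1 ≠ 0 ∧ b z.2 ≠ 0 ∧ Aux.ple n (fun x => z.1 x * z.2 x)}, Aux.ple u z.1 :=
      fun z hz => humin z.1 (Finset.mem_insert_of_mem (Finset.mem_insert_of_mem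
        (((hPfin.image Prod.fst).mem_toFinset).2 (Set.mem_image_of_mem Prod.fst hz))))
    have hPv : ∀ z ∈ {z : (ℝ → ℝ) × (ℝ → ℝ) |
        a z.1 ≠ 0 ∧ b z.2 ≠ 0 ∧ Aux.ple n (fun x => z.1 x * z.2 x)}, Aux.ple v z.2 :=
      fun z hz => hvmin z.2 (Finset.mem_insert_of_mem
        (((hPfin.image Prod.snd).mem_toFinset).2 (Set.mem_image_of_mem Prod.snd hz)))
    -- key ple facts
    have hur : ∀ r, b r ≠ 0 → Aux.ple (fun x => u x * r x) n := by
      intro r hr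
      have h1 : Aux.ple (fun x => u x * r x)
          (fun x => (n x * rm x ^ (-1:ℝ)) * rm x) :=
        Aux.ple_mul_ple (fun x => mul_pos (hnpos x) (Real.rpow_pos_of_pos (hrmpos x) _))
          (hM.pos r (hsb r hr)) hu_r (hrmax r hr)
      exact Aux.ple_congr rfl (Aux.inv_cancel hrmpos) h1
    have hqv : ∀ q, a q ≠ 0 → Aux.ple (fun x => q x * v x) n := by
      intro q hq
      have h1 : Aux.ple (fun x => q x * v x)
          (fun x => qm x * (n x * qm x ^ (-1:ℝ))) :=
        Aux.ple_mul_ple hqmpos hvpos (hqmax q hq) hv_q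
      refine Aux.ple_congr rfl ?_ h1
      funext x
      rw [Real.rpow_neg_one, mul_comm (qm x), inv_mul_cancel_right₀ (hqmpos x).ne']
    have huv : Aux.ple (fun x => u x * v x) n :=
      Aux.ple_congr rfl (Aux.inv_cancel hvpos) (Aux.ple_mul_right hvpos hu_nv)
    -- truncations
    have hSa : {m : ℝ → ℝ | a m ≠ 0 ∧ (m = u ∨ Prec u m)}.Finite := by
      refine ((hna u huM).insert u).subset ?_
      rintro m ⟨h1, rfl | h2⟩
      · exact Set.mem_insert _ _
      · exact Set.mem_insert_of_mem _ ⟨h1, h2⟩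
    have hSb : {m : ℝ → ℝ | b m ≠ 0 ∧ (m = v ∨ Prec v m)}.Finite := by
      refine ((hnb v hvM).insert v).subset ?_
      rintro m ⟨h1, rfl | h2⟩
      · exact Set.mem_insert _ _
      · exact Set.mem_insert_of_mem _ ⟨h1, h2⟩
    have hef := hta u huM hSa
    have heg := htb v hvM hSb
    -- membership helper
    have hzK : ∀ p : ℝ → ℝ, Aux.ple n p → ∀ q, a q ≠ 0 → b (fun x => p x / q x) ≠ 0 →
        (fun x => q x * (p x / q x)) = p ∧
        (q, fun x => p x / q x) ∈ (hSa.toFinset ×ˢ hSb.toFinset).filter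
          (fun z => Aux.ple n (fun x => z.1 x * z.2 x)) := by
      intro p hplep q hq1 hq2
      have hqpos := hM.pos q (hsa q hq1)
      have heq : (fun x => q x * (p x / q x)) = p := hdivmul p q hqpos
      have hplemul : Aux.ple n (fun x => q x * (p x / q x)) := by rw [heq]; exact hplep
      have hzPS : (q, fun x => p x / q x) ∈ {z : (ℝ → ℝ) × (ℝ → ℝ) |
          a z.1 ≠ 0 ∧ b z.2 ≠ 0 ∧ Aux.ple n (fun x => z.1 x * z.2 x)} :=
        ⟨hq1, hq2, hplemul⟩
      refine ⟨heq, Finset.mem_filter.2 ⟨Finset.mem_product.2 ⟨?_, ?_⟩, hplemul⟩⟩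
      · exact hSa.mem_toFinset.2 ⟨hq1, hPu _ hzPS⟩
      · exact hSb.mem_toFinset.2 ⟨hq2, hPv _ hzPS⟩
    have hIple : ∀ p ∈ ((hSa.toFinset ×ˢ hSb.toFinset).filter
          (fun z => Aux.ple n (fun x => z.1 x * z.2 x))).image
          (fun z => fun x => z.1 x * z.2 x), Aux.ple n p := by
      intro p hp
      obtain ⟨z, hz, rfl⟩ := Finset.mem_image.1 hp
      exact (Finset.mem_filter.1 hz).2
    have hTsubI : hfinT.toFinset ⊆ ((hSa.toFinset ×ˢ hSb.toFinset).filter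
          (fun z => Aux.ple n (fun x => z.1 x * z.2 x))).image
          (fun z => fun x => z.1 x * z.2 x) := by
      intro p hp
      obtain ⟨hc0, hple⟩ := hfinT.mem_toFinset.1 hp
      obtain ⟨q, hq1, hq2⟩ := hcsupp p hc0
      obtain ⟨heq, hK⟩ := hzK p hple q hq1 hq2
      exact Finset.mem_image.2 ⟨_, hK, heq⟩
    -- fiber sums equal c p
    have hfibsum : ∀ p ∈ ((hSa.toFinset ×ˢ hSb.toFinset).filter
          (fun z => Aux.ple n (fun x => z.1 x * z.2 x))).image
          (fun z => fun x => z.1 x * z.2 x),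
        ∑ z ∈ ((hSa.toFinset ×ˢ hSb.toFinset).filter
          (fun z => Aux.ple n (fun x => z.1 x * z.2 x))).filter
          (fun z => (fun x => z.1 x * z.2 x) = p), a z.1 * b z.2 = c p := by
      intro p hpI
      have hplep := hIple p hpI
      have hsf : (Function.support (fun q => a q * b (fun x => p x / q x))).Finite := by
        refine (hfiber p).subset ?_
        intro q hq
        exact mul_ne_zero_iff.1 hq
      rw [hcdef]
      show _ = ∑ᶠ q : ℝ → ℝ, a q * b fun x => p x / q x
      rw [finsum_eq_sum _ hsf]
      refine (Finset.sum_bij' (fun q _ => ((q, fun x => p x / q x) : (ℝ → ℝ) × (ℝ → ℝ)))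
        (fun z _ => z.1) ?_ ?_ ?_ ?_ ?_).symm
      · intro q hq
        have hq' := mul_ne_zero_iff.1 (Function.mem_support.1 (hsf.mem_toFinset.1 hq))
        obtain ⟨heq, hK⟩ := hzK p hplep q hq'.1 hq'.2
        exact Finset.mem_filter.2 ⟨hK, heq⟩
      · intro z hz
        obtain ⟨hzK', hzp⟩ := Finset.mem_filter.1 hz
        obtain ⟨hzprod, _⟩ := Finset.mem_filter.1 hzK'
        obtain ⟨hz1, hz2⟩ := Finset.mem_product.1 hzprod
        have ha1 := (hSa.mem_toFinset.1 hz1).1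
        have hb2 := (hSb.mem_toFinset.1 hz2).1
        have hz1pos := hM.pos z.1 (hsa z.1 ha1)
        have hsnd : z.2 = fun x => p x / z.1 x := by
          funext x
          have := congrFun hzp x
          field_simp [(hz1pos x).ne']
          linarith [this]
        refine hsf.mem_toFinset.2 (Function.mem_support.2 (mul_ne_zero ha1 ?_))
        rw [← hsnd]
        exact hb2
      · intro q hq
        rfl
      · intro z hz
        obtain ⟨hzK', hzp⟩ := Finset.mem_filter.1 hz
        obtain ⟨hzprod, _⟩ := Finset.mem_filter.1 hzK'
        obtain ⟨hz1, hz2⟩ := Finset.mem_product.1 hzprod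
        have ha1 := (hSa.mem_toFinset.1 hz1).1
        have hz1pos := hM.pos z.1 (hsa z.1 ha1)
        have hsnd : z.2 = fun x => p x / z.1 x := by
          funext x
          have := congrFun hzp x
          field_simp [(hz1pos x).ne']
          linarith [this]
        exact Prod.ext rfl hsnd.symm
      · intro q hq
        have hq' := mul_ne_zero_iff.1 (Function.mem_support.1 (hsf.mem_toFinset.1 hq))
        have hqpos := hM.pos q (hsa q hq'.1)
        rfl
    -- per-point sum over K equals truncation sum
    have hKsum : ∀ x : ℝ, ∑ z ∈ (hSa.toFinset ×ˢ hSb.toFinset).filter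
          (fun z => Aux.ple n (fun x => z.1 x * z.2 x)),
          (a z.1 * b z.2) * (z.1 x * z.2 x)
        = ∑ p ∈ hfinT.toFinset, c p * p x := by
      intro x
      rw [← Finset.sum_fiberwise_of_maps_to
        (g := fun z : (ℝ → ℝ) × (ℝ → ℝ) => fun x => z.1 x * z.2 x)
        (t := ((hSa.toFinset ×ˢ hSb.toFinset).filter
          (fun z => Aux.ple n (fun x => z.1 x * z.2 x))).image
          (fun z => fun x => z.1 x * z.2 x))
        (fun z hz => Finset.mem_image_of_mem _ hz)
        (fun z => (a z.1 * b z.2) * (z.1 x * z.2 x))]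
      have h1 : ∀ p ∈ ((hSa.toFinset ×ˢ hSb.toFinset).filter
            (fun z => Aux.ple n (fun x => z.1 x * z.2 x))).image
            (fun z => fun x => z.1 x * z.2 x),
          ∑ z ∈ ((hSa.toFinset ×ˢ hSb.toFinset).filter
            (fun z => Aux.ple n (fun x => z.1 x * z.2 x))).filter
            (fun z => (fun x => z.1 x * z.2 x) = p),
            (a z.1 * b z.2) * (z.1 x * z.2 x) = c p * p x := by
        intro p hp
        rw [← hfibsum p hp, Finset.sum_mul]
        refine Finset.sum_congr rfl ?_
        intro z hz
        exact congrArg (fun t => (a z.1 * b z.2) * t) (congrFun (Finset.mem_filter.1 hz).2 x)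
      rw [Finset.sum_congr rfl h1]
      refine (Finset.sum_subset hTsubI ?_).symm
      intro p hp hp'
      have hple := hIple p hp
      have : ¬(c p ≠ 0 ∧ (p = n ∨ Prec n p)) := fun h => hp' (hfinT.mem_toFinset.2 h)
      rcases not_and_or.1 this with h | h
      · rw [not_ne_iff.1 h, zero_mul]
      · exact absurd hple h
    -- the three error terms and the below-n part
    have he1 : Prec (fun x => (f x - ∑ m ∈ hSa.toFinset, a m * m x) *
        (g x - ∑ m ∈ hSb.toFinset, b m * m x)) n :=
      Aux.prec_trans_ple (Aux.prec_mul_prec hef heg) huv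
    have he2 : Prec (fun x => (f x - ∑ m ∈ hSa.toFinset, a m * m x) *
        ∑ m ∈ hSb.toFinset, b m * m x) n := by
      refine Aux.prec_congr
        (f := fun x => ∑ r ∈ hSb.toFinset,
          b r * ((f x - ∑ m ∈ hSa.toFinset, a m * m x) * r x)) ?_ ?_
      · intro x
        rw [Finset.mul_sum]
        exact Finset.sum_congr rfl fun r _ => by ring
      · refine Aux.prec_sum hnpos hSb.toFinset _ ?_
        intro r hr
        obtain ⟨hbr, _⟩ := hSb.mem_toFinset.1 hr
        have hrpos := hM.pos r (hsb r hbr)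
        exact Aux.prec_const_mul _
          (Aux.prec_trans_ple (Aux.prec_mul_right hrpos hef) (hur r hbr))
    have he3 : Prec (fun x => (∑ m ∈ hSa.toFinset, a m * m x) *
        (g x - ∑ m ∈ hSb.toFinset, b m * m x)) n := by
      refine Aux.prec_congr
        (f := fun x => ∑ q ∈ hSa.toFinset,
          a q * (q x * (g x - ∑ m ∈ hSb.toFinset, b m * m x))) ?_ ?_
      · intro x
        rw [Finset.sum_mul]
        exact Finset.sum_congr rfl fun q _ => by ring
      · refine Aux.prec_sum hnpos hSa.toFinset _ ?_
        intro q hq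
        obtain ⟨haq, _⟩ := hSa.mem_toFinset.1 hq
        have hqpos := hM.pos q (hsa q haq)
        exact Aux.prec_const_mul _
          (Aux.prec_trans_ple (Aux.prec_mul_left hqpos heg) (hqv q haq))
    have hKC : Prec (fun x => ∑ z ∈ (hSa.toFinset ×ˢ hSb.toFinset).filter
          (fun z => ¬ Aux.ple n (fun x => z.1 x * z.2 x)),
          (a z.1 * b z.2) * (z.1 x * z.2 x)) n := by
      refine Aux.prec_sum hnpos _ _ ?_
      intro z hz
      obtain ⟨hzprod, hznple⟩ := Finset.mem_filter.1 hz
      obtain ⟨hz1, hz2⟩ := Finset.mem_product.1 hzprod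
      have ha1 := (hSa.mem_toFinset.1 hz1).1
      have hb2 := (hSb.mem_toFinset.1 hz2).1
      have hmulM : (fun x => z.1 x * z.2 x) ∈ M :=
        hM.mul_mem z.1 (hsa z.1 ha1) z.2 (hsb z.2 hb2)
      rcases hM.total _ hmulM n hn with h | h | h
      · exact absurd (Or.inl h) hznple
      · exact Aux.prec_const_mul _ h
      · exact absurd (Or.inr h) hznple
    -- assemble
    refine Aux.prec_congr (f := fun x =>
      (f x - ∑ m ∈ hSa.toFinset, a m * m x) * (g x - ∑ m ∈ hSb.toFinset, b m * m x) +
      ((f x - ∑ m ∈ hSa.toFinset, a m * m x) * ∑ m ∈ hSb.toFinset, b m * m x +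
       ((∑ m ∈ hSa.toFinset, a m * m x) * (g x - ∑ m ∈ hSb.toFinset, b m * m x) +
        ∑ z ∈ (hSa.toFinset ×ˢ hSb.toFinset).filter
          (fun z => ¬ Aux.ple n (fun x => z.1 x * z.2 x)),
          (a z.1 * b z.2) * (z.1 x * z.2 x)))) ?_
      (Aux.prec_add he1 (Aux.prec_add he2 (Aux.prec_add he3 hKC)))
    intro x
    have e0 : (∑ m ∈ hSa.toFinset, a m * m x) * (∑ m ∈ hSb.toFinset, b m * m x)
        = ∑ z ∈ hSa.toFinset ×ˢ hSb.toFinset, (a z.1 * b z.2) * (z.1 x * z.2 x) := by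
      rw [Finset.sum_mul_sum,
        ← Finset.sum_product' (s := hSa.toFinset) (t := hSb.toFinset)
          (f := fun q r => (a q * q x) * (b r * r x))]
      exact Finset.sum_congr rfl fun z _ => by ring
    have key : (∑ m ∈ hSa.toFinset, a m * m x) * (∑ m ∈ hSb.toFinset, b m * m x)
        = (∑ p ∈ hfinT.toFinset, c p * p x) +
          ∑ z ∈ (hSa.toFinset ×ˢ hSb.toFinset).filter
            (fun z => ¬ Aux.ple n (fun x => z.1 x * z.2 x)),
            (a z.1 * b z.2) * (z.1 x * z.2 x) := by
      rw [e0, ← Finset.sum_filter_add_sum_filter_not (hSa.toFinset ×ˢ hSb.toFinset)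
        (fun z => Aux.ple n (fun x => z.1 x * z.2 x))
        (fun z => (a z.1 * b z.2) * (z.1 x * z.2 x)), hKsum x]
    show _ = f x * g x - ∑ p ∈ hfinT.toFinset, c p * p x
    linear_combination -key
end
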